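/- arXiv:1805.06098 — 10 statements merged into one kernel-verified Lean document; each statement's English description precedes it below -/
import Mathlib

section
/- Let H be a real Hilbert space, let φ : H → (−∞,∞] be proper, lower semicontinuous, and convex, let γ > 0, σ ∈ ℝ, and x ∈ H. If σ + γ φ*(x/γ) ≤ 0, then prox_{γφ̃}(σ,x) = (0,0). -/
open scoped RealInnerProductSpace

noncomputable section

/-- The Fenchel conjugate of an extended-real-valued function on a real inner
product space: `φ*(u) = sup_x (⟪x, u⟫ - φ x)`. -/
def eConj {H : Type*} [NormedAddCommGroup H] [InnerProductSpace ℝ H]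
    (φ : H → EReal) (u : H) : EReal :=
  ⨆ x : H, (((⟪x, u⟫ : ℝ) : EReal) - φ x)

/-- The recession function of `φ`: `(rec φ)(x) = sup_{y ∈ dom φ} (φ(x+y) - φ(y))`. -/
def eRec {H : Type*} [NormedAddCommGroup H] (φ : H → EReal) (x : H) : EReal :=
  ⨆ y : {y : H // φ y ≠ ⊤}, (φ (x + (y : H)) - φ (y : H))

/-- The perspective of `φ`: `σ φ(x/σ)` for `σ > 0`, `(rec φ)(x)` for `σ = 0`,
and `+∞` for `σ < 0`. -/
def persp {H : Type*} [NormedAddCommGroup H] [NormedSpace ℝ H]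
    (φ : H → EReal) (p : ℝ × H) : EReal :=
  if 0 < p.1 then (p.1 : EReal) * φ (p.1⁻¹ • p.2)
  else if p.1 = 0 then eRec φ p.2
  else ⊤

/-- `φ` is proper (nowhere `⊥` and not identically `⊤`), lower semicontinuous
and convex (convexity expressed via convexity of the epigraph). -/
def ProperLscConvex {H : Type*} [NormedAddCommGroup H] [NormedSpace ℝ H]
    (φ : H → EReal) : Prop :=
  (∃ x, φ x ≠ ⊤) ∧ (∀ x, φ x ≠ ⊥) ∧ LowerSemicontinuous φ ∧
    Convex ℝ {p : H × ℝ | φ p.1 ≤ (p.2 : EReal)}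

/-- `p` is the proximal point of `ψ : ℝ × H → (−∞,∞]` at `z`, i.e. `p` minimizes
`y ↦ ψ(y) + ½‖z − y‖²` (the squared norm on `ℝ × H` being the Hilbert one). -/
def IsProx {H : Type*} [NormedAddCommGroup H]
    (ψ : ℝ × H → EReal) (z p : ℝ × H) : Prop :=
  ∀ y : ℝ × H,
    ψ p + ((((z.1 - p.1) ^ 2 + ‖z.2 - p.2‖ ^ 2) / 2 : ℝ) : EReal) ≤
      ψ y + ((((z.1 - y.1) ^ 2 + ‖z.2 - y.2‖ ^ 2) / 2 : ℝ) : EReal)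

set_option maxHeartbeats 1000000 in
/-- If `σ + γ φ*(x/γ) ≤ 0` then `prox_{γφ̃}(σ, x) = (0, 0)`. -/
theorem prox_perspective_eq_zero
    {H : Type*} [NormedAddCommGroup H] [InnerProductSpace ℝ H] [CompleteSpace H]
    (φ : H → EReal) (hφ : ProperLscConvex φ)
    (γ : ℝ) (hγ : 0 < γ) (σ : ℝ) (x : H)
    (h : (σ : EReal) + (γ : EReal) * eConj φ (γ⁻¹ • x) ≤ 0) :
    ∀ p : ℝ × H, IsProx (fun q => (γ : EReal) * persp φ q) (σ, x) p ↔ p = (0, 0) := by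
  obtain ⟨⟨z₀, hz₀⟩, hbot, _, hconv⟩ := hφ
  have hreal : ∀ z : H, φ z ≠ ⊤ → ∃ a : ℝ, φ z = (a : EReal) := by
    intro z hz
    lift φ z to ℝ using ⟨hz, hbot z⟩ with a
    exact ⟨a, rfl⟩
  obtain ⟨a₀, ha₀⟩ := hreal z₀ hz₀
  set w : H := γ⁻¹ • x with hw
  have hinner : ∀ z : H, (⟪z, w⟫ : ℝ) = γ⁻¹ * ⟪z, x⟫ := by
    intro z; simp [hw, real_inner_smul_right]
  have hub : ∀ z : H, ((⟪z, w⟫ : ℝ) : EReal) - φ z ≤ eConj φ w := by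
    intro z; exact le_iSup (fun z : H => ((⟪z, w⟫ : ℝ) : EReal) - φ z) z
  -- the conjugate value is real
  have hc_ne_top : eConj φ w ≠ ⊤ := by
    intro htop
    rw [htop, EReal.coe_mul_top_of_pos hγ] at h
    simp at h
  have hc_ne_bot : eConj φ w ≠ ⊥ := by
    intro hbb
    have h1 := hub z₀
    rw [ha₀, hbb, le_bot_iff, ← EReal.coe_sub] at h1
    exact EReal.coe_ne_bot _ h1
  obtain ⟨c, hc⟩ : ∃ c : ℝ, eConj φ w = c := by
    lift eConj φ w to ℝ using ⟨hc_ne_top, hc_ne_bot⟩ with c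
    exact ⟨c, rfl⟩
  have hσc : σ + γ * c ≤ 0 := by
    rw [hc] at h
    exact_mod_cast h
  -- key conjugate inequality, in real form
  have key : ∀ (z : H) (a : ℝ), φ z = (a : EReal) → ⟪z, x⟫ ≤ γ * a + γ * c := by
    intro z a ha
    have h1 := hub z
    rw [ha, hc, ← EReal.coe_sub] at h1
    have h2 : ⟪z, w⟫ - a ≤ c := by exact_mod_cast h1
    have h3 : ⟪z, x⟫ = γ * ⟪z, w⟫ := by
      rw [hinner z]; field_simp
    rw [h3]
    nlinarith [mul_le_mul_of_nonneg_left h2 hγ.le]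
  -- eRec lower bound
  have hrec_ge : ∀ u : H, ((⟪u, x⟫ / γ : ℝ) : EReal) ≤ eRec φ u := by
    intro u
    by_contra hlt
    push_neg at hlt
    have hrnb : eRec φ u ≠ ⊥ := by
      intro hbb
      have h1 : φ (u + z₀) - φ z₀ ≤ eRec φ u :=
        le_iSup (fun y : {y : H // φ y ≠ ⊤} => φ (u + (y:H)) - φ (y:H)) ⟨z₀, hz₀⟩
      rw [hbb, le_bot_iff, ha₀] at h1
      rcases eq_or_ne (φ (u + z₀)) ⊤ with ht | ht
      · rw [ht, EReal.top_sub_coe] at h1; simp at h1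
      · obtain ⟨b, hb⟩ := hreal _ ht
        rw [hb, ← EReal.coe_sub] at h1
        exact EReal.coe_ne_bot _ h1
    obtain ⟨r, hr⟩ : ∃ r : ℝ, eRec φ u = r := by
      lift eRec φ u to ℝ using ⟨hlt.ne_top, hrnb⟩ with r
      exact ⟨r, rfl⟩
    rw [hr, EReal.coe_lt_coe_iff] at hlt
    set δ : ℝ := ⟪u, x⟫ / γ - r with hδ
    have hδpos : 0 < δ := by simp [hδ]; linarith
    have hlt2 : ((c - δ : ℝ) : EReal) < eConj φ w := by
      rw [hc, EReal.coe_lt_coe_iff]; linarith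
    rw [eConj, lt_iSup_iff] at hlt2
    obtain ⟨z, hz⟩ := hlt2
    have hzt : φ z ≠ ⊤ := by
      intro ht
      rw [ht, EReal.sub_top] at hz
      exact absurd hz (by simp)
    obtain ⟨a, ha⟩ := hreal z hzt
    rw [ha, ← EReal.coe_sub, EReal.coe_lt_coe_iff] at hz
    -- now bound φ (u + z)
    have hterm : φ (u + z) - φ z ≤ eRec φ u :=
      le_iSup (fun y : {y : H // φ y ≠ ⊤} => φ (u + (y:H)) - φ (y:H)) ⟨z, hzt⟩
    have hut : φ (u + z) ≠ ⊤ := by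
      intro ht
      rw [ht, ha, hr, EReal.top_sub_coe] at hterm
      exact (EReal.coe_ne_top r) (top_le_iff.mp hterm)
    obtain ⟨b, hb⟩ := hreal _ hut
    rw [ha, hb, hr, ← EReal.coe_sub, EReal.coe_le_coe_iff] at hterm
    -- conjugate bound at u + z
    have hk := key (u + z) b hb
    have hiu : ⟪u + z, x⟫ = ⟪u, x⟫ + ⟪z, x⟫ := inner_add_left u z x
    have hzx : ⟪z, w⟫ = γ⁻¹ * ⟪z, x⟫ := hinner z
    -- from hz : c - δ < ⟪z, w⟫ - a
    -- hk : ⟪u,x⟫ + ⟪z,x⟫ ≤ γ b + γ c,  ⟪z,x⟫ = γ ⟪z,w⟫ > γ(c - δ + a)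
    have hzx2 : ⟪z, x⟫ = γ * ⟪z, w⟫ := by rw [hzx]; field_simp
    have hux : ⟪u, x⟫ = γ * (⟪u,x⟫/γ) := by field_simp
    have hδγ : γ * δ = ⟪u, x⟫ - γ * r := by
      rw [hδ]; field_simp
    nlinarith [mul_lt_mul_of_pos_left hz hγ, mul_le_mul_of_nonneg_left hterm hγ.le,
      hk, hiu, hzx2, hδγ]
  -- midpoint convexity
  have hmid : ∀ (y z : H) (a b : ℝ), φ y ≤ (a : EReal) → φ z ≤ (b : EReal) →
      φ ((1/2 : ℝ) • y + (1/2 : ℝ) • z) ≤ (((a + b)/2 : ℝ) : EReal) := by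
    intro y z a b hya hzb
    have hmem := hconv (show (y, a) ∈ {p : H × ℝ | φ p.1 ≤ (p.2 : EReal)} from hya)
      (show (z, b) ∈ {p : H × ℝ | φ p.1 ≤ (p.2 : EReal)} from hzb)
      (by norm_num : (0:ℝ) ≤ 1/2) (by norm_num : (0:ℝ) ≤ 1/2) (by norm_num)
    simp only [Prod.smul_mk, Prod.mk_add_mk, Set.mem_setOf_eq, smul_eq_mul] at hmem
    convert hmem using 2 <;> ring
  -- eRec φ 0 = 0
  have hrec0 : eRec φ (0 : H) = 0 := by
    apply le_antisymm
    · rw [eRec]; apply iSup_le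
      rintro ⟨y, hy⟩
      obtain ⟨b, hb⟩ := hreal y hy
      simp only [zero_add, hb, ← EReal.coe_sub, sub_self, EReal.coe_zero, le_refl]
    · have h1 : φ ((0:H) + z₀) - φ z₀ ≤ eRec φ (0:H) :=
        le_iSup (fun y : {y : H // φ y ≠ ⊤} => φ ((0:H) + (y:H)) - φ (y:H)) ⟨z₀, hz₀⟩
      rwa [zero_add, ha₀, ← EReal.coe_sub, sub_self, EReal.coe_zero] at h1
  have hpersp0 : persp φ ((0:ℝ), (0:H)) = 0 := by
    simp [persp, hrec0]
  -- (0,0) is a prox point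
  have hprox0 : IsProx (fun q => (γ : EReal) * persp φ q) (σ, x) ((0:ℝ), (0:H)) := by
    rintro ⟨τ, u⟩
    simp only [hpersp0, mul_zero, zero_add, sub_zero]
    rcases lt_trichotomy τ 0 with hτ | hτ | hτ
    · have : persp φ (τ, u) = ⊤ := by simp [persp, hτ.not_gt, hτ.ne]
      rw [this, EReal.coe_mul_top_of_pos hγ, EReal.top_add_coe]
      exact le_top
    · subst hτ
      have hpe : persp φ ((0:ℝ), u) = eRec φ u := by simp [persp]
      rw [hpe]
      rcases eq_or_ne (eRec φ u) ⊤ with ht | ht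
      · rw [ht, EReal.coe_mul_top_of_pos hγ, EReal.top_add_coe]; exact le_top
      · have hrnb : eRec φ u ≠ ⊥ := fun hbb => by
          have := hrec_ge u; rw [hbb, le_bot_iff] at this; exact EReal.coe_ne_bot _ this
        obtain ⟨r, hr⟩ : ∃ r : ℝ, eRec φ u = r := by
          lift eRec φ u to ℝ using ⟨ht, hrnb⟩ with r; exact ⟨r, rfl⟩
        have hge : ⟪u, x⟫ / γ ≤ r := by
          have := hrec_ge u; rw [hr, EReal.coe_le_coe_iff] at this; exact this
        rw [hr, ← EReal.coe_mul, ← EReal.coe_add, EReal.coe_le_coe_iff]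
        have hux : ⟪u, x⟫ = γ * (⟪u,x⟫/γ) := by field_simp
        have hn : ‖x - u‖^2 = ‖x‖^2 - 2*⟪x,u⟫ + ‖u‖^2 := norm_sub_sq_real x u
        have hcomm : ⟪x, u⟫ = ⟪u, x⟫ := real_inner_comm u x
        nlinarith [mul_le_mul_of_nonneg_left hge hγ.le, sq_nonneg ‖u‖]
    · have hpe : persp φ (τ, u) = (τ : EReal) * φ (τ⁻¹ • u) := by simp [persp, hτ]
      rw [hpe]
      rcases eq_or_ne (φ (τ⁻¹ • u)) ⊤ with ht | ht
      · rw [ht, EReal.coe_mul_top_of_pos hτ, EReal.coe_mul_top_of_pos hγ, EReal.top_add_coe]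
        exact le_top
      · obtain ⟨a, ha⟩ := hreal _ ht
        rw [ha, ← EReal.coe_mul, ← EReal.coe_mul, ← EReal.coe_add, EReal.coe_le_coe_iff]
        have hk := key (τ⁻¹ • u) a ha
        have hki : ⟪τ⁻¹ • u, x⟫ = τ⁻¹ * ⟪u, x⟫ := real_inner_smul_left u x τ⁻¹
        rw [hki] at hk
        have hux : ⟪u, x⟫ = τ * (τ⁻¹ * ⟪u, x⟫) := by field_simp
        have hn : ‖x - u‖^2 = ‖x‖^2 - 2*⟪x,u⟫ + ‖u‖^2 := norm_sub_sq_real x u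
        have hcomm : ⟪x, u⟫ = ⟪u, x⟫ := real_inner_comm u x
        nlinarith [mul_le_mul_of_nonneg_left hk hτ.le, mul_le_mul_of_nonneg_left hσc hτ.le,
          sq_nonneg τ, sq_nonneg ‖u‖]
  -- main equivalence
  intro p
  constructor
  · intro hp
    obtain ⟨ρ, v⟩ := p
    have h1 := hp ((0:ℝ), (0:H))
    have h2 := hprox0 (ρ, v)
    simp only [hpersp0, mul_zero, zero_add, sub_zero] at h1 h2
    -- persp φ (ρ, v) is a real number
    have hψt : persp φ (ρ, v) ≠ ⊤ := by
      intro ht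
      rw [ht, EReal.coe_mul_top_of_pos hγ, EReal.top_add_coe] at h1
      exact absurd h1 (by simp)
    have hψb : persp φ (ρ, v) ≠ ⊥ := by
      intro hb
      rw [hb, EReal.coe_mul_bot_of_pos hγ, EReal.bot_add] at h2
      exact absurd h2 (by simp)
    obtain ⟨s, hs⟩ : ∃ s : ℝ, persp φ (ρ, v) = s := by
      lift persp φ (ρ, v) to ℝ using ⟨hψt, hψb⟩ with s
      exact ⟨s, rfl⟩
    rw [hs, ← EReal.coe_mul] at h1 h2
    rw [← EReal.coe_add, EReal.coe_le_coe_iff] at h1 h2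
    -- the midpoint
    set m : ℝ × H := (ρ/2, (1/2 : ℝ) • v) with hm
    have hm_le : persp φ m ≤ ((s/2 : ℝ) : EReal) := by
      rcases lt_trichotomy ρ 0 with hρ | hρ | hρ
      · exfalso
        have : persp φ (ρ, v) = ⊤ := by simp [persp, hρ.not_gt, hρ.ne]
        rw [hs] at this
        exact EReal.coe_ne_top s this
      · subst hρ
        have hpp : persp φ ((0:ℝ), v) = eRec φ v := by simp [persp]
        have hpm : persp φ m = eRec φ ((1/2 : ℝ) • v) := by
          simp [persp, hm]
        rw [hpp] at hs
        rw [hpm, eRec]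
        apply iSup_le
        rintro ⟨y, hy⟩
        obtain ⟨b, hb⟩ := hreal y hy
        have hyt : φ (v + y) ≠ ⊤ := by
          intro ht
          have h4 : φ (v + y) - φ y ≤ eRec φ v :=
            le_iSup (fun y : {y : H // φ y ≠ ⊤} => φ (v + (y:H)) - φ (y:H)) ⟨y, hy⟩
          rw [ht, hb, EReal.top_sub_coe, hs] at h4
          exact (EReal.coe_ne_top s) (top_le_iff.mp h4)
        obtain ⟨d, hd⟩ := hreal _ hyt
        have h4 : φ (v + y) - φ y ≤ eRec φ v :=
          le_iSup (fun y : {y : H // φ y ≠ ⊤} => φ (v + (y:H)) - φ (y:H)) ⟨y, hy⟩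
        rw [hd, hb, hs, ← EReal.coe_sub, EReal.coe_le_coe_iff] at h4
        have h5 := hmid (v + y) y d b (le_of_eq hd) (le_of_eq hb)
        have heq : (1/2 : ℝ) • (v + y) + (1/2 : ℝ) • y = (1/2 : ℝ) • v + y := by
          module
        rw [heq] at h5
        have h6 : φ ((1/2 : ℝ) • v + y) - φ y ≤ (((d + b)/2 : ℝ) : EReal) - ((b : ℝ) : EReal) := by
          rw [hb]; exact EReal.sub_le_sub h5 le_rfl
        rw [← EReal.coe_sub] at h6
        refine le_trans h6 ?_
        rw [EReal.coe_le_coe_iff]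
        linarith
      · have hpp : persp φ (ρ, v) = (ρ : EReal) * φ (ρ⁻¹ • v) := by simp [persp, hρ]
        have hρ2 : (0:ℝ) < ρ/2 := by linarith
        have hpm : persp φ m = ((ρ/2 : ℝ) : EReal) * φ ((ρ/2)⁻¹ • ((1/2 : ℝ) • v)) := by
          simp only [hm, persp, if_pos hρ2]
        have hsm : ((ρ/2)⁻¹ : ℝ) • ((1/2 : ℝ) • v) = ρ⁻¹ • v := by
          rw [smul_smul]
          congr 1
          field_simp
        have hft : φ (ρ⁻¹ • v) ≠ ⊤ := by
          intro ht
          rw [hpp, ht, EReal.coe_mul_top_of_pos hρ] at hs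
          exact absurd hs (by simp)
        obtain ⟨a, ha⟩ := hreal _ hft
        rw [hpp, ha, ← EReal.coe_mul] at hs
        have hsa : ρ * a = s := by exact_mod_cast hs
        rw [hpm, hsm, ha, ← EReal.coe_mul, EReal.coe_le_coe_iff]
        linarith
    -- evaluate IsProx at the midpoint
    have h3 := hp m
    simp only [hs] at h3
    have h4 : (γ : EReal) * persp φ m ≤ ((γ * (s/2) : ℝ) : EReal) := by
      rw [EReal.coe_mul]
      exact mul_le_mul_of_nonneg_left hm_le (by exact_mod_cast hγ.le)
    have h5 := le_trans h3 (add_le_add_left h4 _)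
    rw [← EReal.coe_mul, ← EReal.coe_add, ← EReal.coe_add, EReal.coe_le_coe_iff] at h5
    -- now everything is real; conclude
    have e1 : ‖x - (1/2 : ℝ) • v‖^2 = ‖x‖^2 - ⟪x, v⟫ + (1/4)*‖v‖^2 := by
      rw [norm_sub_sq_real, real_inner_smul_right, norm_smul]
      norm_num
      ring
    have e2 : ‖x - v‖^2 = ‖x‖^2 - 2*⟪x, v⟫ + ‖v‖^2 := norm_sub_sq_real x v
    rw [e2] at h1 h2
    rw [e1, e2] at h5
    have hsum : ρ^2 + ‖v‖^2 ≤ 0 := by linarith [show (σ - m.1)^2 = (σ - ρ/2)^2 from rfl]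
    have hρ0 : ρ = 0 := by
      have : ρ^2 = 0 := le_antisymm (by nlinarith [sq_nonneg ‖v‖]) (sq_nonneg ρ)
      exact pow_eq_zero_iff (by norm_num) |>.mp this
    have hv0 : v = 0 := by
      have : ‖v‖^2 = 0 := le_antisymm (by nlinarith [sq_nonneg ρ]) (sq_nonneg _)
      have := pow_eq_zero_iff (n := 2) (by norm_num) |>.mp this
      exact norm_eq_zero.mp this
    simp [hρ0, hv0]
  · rintro rfl
    exact hprox0
end
end

section
/- Let H be a real Hilbert space, let ϕ : ℝ → (−∞,∞] be an even, proper, lower semicontinuous, convex function, set φ = ϕ∘‖·‖ : H → (−∞,∞], let γ > 0, σ ∈ ℝ, and x ∈ H, and set R = {(χ,ν) ∈ ℝ² : χ + ϕ*(ν) ≤ 0}. Then R is a nonempty closed convex subset of ℝ², and if σ + γ ϕ*(‖x‖/γ) ≤ 0 then prox_{γφ̃}(σ,x) = (0,0). -/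
open scoped RealInnerProductSpace

noncomputable section

namespace RadialAux

/-- `(a : EReal) + b ≤ 0 ↔ b ≤ -a`. -/
lemma add_le_zero_iff (a : ℝ) (b : EReal) :
    (a : EReal) + b ≤ 0 ↔ b ≤ ((-a : ℝ) : EReal) := by
  constructor
  · intro h
    have h2 : ((-a : ℝ) : EReal) + ((a : EReal) + b) ≤ ((-a : ℝ) : EReal) + 0 :=
      add_le_add_right h _
    rw [← add_assoc, ← EReal.coe_add] at h2
    simpa using h2
  · intro h
    have h2 : (a : EReal) + b ≤ (a : EReal) + ((-a : ℝ) : EReal) := add_le_add_right h _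
    rw [← EReal.coe_add] at h2
    simpa using h2

variable (ϕ : ℝ → EReal)

lemma inner_real (a b : ℝ) : (⟪a, b⟫ : ℝ) = a * b := by
  simp [RCLike.inner_apply]
  ring

/-- Fenchel inequality. -/
lemma fenchel (u ξ : ℝ) : ((ξ * u : ℝ) : EReal) - ϕ ξ ≤ eConj ϕ u := by
  have := le_iSup (fun ξ : ℝ => ((⟪ξ, u⟫ : ℝ) : EReal) - ϕ ξ) ξ
  simpa [inner_real, mul_comm, eConj] using this

section phi0

variable (heven : ∀ ξ : ℝ, ϕ (-ξ) = ϕ ξ) (hϕ : ProperLscConvex ϕ)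
include heven hϕ

lemma phi0_le (ξ : ℝ) : ϕ 0 ≤ ϕ ξ := by
  rcases eq_or_ne (ϕ ξ) ⊤ with h | h
  · exact h ▸ le_top
  · set r := (ϕ ξ).toReal with hrdef
    have hre : ((r : ℝ) : EReal) = ϕ ξ := EReal.coe_toReal h (hϕ.2.1 ξ)
    have h1 : ((ξ, r) : ℝ × ℝ) ∈ {p : ℝ × ℝ | ϕ p.1 ≤ (p.2 : EReal)} := le_of_eq hre.symm
    have h2 : ((-ξ, r) : ℝ × ℝ) ∈ {p : ℝ × ℝ | ϕ p.1 ≤ (p.2 : EReal)} := by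
      simp only [Set.mem_setOf_eq, heven ξ]
      exact le_of_eq hre.symm
    have hc := hϕ.2.2.2 h1 h2 (by norm_num : (0:ℝ) ≤ 1/2) (by norm_num : (0:ℝ) ≤ 1/2)
      (by norm_num)
    have heq : ((1:ℝ)/2) • ((ξ, r) : ℝ × ℝ) + ((1:ℝ)/2) • ((-ξ, r) : ℝ × ℝ) = (0, r) := by
      refine Prod.ext ?_ ?_ <;> simp [smul_eq_mul] <;> ring
    rw [heq] at hc
    exact le_trans hc (le_of_eq hre)

lemma phi0_real : ∃ r : ℝ, ϕ 0 = (r : EReal) := by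
  obtain ⟨ξ₀, h0⟩ := hϕ.1
  have hle := phi0_le ϕ heven hϕ ξ₀
  have htop : ϕ 0 ≠ ⊤ := fun h => h0 (top_le_iff.mp (h ▸ hle))
  exact ⟨(ϕ 0).toReal, (EReal.coe_toReal htop (hϕ.2.1 0)).symm⟩

lemma eConj_ne_bot (u : ℝ) : eConj ϕ u ≠ ⊥ := by
  obtain ⟨r, hr⟩ := phi0_real ϕ heven hϕ
  have := fenchel ϕ u 0
  rw [hr] at this
  intro hb
  rw [hb, le_bot_iff] at this
  rw [← EReal.coe_sub] at this
  exact EReal.coe_ne_bot _ this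

end phi0

end RadialAux

open RadialAux

/-- For an even `ϕ ∈ Γ₀(ℝ)` and `φ = ϕ ∘ ‖·‖`, the set
`R = {(χ,ν) : χ + ϕ*(ν) ≤ 0}` is nonempty closed convex, and if
`σ + γϕ*(‖x‖/γ) ≤ 0` then `prox_{γφ̃}(σ,x) = (0,0)`. -/
theorem radial_perspective_prox_regionR
    {H : Type*} [NormedAddCommGroup H] [InnerProductSpace ℝ H] [CompleteSpace H]
    (ϕ : ℝ → EReal) (heven : ∀ ξ : ℝ, ϕ (-ξ) = ϕ ξ) (hϕ : ProperLscConvex ϕ)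
    (γ : ℝ) (hγ : 0 < γ) (σ : ℝ) (x : H) :
    ({w : ℝ × ℝ | (w.1 : EReal) + eConj ϕ w.2 ≤ 0}.Nonempty ∧
        IsClosed {w : ℝ × ℝ | (w.1 : EReal) + eConj ϕ w.2 ≤ 0} ∧
        Convex ℝ {w : ℝ × ℝ | (w.1 : EReal) + eConj ϕ w.2 ≤ 0}) ∧
      ((σ : EReal) + (γ : EReal) * eConj ϕ (‖x‖ / γ) ≤ 0 →
        ∀ p : ℝ × H,
          IsProx (fun q => (γ : EReal) * persp (fun v : H => ϕ ‖v‖) q) (σ, x) p ↔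
            p = (0, 0)) := by
  classical
  obtain ⟨r, hr⟩ := phi0_real ϕ heven hϕ
  have hbot := hϕ.2.1
  constructor
  · refine ⟨?_, ?_, ?_⟩
    -- Nonempty
    · refine ⟨(r, 0), ?_⟩
      have hle : eConj ϕ 0 ≤ ((-r : ℝ) : EReal) := by
        refine iSup_le fun ξ => ?_
        have h1 : (⟪ξ, (0:ℝ)⟫ : ℝ) = 0 := by simp [inner_real]
        rw [h1]
        have h2 : ϕ 0 ≤ ϕ ξ := phi0_le ϕ heven hϕ ξ
        rw [hr] at h2
        calc ((0:ℝ) : EReal) - ϕ ξ ≤ ((0:ℝ) : EReal) - (r : EReal) := by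
              simp only [EReal.coe_zero, zero_sub]
              exact EReal.neg_le_neg_iff.mpr h2
          _ = ((-r : ℝ) : EReal) := by norm_cast; ring
      exact (add_le_zero_iff r (eConj ϕ 0)).mpr hle
    -- Closed
    · rw [← isOpen_compl_iff, isOpen_iff_mem_nhds]
      intro w hw
      simp only [Set.mem_compl_iff, Set.mem_setOf_eq, not_le] at hw
      have hlt : ((-w.1 : ℝ) : EReal) < eConj ϕ w.2 := by
        by_contra h
        push_neg at h
        exact absurd ((add_le_zero_iff w.1 (eConj ϕ w.2)).mpr h) (not_le.mpr hw)
      obtain ⟨c, hc1, hc2⟩ := exists_between hlt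
      have hcbot : c ≠ ⊥ := fun h => by simp [h] at hc1
      have hctop : c ≠ ⊤ := fun h => by rw [h] at hc2; exact absurd hc2 (by simp)
      set cr := c.toReal with hcr
      have hcc : (cr : EReal) = c := EReal.coe_toReal hctop hcbot
      -- lower semicontinuity of eConj
      have hlsc : LowerSemicontinuous (eConj ϕ) := by
        apply lowerSemicontinuous_iSup
        intro ξ
        rcases eq_or_ne (ϕ ξ) ⊤ with h | h
        · have : (fun u : ℝ => ((⟪ξ, u⟫ : ℝ) : EReal) - ϕ ξ) = fun _ => (⊥ : EReal) := by
            funext u; rw [h, EReal.sub_top]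
          rw [this]
          exact lowerSemicontinuous_const
        · obtain ⟨t, ht⟩ : ∃ t : ℝ, ϕ ξ = (t : EReal) :=
            ⟨(ϕ ξ).toReal, (EReal.coe_toReal h (hbot ξ)).symm⟩
          have : (fun u : ℝ => ((⟪ξ, u⟫ : ℝ) : EReal) - ϕ ξ)
              = fun u : ℝ => ((ξ * u - t : ℝ) : EReal) := by
            funext u; rw [ht, inner_real, ← EReal.coe_sub]
          rw [this]
          exact (continuous_coe_real_ereal.comp (by continuity)).lowerSemicontinuous
      have hev2 := hlsc w.2 (cr : EReal) (hcc ▸ hc2)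
      have hev1 : ∀ᶠ a in nhds w.1, ((-a : ℝ) : EReal) < (cr : EReal) := by
        have ha : -w.1 < cr := by
          rw [← EReal.coe_lt_coe_iff, hcc]; exact hc1
        have : ∀ᶠ a in nhds w.1, -a < cr :=
          (continuous_neg.continuousAt (x := w.1)).eventually_lt continuousAt_const ha
        exact this.mono fun a h => EReal.coe_lt_coe_iff.mpr h
      have hprod : nhds w = (nhds w.1) ×ˢ (nhds w.2) := nhds_prod_eq
      rw [hprod]
      apply Filter.mem_of_superset (Filter.prod_mem_prod hev1 hev2)
      rintro ⟨a, b⟩ ⟨h1, h2⟩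
      simp only [Set.mem_compl_iff, Set.mem_setOf_eq, not_le]
      by_contra h
      push_neg at h
      have := (add_le_zero_iff a (eConj ϕ b)).mp h
      exact absurd (lt_of_lt_of_le (lt_trans h1 h2) this) (lt_irrefl _)
    -- Convex
    · rintro w hw w' hw' a b ha hb hab
      simp only [Set.mem_setOf_eq] at hw hw' ⊢
      rw [add_le_zero_iff] at hw hw' ⊢
      have key : eConj ϕ (a • w + b • w').2 ≤
          ((-(a • w + b • w').1 : ℝ) : EReal) := by
        refine iSup_le fun ξ => ?_
        rcases eq_or_ne (ϕ ξ) ⊤ with h | h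
        · rw [h, EReal.sub_top]; exact bot_le
        · obtain ⟨t, ht⟩ : ∃ t : ℝ, ϕ ξ = (t : EReal) :=
            ⟨(ϕ ξ).toReal, (EReal.coe_toReal h (hbot ξ)).symm⟩
          have hw2 : ξ * w.2 - t ≤ -w.1 := by
            have := le_trans (fenchel ϕ w.2 ξ) hw
            rw [ht, ← EReal.coe_sub, EReal.coe_le_coe_iff] at this
            exact this
          have hw2' : ξ * w'.2 - t ≤ -w'.1 := by
            have := le_trans (fenchel ϕ w'.2 ξ) hw'
            rw [ht, ← EReal.coe_sub, EReal.coe_le_coe_iff] at this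
            exact this
          rw [ht, inner_real, ← EReal.coe_sub, EReal.coe_le_coe_iff]
          have e1 : (a • w + b • w').2 = a * w.2 + b * w'.2 := rfl
          have e2 : (a • w + b • w').1 = a * w.1 + b * w'.1 := rfl
          rw [e1, e2]
          have habt : a * t + b * t = t := by rw [← add_mul, hab, one_mul]
          linarith [mul_le_mul_of_nonneg_left hw2 ha, mul_le_mul_of_nonneg_left hw2' hb, habt]
      exact key
  -- part 2
  · intro hσ p
    set φ : H → EReal := fun v => ϕ ‖v‖ with hφ
    have hφbot : ∀ v : H, φ v ≠ ⊥ := fun v => hbot _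
    have hφ0 : φ 0 = (r : EReal) := by simp only [hφ, norm_zero]; exact hr
    -- c is the (finite) value of the conjugate
    have hcne : eConj ϕ (‖x‖ / γ) ≠ ⊥ := eConj_ne_bot ϕ heven hϕ _
    have hcnt : eConj ϕ (‖x‖ / γ) ≠ ⊤ := by
      intro h
      rw [h, EReal.coe_mul_top_of_pos (by exact_mod_cast hγ), EReal.coe_add_top] at hσ
      exact absurd hσ (by simp)
    set c := (eConj ϕ (‖x‖ / γ)).toReal with hcdef
    have hc : (c : EReal) = eConj ϕ (‖x‖ / γ) := EReal.coe_toReal hcnt hcne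
    have hσc : σ + γ * c ≤ 0 := by
      rw [← hc, ← EReal.coe_mul, ← EReal.coe_add] at hσ
      exact_mod_cast hσ
    -- real Fenchel inequality
    have fenR : ∀ (η t : ℝ), ϕ η = (t : EReal) → η * ‖x‖ ≤ γ * c + γ * t := by
      intro η t ht
      have := fenchel ϕ (‖x‖ / γ) η
      rw [ht, ← EReal.coe_sub, ← hc, EReal.coe_le_coe_iff] at this
      have h2 : η * (‖x‖ / γ) * γ ≤ (c + t) * γ := by
        apply mul_le_mul_of_nonneg_right _ (le_of_lt hγ)
        linarith
      rw [mul_assoc, div_mul_cancel₀ _ (ne_of_gt hγ)] at h2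
      linarith [h2]
    -- nonemptiness of dom φ
    have hinst : Nonempty {y : H // φ y ≠ ⊤} :=
      ⟨⟨0, by rw [hφ0]; exact EReal.coe_ne_top r⟩⟩
    -- ψ(0,0) = 0
    have hrec0 : eRec φ (0 : H) = 0 := by
      rw [eRec]
      have h2 : ∀ i : {y : H // φ y ≠ ⊤}, φ ((0 : H) + (i : H)) - φ (i : H) = 0 := by
        rintro ⟨y, hy⟩
        obtain ⟨t, ht⟩ : ∃ t : ℝ, φ y = (t : EReal) :=
          ⟨(φ y).toReal, (EReal.coe_toReal hy (hφbot y)).symm⟩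
        simp only [zero_add, ht, ← EReal.coe_sub, sub_self, EReal.coe_zero]
      rw [iSup_congr h2]
      exact iSup_const
    have hpersp00 : persp φ ((0 : ℝ), (0 : H)) = 0 := by
      have h1 : persp φ ((0 : ℝ), (0 : H)) = eRec φ 0 := by
        simp [persp]
      rw [h1, hrec0]
    -- the key pointwise inequality
    have K : ∀ (χ : ℝ) (v : H),
        ((σ * χ + ⟪x, v⟫ : ℝ) : EReal) ≤ (γ : EReal) * persp φ (χ, v) := by
      intro χ v
      rcases lt_trichotomy 0 χ with hχ | hχ | hχ
      · -- χ > 0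
        have hpe : persp φ (χ, v) = (χ : EReal) * φ (χ⁻¹ • v) := by
          simp [persp, hχ]
        rw [hpe]
        have hnorm : ‖χ⁻¹ • v‖ = χ⁻¹ * ‖v‖ := by
          rw [norm_smul, Real.norm_eq_abs, abs_of_pos (inv_pos.mpr hχ)]
        rcases eq_or_ne (φ (χ⁻¹ • v)) ⊤ with h | h
        · rw [h, EReal.mul_top_of_pos (by exact_mod_cast hχ),
            EReal.mul_top_of_pos (by exact_mod_cast hγ)]
          exact le_top
        · obtain ⟨t, ht⟩ : ∃ t : ℝ, φ (χ⁻¹ • v) = (t : EReal) :=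
            ⟨_, (EReal.coe_toReal h (hφbot _)).symm⟩
          have hf := fenR (χ⁻¹ * ‖v‖) t (by rw [← hnorm]; exact ht)
          rw [ht, ← EReal.coe_mul, ← EReal.coe_mul, EReal.coe_le_coe_iff]
          have hip := real_inner_le_norm x v
          have hvx : ‖v‖ * ‖x‖ ≤ γ * χ * c + γ * χ * t := by
            have := mul_le_mul_of_nonneg_left hf (le_of_lt hχ)
            have hvv : χ * (χ⁻¹ * ‖v‖ * ‖x‖) = ‖v‖ * ‖x‖ := by
              field_simp
            nlinarith
          nlinarith [mul_le_mul_of_nonneg_right hσc (le_of_lt hχ), norm_nonneg x,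
            norm_nonneg v]
      · -- χ = 0
        subst hχ
        have hpe : persp φ ((0:ℝ), v) = eRec φ v := by simp [persp]
        rw [hpe]
        rcases eq_or_ne v 0 with hv | hv
        · subst hv
          simp only [inner_zero_right, mul_zero, add_zero, EReal.coe_zero]
          rw [hrec0, mul_zero]
        · -- v ≠ 0 : epsilon argument
          have claim : ∀ ε : ℝ, 0 < ε →
              ((⟪x, v⟫ / γ - ε : ℝ) : EReal) ≤ eRec φ v := by
            intro ε hε
            have hlt : ((c - ε : ℝ) : EReal) < eConj ϕ (‖x‖ / γ) := by
              rw [← hc, EReal.coe_lt_coe_iff]; linarith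
            rw [eConj, lt_iSup_iff] at hlt
            obtain ⟨ξ, hξ⟩ := hlt
            rw [inner_real] at hξ
            have hξtop : ϕ ξ ≠ ⊤ := by
              intro h; rw [h, EReal.sub_top] at hξ; exact absurd hξ (by simp)
            obtain ⟨t, ht⟩ : ∃ t : ℝ, ϕ ξ = (t : EReal) :=
              ⟨_, (EReal.coe_toReal hξtop (hbot ξ)).symm⟩
            rw [ht, ← EReal.coe_sub, EReal.coe_lt_coe_iff] at hξ
            -- direction vector
            set e : H := if x = 0 then ‖v‖⁻¹ • v else ‖x‖⁻¹ • x with hedef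
            have hnorme : ‖e‖ = 1 := by
              rw [hedef]
              split_ifs with hx
              · rw [norm_smul, Real.norm_eq_abs, abs_of_nonneg
                  (inv_nonneg.mpr (norm_nonneg v)), inv_mul_cancel₀ (norm_ne_zero_iff.mpr hv)]
              · rw [norm_smul, Real.norm_eq_abs, abs_of_nonneg
                  (inv_nonneg.mpr (norm_nonneg x)), inv_mul_cancel₀ (norm_ne_zero_iff.mpr hx)]
            have hex : (⟪x, e⟫ : ℝ) = ‖x‖ := by
              rw [hedef]
              split_ifs with hx
              · simp [hx]
              · rw [real_inner_smul_right, real_inner_self_eq_norm_mul_norm]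
                field_simp
            set y : H := ξ • e with hydef
            have hny : ‖y‖ = |ξ| := by
              rw [hydef, norm_smul, Real.norm_eq_abs, hnorme, mul_one]
            have hφy : φ y = (t : EReal) := by
              show ϕ ‖y‖ = (t : EReal)
              rw [hny]
              rcases abs_choice ξ with h | h
              · rw [h]; exact ht
              · rw [h, heven]; exact ht
            have hixy : (⟪x, v + y⟫ : ℝ) = ⟪x, v⟫ + ξ * ‖x‖ := by
              rw [inner_add_right, hydef, real_inner_smul_right, hex]
            have hcs : (⟪x, v + y⟫ : ℝ) ≤ ‖x‖ * ‖v + y‖ := real_inner_le_norm x (v + y)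
            have hle : ((⟪x, v⟫ / γ - ε : ℝ) : EReal) ≤ φ (v + y) - φ y := by
              rcases eq_or_ne (φ (v + y)) ⊤ with h | h
              · rw [h, hφy, EReal.top_sub_coe]; exact le_top
              · obtain ⟨s, hs⟩ : ∃ s : ℝ, φ (v + y) = (s : EReal) :=
                  ⟨_, (EReal.coe_toReal h (hφbot _)).symm⟩
                have hfs : ‖v + y‖ * ‖x‖ ≤ γ * c + γ * s := fenR ‖v + y‖ s hs
                rw [hs, hφy, ← EReal.coe_sub, EReal.coe_le_coe_iff]
                -- from hξ : c - ε < ξ * (‖x‖ / γ) - t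
                have hξ2 : γ * c - γ * ε < ξ * ‖x‖ - γ * t := by
                  have := mul_lt_mul_of_pos_left hξ hγ
                  have h3 : γ * (ξ * (‖x‖ / γ) - t) = ξ * ‖x‖ - γ * t := by
                    field_simp
                  linarith [h3 ▸ this]
                have hmain : ⟪x, v⟫ - γ * ε ≤ γ * s - γ * t := by
                  nlinarith [hcs, hixy, hfs, hξ2]
                rw [sub_le_iff_le_add, div_le_iff₀ hγ] -- ⟪x,v⟫/γ - ε ≤ s - t
                nlinarith
            refine le_trans hle ?_
            exact le_iSup (fun y : {y : H // φ y ≠ ⊤} =>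
              φ (v + (y : H)) - φ (y : H)) ⟨y, by rw [hφy]; exact EReal.coe_ne_top t⟩
          -- conclude from claim
          rcases eq_or_ne (eRec φ v) ⊤ with h | h
          · rw [h, EReal.mul_top_of_pos (by exact_mod_cast hγ)]
            exact le_top
          · have hne : eRec φ v ≠ ⊥ := by
              intro hb
              have := claim 1 one_pos
              rw [hb, le_bot_iff] at this
              exact EReal.coe_ne_bot _ this
            obtain ⟨d, hd⟩ : ∃ d : ℝ, eRec φ v = (d : EReal) :=
              ⟨_, (EReal.coe_toReal h hne).symm⟩
            have hdge : ⟪x, v⟫ / γ ≤ d := by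
              by_contra hcon
              push_neg at hcon
              have := claim ((⟪x, v⟫ / γ - d) / 2) (by linarith)
              rw [hd, EReal.coe_le_coe_iff] at this
              linarith
            rw [hd, ← EReal.coe_mul, EReal.coe_le_coe_iff]
            have := mul_le_mul_of_nonneg_left hdge (le_of_lt hγ)
            rw [mul_div_cancel₀] at this
            · linarith
            · exact ne_of_gt hγ
      · -- χ < 0
        have hpe : persp φ (χ, v) = ⊤ := by
          simp only [persp]
          rw [if_neg (by simp; linarith), if_neg (ne_of_lt hχ)]
        rw [hpe, EReal.mul_top_of_pos (by exact_mod_cast hγ)]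
        exact le_top
    -- finish
    constructor
    · intro hp
      have h0 := hp (0, 0)
      simp only [hpersp00, mul_zero, zero_add, sub_zero] at h0
      have hK := K p.1 p.2
      have hKp : ((σ * p.1 + ⟪x, p.2⟫ : ℝ) : EReal) ≤
          (γ : EReal) * persp φ p := by
        rw [show ((p.1, p.2) : ℝ × H) = p from rfl] at hK
        exact hK
      have hchain : ((σ * p.1 + ⟪x, p.2⟫ + ((σ - p.1) ^ 2 + ‖x - p.2‖ ^ 2) / 2 : ℝ) : EReal)
          ≤ (((σ ^ 2 + ‖x‖ ^ 2) / 2 : ℝ) : EReal) := by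
        rw [EReal.coe_add]
        refine le_trans (add_le_add_left hKp _) ?_
        exact h0
      rw [EReal.coe_le_coe_iff] at hchain
      have hns := norm_sub_sq_real x p.2
      have hsq : p.1 ^ 2 + ‖p.2‖ ^ 2 ≤ 0 := by nlinarith
      have hp1 : p.1 = 0 := by nlinarith [sq_nonneg p.1, sq_nonneg ‖p.2‖, norm_nonneg p.2]
      have hp2 : p.2 = 0 := by
        rw [← norm_eq_zero]
        nlinarith [sq_nonneg p.1, norm_nonneg p.2]
      exact Prod.ext hp1 hp2
    · intro hp
      subst hp
      intro q
      simp only [hpersp00, mul_zero, zero_add, sub_zero]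
      have hK := K q.1 q.2
      rw [show ((q.1, q.2) : ℝ × H) = q from rfl] at hK
      have h2 : (((σ ^ 2 + ‖x‖ ^ 2) / 2 : ℝ) : EReal) ≤
          ((σ * q.1 + ⟪x, q.2⟫ + ((σ - q.1) ^ 2 + ‖x - q.2‖ ^ 2) / 2 : ℝ) : EReal) := by
        rw [EReal.coe_le_coe_iff]
        have hns := norm_sub_sq_real x q.2
        nlinarith [sq_nonneg q.1, sq_nonneg ‖q.2‖]
      refine le_trans h2 ?_
      rw [EReal.coe_add]
      exact add_le_add_left hK _
end
end

section
/- Let H be a real Hilbert space, let ϕ : ℝ → (−∞,∞] be an even, proper, lower semicontinuous, convex function, set φ = ϕ∘‖·‖ : H → (−∞,∞], let γ > 0 and σ ∈ ℝ. If σ > γ ϕ(0), then prox_{γφ̃}(σ,0) = (σ − γϕ(0), 0). -/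
open scoped RealInnerProductSpace

noncomputable section

/-- For even `ϕ ∈ Γ₀(ℝ)`, `φ = ϕ ∘ ‖·‖`, `γ > 0` and `σ > γϕ(0)`,
`prox_{γφ̃}(σ, 0) = (σ − γϕ(0), 0)`. -/
theorem radial_perspective_prox_at_zero
    {H : Type*} [NormedAddCommGroup H] [InnerProductSpace ℝ H] [CompleteSpace H]
    (ϕ : ℝ → EReal) (heven : ∀ ξ : ℝ, ϕ (-ξ) = ϕ ξ) (hϕ : ProperLscConvex ϕ)
    (γ : ℝ) (hγ : 0 < γ) (σ : ℝ)
    (h : (γ : EReal) * ϕ 0 < (σ : EReal)) :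
    ∀ p : ℝ × H,
      IsProx (fun q => (γ : EReal) * persp (fun v : H => ϕ ‖v‖) q) (σ, (0 : H)) p ↔
        p = (σ - γ * (ϕ 0).toReal, (0 : H)) := by
  have hbot : ϕ 0 ≠ ⊥ := hϕ.2.1 0
  have htop : ϕ 0 ≠ ⊤ := by
    intro ht
    rw [ht, EReal.coe_mul_top_of_pos hγ] at h
    exact not_top_lt h
  set r : ℝ := (ϕ 0).toReal with hrdef
  have hr : ϕ 0 = (r : EReal) := (EReal.coe_toReal htop hbot).symm
  clear_value r
  have hσr : γ * r < σ := by
    rw [hr, ← EReal.coe_mul, EReal.coe_lt_coe_iff] at h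
    exact h
  set τ : ℝ := σ - γ * r with hτdef
  clear_value τ
  have hτpos : 0 < τ := by rw [hτdef]; linarith
  -- ϕ is minimized at 0
  have hmin : ∀ ξ : ℝ, (r : EReal) ≤ ϕ ξ := by
    intro ξ
    rcases eq_or_ne (ϕ ξ) ⊤ with ht | ht
    · rw [ht]; exact le_top
    · have hb : ϕ ξ ≠ ⊥ := hϕ.2.1 ξ
      have hξt : ϕ ξ = ((ϕ ξ).toReal : EReal) := (EReal.coe_toReal ht hb).symm
      set t : ℝ := (ϕ ξ).toReal with htdef
      have h1 : ((ξ, t) : ℝ × ℝ) ∈ {p : ℝ × ℝ | ϕ p.1 ≤ (p.2 : EReal)} := le_of_eq hξt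
      have h2 : ((-ξ, t) : ℝ × ℝ) ∈ {p : ℝ × ℝ | ϕ p.1 ≤ (p.2 : EReal)} := by
        show ϕ (-ξ) ≤ ((t : ℝ) : EReal)
        rw [heven]; exact le_of_eq hξt
      have hmem := hϕ.2.2.2 h1 h2 (by norm_num : (0:ℝ) ≤ 1/2) (by norm_num : (0:ℝ) ≤ 1/2)
        (by norm_num : (1/2 : ℝ) + 1/2 = 1)
      have hcomb : (1/2 : ℝ) • ((ξ, t) : ℝ × ℝ) + (1/2 : ℝ) • ((-ξ, t) : ℝ × ℝ)
          = ((0, t) : ℝ × ℝ) := by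
        simp [Prod.ext_iff]; ring
      rw [hcomb] at hmem
      have : ϕ 0 ≤ ((t : ℝ) : EReal) := hmem
      rw [hr] at this
      exact this.trans (le_of_eq hξt.symm)
  -- value at the candidate point
  set C : ℝ := γ * (τ * r) + (γ * r) ^ 2 / 2 with hCdef
  clear_value C
  have hC : (γ : EReal) * persp (fun v : H => ϕ ‖v‖) (τ, (0 : H)) +
      ((((σ - τ) ^ 2 + ‖(0 : H) - (0 : H)‖ ^ 2) / 2 : ℝ) : EReal) = (C : EReal) := by
    have hps : persp (fun v : H => ϕ ‖v‖) (τ, (0 : H)) = (τ : EReal) * ϕ ‖τ⁻¹ • (0 : H)‖ := by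
      simp only [persp, if_pos hτpos]
    rw [hps, smul_zero, norm_zero, hr, ← EReal.coe_mul, ← EReal.coe_mul, ← EReal.coe_add,
      EReal.coe_eq_coe_iff]
    simp only [sub_self, norm_zero, hCdef, hτdef]
    ring
  -- the fundamental inequality
  have key : ∀ y : ℝ × H,
      ((C + ((y.1 - τ) ^ 2 + ‖y.2‖ ^ 2) / 2 : ℝ) : EReal) ≤
        (γ : EReal) * persp (fun v : H => ϕ ‖v‖) y +
          ((((σ - y.1) ^ 2 + ‖(0 : H) - y.2‖ ^ 2) / 2 : ℝ) : EReal) := by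
    intro y
    rw [zero_sub, norm_neg]
    rcases lt_trichotomy 0 y.1 with hy | hy | hy
    · have hps : persp (fun v : H => ϕ ‖v‖) y = (y.1 : EReal) * ϕ ‖y.1⁻¹ • y.2‖ := by
        simp only [persp, if_pos hy]
      have h2 : (y.1 : EReal) * (r : EReal) ≤ (y.1 : EReal) * ϕ ‖y.1⁻¹ • y.2‖ :=
        mul_le_mul_of_nonneg_left (hmin _) (by exact_mod_cast hy.le)
      have h3 : ((γ * (y.1 * r) : ℝ) : EReal) ≤ (γ : EReal) * persp (fun v : H => ϕ ‖v‖) y := by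
        rw [hps, EReal.coe_mul, EReal.coe_mul]
        exact mul_le_mul_of_nonneg_left h2 (by exact_mod_cast hγ.le)
      calc ((C + ((y.1 - τ) ^ 2 + ‖y.2‖ ^ 2) / 2 : ℝ) : EReal)
          = ((γ * (y.1 * r) : ℝ) : EReal) + ((((σ - y.1) ^ 2 + ‖y.2‖ ^ 2) / 2 : ℝ) : EReal) := by
            rw [← EReal.coe_add, EReal.coe_eq_coe_iff, hCdef, hτdef]; ring
        _ ≤ _ := add_le_add h3 le_rfl
    · have hps : persp (fun v : H => ϕ ‖v‖) y = eRec (fun v : H => ϕ ‖v‖) y.2 := by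
        have h0 : ¬ (0:ℝ) < y.1 := by rw [← hy]; exact lt_irrefl 0
        simp only [persp, if_neg h0, if_pos hy.symm]
      have h0top : (fun v : H => ϕ ‖v‖) (0 : H) ≠ ⊤ := by
        simp only [norm_zero, hr]; exact EReal.coe_ne_top r
      have hrec : (0 : EReal) ≤ eRec (fun v : H => ϕ ‖v‖) y.2 := by
        have hsub : (0 : EReal) ≤ ϕ ‖y.2 + (0 : H)‖ - ϕ ‖(0 : H)‖ := by
          rw [add_zero, norm_zero, hr]
          exact (EReal.le_sub_iff_add_le (a := 0) (b := (r : EReal)) (c := ϕ ‖y.2‖)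
            (Or.inl (EReal.coe_ne_bot r))
            (Or.inl (EReal.coe_ne_top r))).2 (by rw [zero_add]; exact hmin ‖y.2‖)
        exact le_trans hsub (le_iSup (fun z : {v : H // (fun v : H => ϕ ‖v‖) v ≠ ⊤} =>
          (fun v : H => ϕ ‖v‖) (y.2 + (z : H)) - (fun v : H => ϕ ‖v‖) (z : H)) ⟨0, h0top⟩)
      have hψ0 : (0 : EReal) ≤ (γ : EReal) * persp (fun v : H => ϕ ‖v‖) y := by
        rw [hps]; exact mul_nonneg (by exact_mod_cast hγ.le) hrec
      calc ((C + ((y.1 - τ) ^ 2 + ‖y.2‖ ^ 2) / 2 : ℝ) : EReal)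
          ≤ ((((σ - y.1) ^ 2 + ‖y.2‖ ^ 2) / 2 : ℝ) : EReal) := by
            rw [EReal.coe_le_coe_iff, hCdef, hτdef, ← hy]; nlinarith [sq_nonneg ‖y.2‖]
        _ ≤ _ := le_add_of_nonneg_left hψ0
    · have hps : persp (fun v : H => ϕ ‖v‖) y = ⊤ := by
        simp only [persp, if_neg (not_lt.2 hy.le), if_neg hy.ne]
      rw [hps, EReal.coe_mul_top_of_pos hγ,
        EReal.top_add_of_ne_bot (EReal.coe_ne_bot _)]
      exact le_top
  intro p
  constructor
  · intro hp
    have h1 := hp (τ, (0 : H))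
    simp only at h1
    rw [hC] at h1
    have h2 := key p
    have h3 : ((C + ((p.1 - τ) ^ 2 + ‖p.2‖ ^ 2) / 2 : ℝ) : EReal) ≤ (C : EReal) :=
      le_trans h2 h1
    rw [EReal.coe_le_coe_iff] at h3
    have hd : ((p.1 - τ) ^ 2 + ‖p.2‖ ^ 2) / 2 ≤ 0 := by linarith
    have e1 : p.1 = τ := by
      have : (p.1 - τ) ^ 2 = 0 :=
        le_antisymm (by linarith [sq_nonneg ‖p.2‖, hd]) (sq_nonneg _)
      have := (pow_eq_zero_iff two_ne_zero).mp this
      linarith [sub_eq_zero.mp this]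
    have e2 : p.2 = 0 := by
      have : ‖p.2‖ ^ 2 = 0 :=
        le_antisymm (by linarith [sq_nonneg (p.1 - τ), hd]) (sq_nonneg _)
      have := (pow_eq_zero_iff two_ne_zero).mp this
      exact norm_eq_zero.mp this
    exact Prod.ext e1 e2
  · intro hp
    subst hp
    intro y
    simp only
    rw [hC]
    refine le_trans ?_ (key y)
    rw [EReal.coe_le_coe_iff]
    nlinarith [sq_nonneg (y.1 - τ), sq_nonneg ‖y.2‖]
end
end

section
/- Let H be a real Hilbert space, let ϕ : ℝ → (−∞,∞] be an even, proper, lower semicontinuous, convex function, set φ = ϕ∘‖·‖ : H → (−∞,∞], let γ > 0, σ ∈ ℝ, and x ∈ H with x ≠ 0, and set R = {(χ,ν) ∈ ℝ² : χ + ϕ*(ν) ≤ 0}. Suppose σ + γ ϕ*(‖x‖/γ) > 0, and let (χ,ν) be the metric projection of (σ/γ, ‖x‖/γ) onto R. Then prox_{γφ̃}(σ,x) = (σ − γχ, (1 − γν/‖x‖) x). -/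
open scoped RealInnerProductSpace

noncomputable section

namespace RadialProxAux

lemma real_inner_mul (a b : ℝ) : (⟪a, b⟫ : ℝ) = a * b := by
  simp [RCLike.inner_apply, mul_comm]

lemma term_le_eConj (ϕ : ℝ → EReal) (u s : ℝ) :
    ((s * u : ℝ) : EReal) - ϕ s ≤ eConj ϕ u := by
  have h := le_iSup (fun x : ℝ => (((⟪x, u⟫ : ℝ) : EReal) - ϕ x)) s
  simp only [eConj, real_inner_mul] at h ⊢; exact h

lemma eConj_le_of_minorant {ϕ : ℝ → EReal} {m c : ℝ}
    (hm : ∀ y, ((m * y + c : ℝ) : EReal) ≤ ϕ y) :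
    eConj ϕ m ≤ ((-c : ℝ) : EReal) := by
  refine iSup_le fun s => ?_
  have h1 : ((⟪s, m⟫ : ℝ) : EReal) - ϕ s ≤ ((s*m : ℝ) : EReal) - ((m*s + c : ℝ) : EReal) := by
    rw [real_inner_mul]; exact EReal.sub_le_sub le_rfl (hm s)
  refine h1.trans ?_
  rw [← EReal.coe_sub]
  norm_cast
  ring_nf
  exact le_rfl

lemma fy_of_eConj_le {ϕ : ℝ → EReal} {u c : ℝ} (h : eConj ϕ u ≤ (c : ℝ)) (s : ℝ) :
    ((s * u - c : ℝ) : EReal) ≤ ϕ s := by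
  have h1 := (term_le_eConj ϕ u s).trans h
  cases hϕs : ϕ s with
  | bot =>
    rw [hϕs, EReal.coe_sub_bot] at h1
    exact absurd h1 (by simp)
  | top => exact le_top
  | coe r =>
    rw [hϕs] at h1
    rw [← EReal.coe_sub] at h1
    norm_cast at h1 ⊢
    linarith

lemma epi_closed {ϕ : ℝ → EReal} (h : LowerSemicontinuous ϕ) :
    IsClosed {p : ℝ × ℝ | ϕ p.1 ≤ (p.2 : EReal)} := by
  have h2 : IsClosed {p : ℝ × EReal | ϕ p.1 ≤ p.2} :=
    lowerSemicontinuous_iff_isClosed_epigraph.mp h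
  have h3 : {p : ℝ × ℝ | ϕ p.1 ≤ (p.2 : EReal)} =
      (fun p : ℝ × ℝ => (p.1, (p.2 : EReal))) ⁻¹' {p : ℝ × EReal | ϕ p.1 ≤ p.2} := rfl
  rw [h3]
  exact h2.preimage (continuous_fst.prodMk (continuous_coe_real_ereal.comp continuous_snd))

lemma sep {ϕ : ℝ → EReal} (hconv : Convex ℝ {p : ℝ × ℝ | ϕ p.1 ≤ (p.2 : EReal)})
    (hlsc : LowerSemicontinuous ϕ) {t c : ℝ} (htc : ¬ ϕ t ≤ (c : EReal)) :
    ∃ a b u : ℝ, a*t + b*c < u ∧ ∀ y r : ℝ, ϕ y ≤ (r : EReal) → u < a*y + b*r := by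
  obtain ⟨f, u, hfu, hf⟩ := geometric_hahn_banach_point_closed hconv (epi_closed hlsc)
    (x := (t, c)) htc
  have hdecomp : ∀ y r : ℝ, f (y, r) = f (1, 0) * y + f (0, 1) * r := by
    intro y r
    have hyr : (y, r) = y • ((1:ℝ), (0:ℝ)) + r • ((0:ℝ), (1:ℝ)) := by
      simp [Prod.ext_iff]
    rw [hyr, map_add, map_smul, map_smul, smul_eq_mul, smul_eq_mul]
    ring
  refine ⟨f (1, 0), f (0, 1), u, ?_, ?_⟩
  · rw [← hdecomp]; exact hfu
  · intro y r hyr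
    rw [← hdecomp]
    exact hf (y, r) hyr

lemma exists_minorant {ϕ : ℝ → EReal}
    (hconv : Convex ℝ {p : ℝ × ℝ | ϕ p.1 ≤ (p.2 : EReal)})
    (hlsc : LowerSemicontinuous ϕ) (hbot : ∀ y, ϕ y ≠ ⊥)
    {x₀ r₀ : ℝ} (hx₀ : ϕ x₀ = (r₀ : ℝ)) :
    ∃ m c : ℝ, ∀ y, ((m * y + c : ℝ) : EReal) ≤ ϕ y := by
  have htc : ¬ ϕ x₀ ≤ ((r₀ - 1 : ℝ) : EReal) := by
    rw [hx₀]; intro hle; have : r₀ ≤ r₀ - 1 := by exact_mod_cast hle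
    linarith
  obtain ⟨a, b, u, h1, h2⟩ := sep hconv hlsc htc
  have h3 : u < a * x₀ + b * r₀ := h2 x₀ r₀ (le_of_eq hx₀)
  have hb : 0 < b := by nlinarith
  refine ⟨-a/b, u/b, fun y => ?_⟩
  cases hϕy : ϕ y with
  | bot => exact absurd hϕy (hbot y)
  | top => exact le_top
  | coe r =>
    have h4 : u < a * y + b * r := h2 y r (le_of_eq hϕy)
    have h5 : -a/b * y + u/b ≤ r := by
      rw [div_mul_eq_mul_div, ← add_div, div_le_iff₀ hb]
      nlinarith
    exact_mod_cast h5

lemma fm {ϕ : ℝ → EReal} (hconv : Convex ℝ {p : ℝ × ℝ | ϕ p.1 ≤ (p.2 : EReal)})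
    (hlsc : LowerSemicontinuous ϕ) (hbot : ∀ y, ϕ y ≠ ⊥)
    {x₀ r₀ : ℝ} (hx₀ : ϕ x₀ = (r₀ : ℝ))
    {t c : ℝ} (hc : (c : EReal) < ϕ t) :
    ∃ m d : ℝ, (∀ y, ((m * y + d : ℝ) : EReal) ≤ ϕ y) ∧ c < m * t + d := by
  obtain ⟨a, b, u, h1, h2⟩ := sep hconv hlsc (not_le.mpr hc)
  have hb : 0 ≤ b := by
    by_contra hbneg
    push_neg at hbneg
    set r : ℝ := max r₀ ((u - a*x₀ - 1)/b) with hr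
    have hmem : ϕ x₀ ≤ (r : EReal) := by
      rw [hx₀]; exact_mod_cast le_max_left _ _
    have h4 := h2 x₀ r hmem
    have h5 : b * r ≤ u - a*x₀ - 1 := by
      have : (u - a*x₀ - 1)/b ≤ r := le_max_right _ _
      calc b * r ≤ b * ((u - a*x₀ - 1)/b) := by
            exact mul_le_mul_of_nonpos_left this hbneg.le
        _ = u - a*x₀ - 1 := by rw [mul_comm, div_mul_cancel₀ _ hbneg.ne]
    linarith
  rcases hb.eq_or_lt with hb0 | hbpos
  · -- b = 0
    rw [← hb0] at h1 h2
    obtain ⟨m₀, d₀, hm₀⟩ := exists_minorant hconv hlsc hbot hx₀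
    have hut : 0 < u - a*t := by nlinarith
    set s : ℝ := max 0 ((c + 1 - m₀*t - d₀)/(u - a*t)) with hs
    have hs0 : 0 ≤ s := le_max_left _ _
    refine ⟨m₀ - s*a, d₀ + s*u, fun y => ?_, ?_⟩
    · cases hϕy : ϕ y with
      | bot => exact absurd hϕy (hbot y)
      | top => exact le_top
      | coe r =>
        have h4 : u < a * y := by have := h2 y r (le_of_eq hϕy); nlinarith
        have h5 : m₀ * y + d₀ ≤ r := by
          have := hm₀ y; rw [hϕy] at this; exact_mod_cast this
        have : (m₀ - s*a) * y + (d₀ + s*u) ≤ r := by nlinarith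
        exact_mod_cast this
    · have h6 : c + 1 - m₀*t - d₀ ≤ s * (u - a*t) := by
        rcases le_or_gt ((c + 1 - m₀*t - d₀)/(u - a*t)) 0 with hq | hq
        · have : c + 1 - m₀*t - d₀ ≤ 0 := by
            by_contra hcon; push_neg at hcon
            have := div_pos hcon hut; linarith
          nlinarith [mul_nonneg hs0 hut.le]
        · have hsq : (c + 1 - m₀*t - d₀)/(u - a*t) ≤ s := le_max_right _ _
          calc c + 1 - m₀*t - d₀ = ((c + 1 - m₀*t - d₀)/(u - a*t)) * (u - a*t) := by
                rw [div_mul_cancel₀ _ hut.ne']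
            _ ≤ s * (u - a*t) := by exact mul_le_mul_of_nonneg_right hsq hut.le
      nlinarith
  · -- b > 0
    refine ⟨-a/b, u/b, fun y => ?_, ?_⟩
    · cases hϕy : ϕ y with
      | bot => exact absurd hϕy (hbot y)
      | top => exact le_top
      | coe r =>
        have h4 : u < a * y + b * r := h2 y r (le_of_eq hϕy)
        have h5 : -a/b * y + u/b ≤ r := by
          rw [div_mul_eq_mul_div, ← add_div, div_le_iff₀ hbpos]
          nlinarith
        exact_mod_cast h5
    · rw [div_mul_eq_mul_div, ← add_div, lt_div_iff₀ hbpos]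
      nlinarith

lemma eConj_neg {ϕ : ℝ → EReal} (heven : ∀ ξ : ℝ, ϕ (-ξ) = ϕ ξ) (u : ℝ) :
    eConj ϕ (-u) = eConj ϕ u := by
  have key : ∀ w : ℝ, eConj ϕ (-w) ≤ eConj ϕ w := by
    intro w
    refine iSup_le fun s => ?_
    have h1 : ((⟪s, -w⟫ : ℝ) : EReal) - ϕ s = (((-s) * w : ℝ) : EReal) - ϕ (-s) := by
      rw [real_inner_mul, heven s]; ring_nf
    rw [h1]
    exact term_le_eConj ϕ w (-s)
  refine le_antisymm (key u) ?_
  have := key (-u)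
  rwa [neg_neg] at this

lemma eConj_mono {ϕ : ℝ → EReal} (heven : ∀ ξ : ℝ, ϕ (-ξ) = ϕ ξ) {u₁ u₂ : ℝ}
    (h0 : 0 ≤ u₁) (h12 : u₁ ≤ u₂) :
    eConj ϕ u₁ ≤ eConj ϕ u₂ := by
  refine iSup_le fun s => ?_
  have habs : ϕ s = ϕ |s| := by
    rcases abs_cases s with ⟨h, _⟩ | ⟨h, _⟩
    · rw [h]
    · rw [h, heven]
  have h1 : ((⟪s, u₁⟫ : ℝ) : EReal) - ϕ s ≤ ((|s| * u₂ : ℝ) : EReal) - ϕ |s| := by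
    rw [real_inner_mul, habs]
    refine EReal.sub_le_sub ?_ le_rfl
    exact_mod_cast by nlinarith [le_abs_self s, abs_nonneg s]
  exact h1.trans (term_le_eConj ϕ u₂ |s|)

lemma eConj_comb {ϕ : ℝ → EReal} (hbot : ∀ y, ϕ y ≠ ⊥) {u₁ u₂ c₁ c₂ t : ℝ}
    (ht0 : 0 ≤ t) (ht1 : t ≤ 1)
    (h₁ : eConj ϕ u₁ ≤ (c₁ : ℝ)) (h₂ : eConj ϕ u₂ ≤ (c₂ : ℝ)) :
    eConj ϕ (t*u₁ + (1-t)*u₂) ≤ ((t*c₁ + (1-t)*c₂ : ℝ) : EReal) := by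
  refine iSup_le fun s => ?_
  rw [real_inner_mul]
  cases hs : ϕ s with
  | bot => exact absurd hs (hbot s)
  | top => rw [EReal.sub_top]; exact bot_le
  | coe r =>
    have e₁ : s * u₁ - c₁ ≤ r := by
      have := fy_of_eConj_le h₁ s; rw [hs] at this; exact_mod_cast this
    have e₂ : s * u₂ - c₂ ≤ r := by
      have := fy_of_eConj_le h₂ s; rw [hs] at this; exact_mod_cast this
    rw [← EReal.coe_sub]
    exact_mod_cast by nlinarith

lemma coe_mul_le {c m : ℝ} (hc : 0 < c) {e : EReal} (h : (m : EReal) ≤ e) :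
    ((c * m : ℝ) : EReal) ≤ (c : EReal) * e := by
  cases e with
  | bot => exact absurd h (by simp)
  | top => rw [EReal.coe_mul_top_of_pos hc]; exact le_top
  | coe r =>
    rw [← EReal.coe_mul]
    exact_mod_cast mul_le_mul_of_nonneg_left (by exact_mod_cast h) hc.le

lemma le_of_forall_sub {c : ℝ} {e : EReal}
    (h : ∀ ε : ℝ, 0 < ε → ((c - ε : ℝ) : EReal) ≤ e) : (c : EReal) ≤ e := by
  cases e with
  | bot =>
    have := h 1 one_pos
    rw [le_bot_iff] at this
    exact absurd this (EReal.coe_ne_bot _)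
  | top => exact le_top
  | coe r =>
    have h' : ∀ ε : ℝ, 0 < ε → c - ε ≤ r := fun ε hε => by exact_mod_cast h ε hε
    by_contra hlt
    push_neg at hlt
    have hr : r < c := by exact_mod_cast hlt
    have := h' ((c - r)/2) (by linarith)
    linarith

lemma phi_mono {ϕ : ℝ → EReal} (hconv : Convex ℝ {p : ℝ × ℝ | ϕ p.1 ≤ (p.2 : EReal)})
    (heven : ∀ ξ : ℝ, ϕ (-ξ) = ϕ ξ) (hbot : ∀ y, ϕ y ≠ ⊥)
    {s₁ s₂ : ℝ} (h0 : 0 ≤ s₁) (h12 : s₁ ≤ s₂) : ϕ s₁ ≤ ϕ s₂ := by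
  cases hs2 : ϕ s₂ with
  | top => exact le_top
  | bot => exact absurd hs2 (hbot s₂)
  | coe r =>
    rcases eq_or_lt_of_le (h0.trans h12) with h2z | h2pos
    · have : s₁ = s₂ := by linarith [h12, h0, h2z.symm.le]
      rw [this, hs2]
    · set t : ℝ := (s₁ + s₂)/(2*s₂) with ht
      have ht0 : 0 ≤ t := by positivity
      have ht1 : t ≤ 1 := by rw [ht, div_le_one (by linarith)]; linarith
      have hm₁ : (s₂, r) ∈ {p : ℝ × ℝ | ϕ p.1 ≤ (p.2 : EReal)} := le_of_eq hs2
      have hm₂ : (-s₂, r) ∈ {p : ℝ × ℝ | ϕ p.1 ≤ (p.2 : EReal)} := by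
        show ϕ (-s₂) ≤ _
        rw [heven]; exact le_of_eq hs2
      have hcomb := hconv (a := t) (b := 1 - t) hm₁ hm₂ ht0 (by linarith) (by ring)
      have heq : t • ((s₂ : ℝ), r) + (1 - t) • ((-s₂ : ℝ), r) = (s₁, r) := by
        ext
        · show t * s₂ + (1 - t) * (-s₂) = s₁
          have h2 : t * (2*s₂) = s₁ + s₂ := by
            rw [ht]; field_simp
          nlinarith [h2]
        · show t * r + (1 - t) * r = r
          ring
      rw [heq] at hcomb
      exact hcomb

lemma vi_aux {d₁ d₂ Δ₁ Δ₂ : ℝ}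
    (h : ∀ t : ℝ, 0 < t → t ≤ 1 → d₁^2 + d₂^2 ≤ (d₁ - t*Δ₁)^2 + (d₂ - t*Δ₂)^2) :
    d₁*Δ₁ + d₂*Δ₂ ≤ 0 := by
  by_contra hcon
  push_neg at hcon
  set e := d₁*Δ₁ + d₂*Δ₂ with hE
  set S := Δ₁^2 + Δ₂^2 with hSdef
  have hS0 : 0 ≤ S := by rw [hSdef]; positivity
  have hSe : 0 < S + e := by linarith
  set t := min 1 (e/(S+e)) with htdef
  have ht0 : 0 < t := lt_min one_pos (div_pos hcon hSe)
  have ht1 : t ≤ 1 := min_le_left _ _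
  have hq := h t ht0 ht1
  have key : 2*t*e ≤ t^2*S := by
    rw [hE, hSdef]; nlinarith [hq]
  have h2e : 2*e ≤ t*S := by
    have hk2 : t*(2*e) ≤ t*(t*S) := by nlinarith [key]
    exact le_of_mul_le_mul_left hk2 ht0
  have htle : t*(S+e) ≤ e := by
    have hmin : t ≤ e/(S+e) := min_le_right _ _
    rw [le_div_iff₀ hSe] at hmin
    linarith
  nlinarith [mul_pos ht0 hcon]

lemma persp_neg {H : Type*} [NormedAddCommGroup H] [NormedSpace ℝ H]
    (φ : H → EReal) {τ : ℝ} (v : H) (hτ : τ < 0) : persp φ (τ, v) = ⊤ := by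
  simp [persp, not_lt.mpr hτ.le, hτ.ne]

lemma persp_zero {H : Type*} [NormedAddCommGroup H] [NormedSpace ℝ H]
    (φ : H → EReal) (v : H) : persp φ (0, v) = eRec φ v := by
  simp [persp]

lemma persp_pos {H : Type*} [NormedAddCommGroup H] [NormedSpace ℝ H]
    (φ : H → EReal) {τ : ℝ} (v : H) (hτ : 0 < τ) :
    persp φ (τ, v) = (τ : EReal) * φ (τ⁻¹ • v) := by
  simp [persp, hτ]

end RadialProxAux

set_option maxHeartbeats 2000000 in
open RadialProxAux in
/-- For even `ϕ ∈ Γ₀(ℝ)`, `φ = ϕ ∘ ‖·‖`, `x ≠ 0` with `σ + γϕ*(‖x‖/γ) > 0`, if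
`(χ,ν)` is the Euclidean projection of `(σ/γ, ‖x‖/γ)` onto
`R = {(χ,ν) : χ + ϕ*(ν) ≤ 0}`, then
`prox_{γφ̃}(σ,x) = (σ − γχ, (1 − γν/‖x‖) x)`. -/
theorem radial_perspective_prox_via_projection
    {H : Type*} [NormedAddCommGroup H] [InnerProductSpace ℝ H] [CompleteSpace H]
    (ϕ : ℝ → EReal) (heven : ∀ ξ : ℝ, ϕ (-ξ) = ϕ ξ) (hϕ : ProperLscConvex ϕ)
    (γ : ℝ) (hγ : 0 < γ) (σ : ℝ) (x : H) (hx : x ≠ 0)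
    (h : 0 < (σ : EReal) + (γ : EReal) * eConj ϕ (‖x‖ / γ))
    (χ ν : ℝ)
    (hmem : (χ : EReal) + eConj ϕ ν ≤ 0)
    (hproj : ∀ w : ℝ × ℝ, (w.1 : EReal) + eConj ϕ w.2 ≤ 0 →
      (σ / γ - χ) ^ 2 + (‖x‖ / γ - ν) ^ 2 ≤
        (σ / γ - w.1) ^ 2 + (‖x‖ / γ - w.2) ^ 2) :
    ∀ p : ℝ × H,
      IsProx (fun q => (γ : EReal) * persp (fun v : H => ϕ ‖v‖) q) (σ, x) p ↔
        p = (σ - γ * χ, (1 - γ * ν / ‖x‖) • x) := by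
  classical
  obtain ⟨⟨t₀, ht₀⟩, hbot, hlsc, hconv⟩ := hϕ
  obtain ⟨r₀, hr₀⟩ : ∃ r₀ : ℝ, ϕ t₀ = (r₀ : ℝ) := by
    cases h0 : ϕ t₀ with
    | bot => exact absurd h0 (hbot t₀)
    | top => exact absurd h0 ht₀
    | coe r => exact ⟨r, rfl⟩
  have ha : (0:ℝ) < ‖x‖ := norm_pos_iff.mpr hx
  -- the conjugate is real wherever the constraint is satisfiable
  have conj_real : ∀ χ' ν' : ℝ, ((χ' : ℝ) : EReal) + eConj ϕ ν' ≤ 0 →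
      ∃ c' : ℝ, eConj ϕ ν' = (c' : ℝ) ∧ χ' + c' ≤ 0 := by
    intro χ' ν' hw
    have hnb : eConj ϕ ν' ≠ ⊥ := by
      intro hB
      have := term_le_eConj ϕ ν' t₀
      rw [hB, hr₀, ← EReal.coe_sub, le_bot_iff] at this
      exact EReal.coe_ne_bot _ this
    have hnt : eConj ϕ ν' ≠ ⊤ := by
      intro hT
      rw [hT] at hw
      simp at hw
    obtain ⟨c', hc'⟩ : ∃ c' : ℝ, eConj ϕ ν' = (c' : ℝ) := by
      cases h0 : eConj ϕ ν' with
      | bot => exact absurd h0 hnb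
      | top => exact absurd h0 hnt
      | coe r => exact ⟨r, rfl⟩
    refine ⟨c', hc', ?_⟩
    rw [hc', ← EReal.coe_add] at hw
    exact_mod_cast hw
  obtain ⟨cs, hcs, hχcs⟩ := conj_real χ ν hmem
  have hFY : ∀ s : ℝ, ((s*ν - cs : ℝ) : EReal) ≤ ϕ s := fy_of_eConj_le (le_of_eq hcs)
  -- variational inequality for the projection
  have hVI : ∀ χ' ν' : ℝ, ((χ' : ℝ) : EReal) + eConj ϕ ν' ≤ 0 →
      (σ - γ*χ)*(χ' - χ) + (‖x‖ - γ*ν)*(ν' - ν) ≤ 0 := by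
    intro χ' ν' hw
    obtain ⟨c', hc', hsum'⟩ := conj_real χ' ν' hw
    have hD : (σ/γ - χ)*(χ' - χ) + (‖x‖/γ - ν)*(ν' - ν) ≤ 0 := by
      refine vi_aux fun t ht0 ht1 => ?_
      have hmix : ν + t*(ν' - ν) = t*ν' + (1-t)*ν := by ring
      have hcomb := eConj_comb hbot ht0.le ht1 (le_of_eq hc') (le_of_eq hcs)
      have hmemt : ((χ + t*(χ' - χ) : ℝ) : EReal) + eConj ϕ (ν + t*(ν' - ν)) ≤ 0 := by
        rw [hmix]
        calc ((χ + t*(χ' - χ) : ℝ) : EReal) + eConj ϕ (t*ν' + (1-t)*ν)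
            ≤ ((χ + t*(χ' - χ) : ℝ) : EReal) + ((t*c' + (1-t)*cs : ℝ) : EReal) :=
              add_le_add_right hcomb _
          _ = ((χ + t*(χ' - χ) + (t*c' + (1-t)*cs) : ℝ) : EReal) := by
              rw [← EReal.coe_add]
          _ ≤ (0 : EReal) := by
              exact_mod_cast (by nlinarith : χ + t*(χ' - χ) + (t*c' + (1-t)*cs) ≤ (0:ℝ))
      have hq := hproj (χ + t*(χ' - χ), ν + t*(ν' - ν)) hmemt
      nlinarith [hq]
    have hEq : (σ - γ*χ)*(χ' - χ) + (‖x‖ - γ*ν)*(ν' - ν)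
        = γ*((σ/γ - χ)*(χ' - χ) + (‖x‖/γ - ν)*(ν' - ν)) := by
      field_simp
      try ring
    rw [hEq]
    have hmul := mul_le_mul_of_nonneg_left hD hγ.le
    simpa using hmul
  -- signs
  have hν : 0 ≤ ν := by
    have hm' : ((χ : ℝ) : EReal) + eConj ϕ (-ν) ≤ 0 := by
      rw [eConj_neg heven]; exact hmem
    have hq := hproj (χ, -ν) hm'
    nlinarith [hq, div_pos ha hγ]
  have hβ : γ*ν ≤ ‖x‖ := by
    by_contra hcon
    push_neg at hcon
    have h1 : ‖x‖/γ < ν := by rw [div_lt_iff₀ hγ]; linarith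
    have h2 : eConj ϕ (‖x‖/γ) ≤ ((cs : ℝ) : EReal) :=
      (eConj_mono heven (by positivity) h1.le).trans (le_of_eq hcs)
    have hm2 : ((χ : ℝ) : EReal) + eConj ϕ (‖x‖/γ) ≤ 0 := by
      calc ((χ : ℝ) : EReal) + eConj ϕ (‖x‖/γ) ≤ (χ : EReal) + (cs : EReal) :=
            add_le_add_right h2 _
        _ = ((χ + cs : ℝ) : EReal) := by rw [← EReal.coe_add]
        _ ≤ 0 := by exact_mod_cast hχcs
    have hq := hproj (χ, ‖x‖/γ) hm2
    nlinarith [hq, mul_pos (sub_pos.mpr h1) (sub_pos.mpr h1)]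
  have hα : 0 ≤ σ - γ*χ := by
    have hm3 : (((χ - 1 : ℝ)) : EReal) + eConj ϕ ν ≤ 0 := by
      calc ((χ - 1 : ℝ) : EReal) + eConj ϕ ν ≤ (χ : EReal) + eConj ϕ ν := by
            exact add_le_add_left (by exact_mod_cast (by linarith : χ - 1 ≤ χ)) _
        _ ≤ 0 := hmem
    have hvi := hVI (χ - 1) ν hm3
    nlinarith [hvi]
  set φv := fun w : H => ϕ ‖w‖ with hφv
  -- lower bound on the recession term
  have eRecLB : ∀ v : H, ((ν * ‖v‖ : ℝ) : EReal) ≤ eRec φv v := by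
    intro v
    apply le_of_forall_sub
    intro ε hε
    have hlt : ((cs - ε : ℝ) : EReal) < eConj ϕ ν := by
      rw [hcs]; exact_mod_cast sub_lt_self _ hε
    rw [eConj] at hlt
    obtain ⟨s, hs⟩ := lt_iSup_iff.mp hlt
    rw [real_inner_mul] at hs
    obtain ⟨rs, hrs⟩ : ∃ rs : ℝ, ϕ s = (rs : ℝ) := by
      cases h0 : ϕ s with
      | bot => exact absurd h0 (hbot s)
      | top => rw [h0, EReal.sub_top] at hs; exact absurd hs (by simp)
      | coe r => exact ⟨r, rfl⟩
    rw [hrs, ← EReal.coe_sub] at hs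
    have hs' : cs - ε < s*ν - rs := by exact_mod_cast hs
    have hϕabs : ϕ |s| = (rs : ℝ) := by
      rcases abs_cases s with ⟨hh, _⟩ | ⟨hh, _⟩
      · rw [hh]; exact hrs
      · rw [hh, heven]; exact hrs
    have hs'' : cs - ε ≤ |s| *ν - rs := by
      nlinarith [le_abs_self s, abs_nonneg s, hν]
    set d : H := if v = 0 then ‖x‖⁻¹ • x else ‖v‖⁻¹ • v with hd
    have hnd : ‖d‖ = 1 := by
      rw [hd]
      split_ifs with hv
      · rw [norm_smul, Real.norm_eq_abs, abs_of_pos (inv_pos.mpr ha), inv_mul_cancel₀ ha.ne']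
      · have hv' : (0:ℝ) < ‖v‖ := norm_pos_iff.mpr hv
        rw [norm_smul, Real.norm_eq_abs, abs_of_pos (inv_pos.mpr hv'), inv_mul_cancel₀ hv'.ne']
    have hvd : v = ‖v‖ • d := by
      rw [hd]
      split_ifs with hv
      · rw [hv]; simp
      · have hv' : (0:ℝ) < ‖v‖ := norm_pos_iff.mpr hv
        rw [smul_smul, mul_inv_cancel₀ hv'.ne', one_smul]
    have hsum : v + |s| • d = (‖v‖ + |s|) • d := by
      rw [add_smul, ← hvd]
    have hny : ‖v + |s| • d‖ = ‖v‖ + |s| := by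
      rw [hsum, norm_smul, Real.norm_eq_abs, hnd, mul_one,
        abs_of_nonneg (by positivity)]
    have hnys : ‖(|s| : ℝ) • d‖ = |s| := by
      rw [norm_smul, Real.norm_eq_abs, hnd, mul_one, abs_abs]
    have hmem' : φv ((|s| : ℝ) • d) ≠ ⊤ := by
      show ϕ ‖(|s| : ℝ) • d‖ ≠ ⊤
      rw [hnys, hϕabs]
      exact EReal.coe_ne_top _
    rw [eRec]
    refine le_trans ?_ (le_iSup (fun y : {y : H // φv y ≠ ⊤} =>
      φv (v + (y : H)) - φv (y : H)) ⟨(|s| : ℝ) • d, hmem'⟩)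
    show ((ν * ‖v‖ - ε : ℝ) : EReal) ≤ ϕ ‖v + (|s| : ℝ) • d‖ - ϕ ‖(|s| : ℝ) • d‖
    rw [hny, hnys, hϕabs]
    have hfy := hFY (‖v‖ + |s|)
    calc ((ν * ‖v‖ - ε : ℝ) : EReal)
        ≤ (((‖v‖ + |s|)*ν - cs - rs : ℝ) : EReal) := by
          exact_mod_cast (by nlinarith [hs''] : ν * ‖v‖ - ε ≤ (‖v‖ + |s|)*ν - cs - rs)
      _ = (((‖v‖ + |s|)*ν - cs : ℝ) : EReal) - ((rs : ℝ) : EReal) := by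
          rw [← EReal.coe_sub]
      _ ≤ ϕ (‖v‖ + |s|) - ((rs : ℝ) : EReal) := EReal.sub_le_sub hfy le_rfl
  -- pointwise lower bound for the perspective
  have hLB : ∀ τ : ℝ, ∀ v : H, ((γ*(τ*χ + ν*‖v‖) : ℝ) : EReal) ≤
      (γ : EReal) * persp φv (τ, v) := by
    intro τ v
    rcases lt_trichotomy τ 0 with hτ | hτ | hτ
    · rw [persp_neg φv v hτ, EReal.coe_mul_top_of_pos (by exact_mod_cast hγ)]
      exact le_top
    · subst hτ
      rw [persp_zero]
      have h1 := eRecLB v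
      have h2 := coe_mul_le hγ h1
      have h3 : γ*(0*χ + ν*‖v‖) = γ*(ν*‖v‖) := by ring
      rw [h3]
      exact h2
    · rw [persp_pos φv v hτ]
      have hsn : ‖τ⁻¹ • v‖ = τ⁻¹*‖v‖ := by
        rw [norm_smul, Real.norm_eq_abs, abs_of_pos (inv_pos.mpr hτ)]
      have h1 := hFY (τ⁻¹*‖v‖)
      have h2 := coe_mul_le hτ h1
      have h3 : φv (τ⁻¹ • v) = ϕ (τ⁻¹*‖v‖) := by
        show ϕ ‖τ⁻¹ • v‖ = _
        rw [hsn]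
      have h4 : ((τ*(τ⁻¹*‖v‖*ν - cs) : ℝ) : EReal) ≤ (τ : EReal) * φv (τ⁻¹ • v) := by
        rw [h3]; exact h2
      have h5 := coe_mul_le hγ h4
      refine le_trans ?_ h5
      have hτinv : τ*(τ⁻¹*‖v‖*ν) = ‖v‖*ν := by
        field_simp
      have hcc : τ*χ ≤ τ*(-cs) := mul_le_mul_of_nonneg_left (by linarith) hτ.le
      have hstep : τ*χ + ν*‖v‖ ≤ τ*(τ⁻¹*‖v‖*ν - cs) := by nlinarith [hτinv, hcc]
      have hstep2 : γ*(τ*χ + ν*‖v‖) ≤ γ*(τ*(τ⁻¹*‖v‖*ν - cs)) :=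
        mul_le_mul_of_nonneg_left hstep hγ.le
      exact_mod_cast hstep2
  -- upper bounds via Fenchel–Moreau and the variational inequality
  have hUB1 : ∀ s₀ : ℝ, 0 < σ - γ*χ → (σ - γ*χ)*s₀ = ‖x‖ - γ*ν →
      ϕ s₀ ≤ ((χ + ν*s₀ : ℝ) : EReal) := by
    intro s₀ hαpos hs₀
    by_contra hcon
    push_neg at hcon
    obtain ⟨m, d, hmd, hval⟩ := fm hconv hlsc hbot hr₀ hcon
    have hconj := eConj_le_of_minorant hmd
    have hmemw : ((d : ℝ) : EReal) + eConj ϕ m ≤ 0 := by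
      calc ((d : ℝ) : EReal) + eConj ϕ m ≤ (d : EReal) + ((-d : ℝ) : EReal) :=
            add_le_add_right hconj _
        _ = ((d + -d : ℝ) : EReal) := by rw [← EReal.coe_add]
        _ ≤ 0 := by norm_num
    have hvi := hVI d m hmemw
    have e1 : ν*((σ - γ*χ)*s₀) = ν*(‖x‖ - γ*ν) := by rw [hs₀]
    have e2 : m*((σ - γ*χ)*s₀) = m*(‖x‖ - γ*ν) := by rw [hs₀]
    nlinarith [mul_lt_mul_of_pos_left hval hαpos, hvi, e1, e2]
  have hUB2 : σ - γ*χ = 0 → ∀ s rr : ℝ, ϕ s = (rr : ℝ) →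
      ϕ ((‖x‖ - γ*ν) + s) ≤ (((‖x‖ - γ*ν)*ν + rr : ℝ) : EReal) := by
    intro hα0 s rr hϕs
    by_contra hcon
    push_neg at hcon
    obtain ⟨m, d, hmd, hval⟩ := fm hconv hlsc hbot hr₀ hcon
    have hms : m*s + d ≤ rr := by
      have := hmd s; rw [hϕs] at this; exact_mod_cast this
    have hconj := eConj_le_of_minorant hmd
    have hmemw : ((d : ℝ) : EReal) + eConj ϕ m ≤ 0 := by
      calc ((d : ℝ) : EReal) + eConj ϕ m ≤ (d : EReal) + ((-d : ℝ) : EReal) :=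
            add_le_add_right hconj _
        _ = ((d + -d : ℝ) : EReal) := by rw [← EReal.coe_add]
        _ ≤ 0 := by norm_num
    have hvi := hVI d m hmemw
    rw [hα0] at hvi
    nlinarith [hval, hms, hvi]
  -- norm of the second component of the candidate point
  have hβa : 1 - γ*ν/‖x‖ = (‖x‖ - γ*ν)/‖x‖ := by field_simp
  have hp2nonneg : 0 ≤ 1 - γ*ν/‖x‖ := by
    rw [hβa]
    exact div_nonneg (by linarith) ha.le
  have hp2norm : ‖(1 - γ * ν / ‖x‖) • x‖ = ‖x‖ - γ*ν := by
    rw [norm_smul, Real.norm_eq_abs, abs_of_nonneg hp2nonneg, hβa,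
      div_mul_cancel₀ _ ha.ne']
  -- upper bound on the recession term at the candidate point (degenerate case)
  have eRecUB : σ - γ*χ = 0 →
      eRec φv ((1 - γ * ν / ‖x‖) • x) ≤ (((‖x‖ - γ*ν)*ν : ℝ) : EReal) := by
    intro hα0
    rw [eRec]
    refine iSup_le ?_
    rintro ⟨y, hy⟩
    obtain ⟨rr, hrr⟩ : ∃ rr : ℝ, ϕ ‖y‖ = (rr : ℝ) := by
      cases h0 : ϕ ‖y‖ with
      | bot => exact absurd h0 (hbot _)
      | top => exact absurd h0 hy
      | coe r => exact ⟨r, rfl⟩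
    show ϕ ‖(1 - γ * ν / ‖x‖) • x + y‖ - ϕ ‖y‖ ≤ _
    rw [hrr]
    have h1 : ϕ ‖(1 - γ * ν / ‖x‖) • x + y‖ ≤ ϕ ((‖x‖ - γ*ν) + ‖y‖) := by
      apply phi_mono hconv heven hbot (norm_nonneg _)
      calc ‖(1 - γ * ν / ‖x‖) • x + y‖ ≤ ‖(1 - γ * ν / ‖x‖) • x‖ + ‖y‖ := norm_add_le _ _
        _ = (‖x‖ - γ*ν) + ‖y‖ := by rw [hp2norm]
    have h2 := hUB2 hα0 ‖y‖ rr hrr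
    have h3 : ϕ ‖(1 - γ * ν / ‖x‖) • x + y‖ ≤ (((‖x‖ - γ*ν)*ν + rr : ℝ) : EReal) :=
      h1.trans h2
    rw [EReal.sub_le_iff_le_add (by simp) (by simp)]
    calc ϕ ‖(1 - γ * ν / ‖x‖) • x + y‖ ≤ (((‖x‖ - γ*ν)*ν + rr : ℝ) : EReal) := h3
      _ = (((‖x‖ - γ*ν)*ν : ℝ) : EReal) + ((rr : ℝ) : EReal) := by rw [← EReal.coe_add]
  -- value of the perspective at the candidate point
  have hPV : (γ : EReal) * persp φv (σ - γ * χ, (1 - γ * ν / ‖x‖) • x) =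
      ((γ*((σ - γ*χ)*χ + (‖x‖ - γ*ν)*ν) : ℝ) : EReal) := by
    rcases eq_or_lt_of_le hα with hα0 | hαpos
    · have hα0' : σ - γ*χ = 0 := hα0.symm
      rw [hα0']
      rw [persp_zero]
      have hlow := eRecLB ((1 - γ * ν / ‖x‖) • x)
      rw [hp2norm] at hlow
      have hup := eRecUB hα0'
      have heq : eRec φv ((1 - γ * ν / ‖x‖) • x) = (((‖x‖ - γ*ν)*ν : ℝ) : EReal) := by
        refine le_antisymm hup ?_
        have : ν * (‖x‖ - γ*ν) = (‖x‖ - γ*ν)*ν := by ring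
        rw [← this]
        exact hlow
      rw [heq, ← EReal.coe_mul]
      exact_mod_cast (by ring :
        γ*((‖x‖ - γ*ν)*ν) = γ*(0*χ + (‖x‖ - γ*ν)*ν))
    · rw [persp_pos φv _ hαpos]
      set s₀ := (σ - γ*χ)⁻¹ * (‖x‖ - γ*ν) with hs₀def
      have hs₀ : (σ - γ*χ)*s₀ = ‖x‖ - γ*ν := by
        rw [hs₀def, ← mul_assoc, mul_inv_cancel₀ hαpos.ne', one_mul]
      have hnorm : ‖(σ - γ*χ)⁻¹ • ((1 - γ * ν / ‖x‖) • x)‖ = s₀ := by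
        rw [norm_smul, Real.norm_eq_abs, abs_of_pos (inv_pos.mpr hαpos), hp2norm, hs₀def]
      have hub := hUB1 s₀ hαpos hs₀
      have hlb : ((χ + ν*s₀ : ℝ) : EReal) ≤ ϕ s₀ := by
        refine le_trans ?_ (hFY s₀)
        exact_mod_cast (by nlinarith : χ + ν*s₀ ≤ s₀*ν - cs)
      have hϕeq : ϕ s₀ = ((χ + ν*s₀ : ℝ) : EReal) := le_antisymm hub hlb
      have hval : φv ((σ - γ*χ)⁻¹ • ((1 - γ * ν / ‖x‖) • x)) = ((χ + ν*s₀ : ℝ) : EReal) := by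
        show ϕ ‖(σ - γ*χ)⁻¹ • ((1 - γ * ν / ‖x‖) • x)‖ = _
        rw [hnorm, hϕeq]
      rw [hval, ← EReal.coe_mul, ← EReal.coe_mul]
      exact_mod_cast (by linear_combination γ*ν*hs₀ :
        γ*((σ - γ*χ)*(χ + ν*s₀)) = γ*((σ - γ*χ)*χ + (‖x‖ - γ*ν)*ν))
  -- the minimal value
  set VV := γ*((σ - γ*χ)*χ + (‖x‖ - γ*ν)*ν) + ((γ*χ)^2 + (γ*ν)^2)/2 with hVVdef
  -- quadratic identity
  have hQI : ∀ τ : ℝ, ∀ v : H,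
      γ*(τ*χ + ν/‖x‖*⟪v,x⟫) + ((σ - τ)^2 + ‖x - v‖^2)/2
        = ((τ - (σ - γ*χ))^2 + ‖v - (1 - γ * ν / ‖x‖) • x‖^2)/2 + VV := by
    intro τ v
    have e1 : ‖x - v‖^2 = ‖x‖^2 - 2*⟪v,x⟫ + ‖v‖^2 := by
      rw [norm_sub_sq_real, real_inner_comm x v]
    have e2 : ‖v - (1 - γ * ν / ‖x‖) • x‖^2
        = ‖v‖^2 - 2*((1 - γ*ν/‖x‖)*⟪v,x⟫) + (1 - γ*ν/‖x‖)^2*‖x‖^2 := by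
      rw [norm_sub_sq_real, real_inner_smul_right, norm_smul, Real.norm_eq_abs,
        mul_pow, sq_abs]
      try ring
    rw [e1, e2, hVVdef]
    field_simp
    try ring
  -- claim 1: VV is a lower bound for the prox objective
  have hC1 : ∀ y : ℝ × H, ((VV : ℝ) : EReal) ≤
      (γ : EReal) * persp φv y + ((((σ - y.1)^2 + ‖x - y.2‖^2)/2 : ℝ) : EReal) := by
    rintro ⟨τ, v⟩
    have h1 := hLB τ v
    have h2 : ((γ*(τ*χ + ν*‖v‖) + ((σ - τ)^2 + ‖x - v‖^2)/2 : ℝ) : EReal) ≤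
        (γ : EReal) * persp φv (τ, v) + ((((σ - τ)^2 + ‖x - v‖^2)/2 : ℝ) : EReal) := by
      rw [EReal.coe_add]
      exact add_le_add_left h1 _
    refine le_trans ?_ h2
    have hip : ⟪v, x⟫ ≤ ‖v‖*‖x‖ := real_inner_le_norm v x
    have hA : ν/‖x‖*⟪v,x⟫ ≤ ν*‖v‖ := by
      have e3 : ν/‖x‖*(‖v‖*‖x‖) = ν*‖v‖ := by
        field_simp
      nlinarith [mul_le_mul_of_nonneg_left hip (div_nonneg hν ha.le)]
    have hB : γ*(τ*χ + ν/‖x‖*⟪v,x⟫) ≤ γ*(τ*χ + ν*‖v‖) :=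
      mul_le_mul_of_nonneg_left (by linarith) hγ.le
    have hQ := hQI τ v
    have hnn : (0:ℝ) ≤ ‖v - (1 - γ * ν / ‖x‖) • x‖^2 := sq_nonneg _
    have hQ2 := hQI τ v
    exact_mod_cast (by linarith [sq_nonneg (τ - (σ - γ*χ))] :
      VV ≤ γ*(τ*χ + ν*‖v‖) + ((σ - τ)^2 + ‖x - v‖^2)/2)
  -- claim 2: the candidate point attains VV
  have hC2 : (γ : EReal) * persp φv (σ - γ * χ, (1 - γ * ν / ‖x‖) • x) +
      ((((σ - (σ - γ * χ))^2 + ‖x - (1 - γ * ν / ‖x‖) • x‖^2)/2 : ℝ) : EReal)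
      = ((VV : ℝ) : EReal) := by
    rw [hPV]
    have hxs : x - (1 - γ * ν / ‖x‖) • x = (γ*ν/‖x‖) • x := by
      nth_rewrite 1 [show x = (1:ℝ) • x from (one_smul ℝ x).symm]
      rw [← sub_smul]
      norm_num
    have hn : ‖x - (1 - γ * ν / ‖x‖) • x‖ = γ*ν := by
      rw [hxs, norm_smul, Real.norm_eq_abs,
        abs_of_nonneg (div_nonneg (mul_nonneg hγ.le hν) ha.le),
        div_mul_cancel₀ _ ha.ne']
    rw [hn, ← EReal.coe_add]
    exact_mod_cast (by rw [hVVdef]; ring :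
      γ*((σ - γ*χ)*χ + (‖x‖ - γ*ν)*ν) + ((σ - (σ - γ*χ))^2 + (γ*ν)^2)/2 = VV)
  -- conclusion
  intro p
  constructor
  · intro hP
    have h1 : (γ : EReal) * persp φv p +
        ((((σ - p.1)^2 + ‖x - p.2‖^2)/2 : ℝ) : EReal) ≤ ((VV : ℝ) : EReal) := by
      have := hP (σ - γ * χ, (1 - γ * ν / ‖x‖) • x)
      exact le_trans this (le_of_eq hC2)
    have h2 := hC1 p
    have heq : (γ : EReal) * persp φv p +
        ((((σ - p.1)^2 + ‖x - p.2‖^2)/2 : ℝ) : EReal) = ((VV : ℝ) : EReal) :=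
      le_antisymm h1 h2
    cases hval : ((γ : EReal) * persp φv p) with
    | top =>
      rw [hval, EReal.top_add_coe] at heq
      exact absurd heq (by simp)
    | bot =>
      rw [hval, EReal.bot_add] at heq
      exact absurd heq (by simp)
    | coe w =>
      rw [hval, ← EReal.coe_add] at heq
      have hw : w + ((σ - p.1)^2 + ‖x - p.2‖^2)/2 = VV := by exact_mod_cast heq
      have hlb := hLB p.1 p.2
      rw [Prod.mk.eta, hval] at hlb
      have hlbr : γ*(p.1*χ + ν*‖p.2‖) ≤ w := by exact_mod_cast hlb
      have hip : ⟪p.2, x⟫ ≤ ‖p.2‖*‖x‖ := real_inner_le_norm p.2 x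
      have hA : ν/‖x‖*⟪p.2,x⟫ ≤ ν*‖p.2‖ := by
        have e3 : ν/‖x‖*(‖p.2‖*‖x‖) = ν*‖p.2‖ := by field_simp
        nlinarith [mul_le_mul_of_nonneg_left hip (div_nonneg hν ha.le)]
      have hB : γ*(p.1*χ + ν/‖x‖*⟪p.2,x⟫) ≤ γ*(p.1*χ + ν*‖p.2‖) :=
        mul_le_mul_of_nonneg_left (by linarith) hγ.le
      have hQ := hQI p.1 p.2
      have hsq : (p.1 - (σ - γ*χ))^2 + ‖p.2 - (1 - γ * ν / ‖x‖) • x‖^2 ≤ 0 := by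
        linarith [hw, hlbr, hB, hQ]
      have hnn2 : (0:ℝ) ≤ ‖p.2 - (1 - γ * ν / ‖x‖) • x‖^2 := sq_nonneg _
      have hp1 : p.1 = σ - γ * χ := by
        have e : (p.1 - (σ - γ*χ))^2 = 0 :=
          le_antisymm (by nlinarith [hnn2]) (sq_nonneg _)
        have h0 : p.1 - (σ - γ*χ) = 0 := by
          exact pow_eq_zero_iff two_ne_zero |>.mp e
        linarith
      have hp2 : p.2 = (1 - γ * ν / ‖x‖) • x := by
        have e : ‖p.2 - (1 - γ * ν / ‖x‖) • x‖^2 = 0 :=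
          le_antisymm (by nlinarith [sq_nonneg (p.1 - (σ - γ*χ))]) (sq_nonneg _)
        have h0 : ‖p.2 - (1 - γ * ν / ‖x‖) • x‖ = 0 := by
          nlinarith [norm_nonneg (p.2 - (1 - γ * ν / ‖x‖) • x), e]
        have := norm_eq_zero.mp h0
        exact sub_eq_zero.mp this
      exact Prod.ext hp1 hp2
  · rintro rfl
    intro y
    exact le_trans (le_of_eq hC2) (hC1 y)
end
end

section
/- Let H be a real Hilbert space, let α > 0, ρ > 0, q > 1, set q* = q/(q−1), and define φ : H → ℝ by φ(x) = α − ρ^{q*}/q* + ρ‖x‖ if ‖x‖ > ρ^{q*/q}, and φ(x) = α + ‖x‖^q/q if ‖x‖ ≤ ρ^{q*/q}. Then for all σ ∈ ℝ and x ∈ H, the perspective satisfies: φ̃(σ,x) = (α − ρ^{q*}/q*)σ + ρ‖x‖ if σ > 0 and ‖x‖ > σρ^{q*/q}; φ̃(σ,x) = ασ + ‖x‖^q/(qσ^{q−1}) if σ > 0 and ‖x‖ ≤ σρ^{q*/q}; φ̃(0,x) = ρ‖x‖; and φ̃(σ,x) = +∞ if σ < 0. -/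
noncomputable section

/-- The perspective of a (finite-valued) function `φ : H → ℝ`: it equals
`σ φ(x/σ)` for `σ > 0`, the recession function
`(rec φ)(x) = sup_y (φ(x+y) − φ(y))` for `σ = 0`, and `+∞` for `σ < 0`. -/
def perspR {H : Type*} [NormedAddCommGroup H] [NormedSpace ℝ H]
    (φ : H → ℝ) (p : ℝ × H) : EReal :=
  if 0 < p.1 then ((p.1 * φ (p.1⁻¹ • p.2) : ℝ) : EReal)
  else if p.1 = 0 then ⨆ y : H, ((φ (p.2 + y) - φ y : ℝ) : EReal)
  else ⊤

/-- Bernoulli-type estimate: `b^q - a^q ≤ q b^{q-1} (b - a)` for `0 ≤ a ≤ b`, `1 < q`. -/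
lemma bern_aux {a b q : ℝ} (hq : 1 < q) (ha : 0 ≤ a) (hab : a ≤ b) :
    b ^ q - a ^ q ≤ q * b ^ (q - 1) * (b - a) := by
  have hb : 0 ≤ b := ha.trans hab
  rcases eq_or_lt_of_le hb with hb0 | hb0
  · have ha0 : a = 0 := le_antisymm (hab.trans hb0.symm.le) ha
    simp [← hb0, ha0]
  · have hs : (-1 : ℝ) ≤ a / b - 1 := by
      have : 0 ≤ a / b := div_nonneg ha hb
      linarith
    have key := one_add_mul_self_le_rpow_one_add hs hq.le
    rw [add_sub_cancel] at key
    have hdiv : (a / b) ^ q = a ^ q / b ^ q := Real.div_rpow ha hb q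
    rw [hdiv] at key
    have hbq : 0 < b ^ q := Real.rpow_pos_of_pos hb0 q
    have key2 : (1 + q * (a / b - 1)) * b ^ q ≤ a ^ q := by
      calc (1 + q * (a / b - 1)) * b ^ q ≤ a ^ q / b ^ q * b ^ q :=
            mul_le_mul_of_nonneg_right key hbq.le
        _ = a ^ q := div_mul_cancel₀ _ hbq.ne'
    have hbq1 : b ^ (q - 1) * b = b ^ q := by
      have h := Real.rpow_add hb0 (q - 1) 1
      rw [Real.rpow_one] at h
      rw [← h]
      congr 1
      ring
    have hexp : q * (a / b - 1) * b ^ q = q * b ^ (q - 1) * (a - b) := by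
      have h1 : (a / b - 1) * b = a - b := by field_simp
      calc q * (a / b - 1) * b ^ q = q * (b ^ (q - 1) * ((a / b - 1) * b)) := by
            rw [← hbq1]; ring
        _ = q * b ^ (q - 1) * (a - b) := by rw [h1]; ring
    nlinarith [key2, hexp]

set_option maxHeartbeats 1000000 in
/-- The perspective of the generalized Huber function. -/
theorem generalized_huber_perspective
    {H : Type*} [NormedAddCommGroup H] [InnerProductSpace ℝ H] [CompleteSpace H]
    (α ρ q : ℝ) (hα : 0 < α) (hρ : 0 < ρ) (hq : 1 < q)
    (qs : ℝ) (hqs : qs = q / (q - 1))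
    (φ : H → ℝ)
    (hφ : ∀ v : H, φ v =
      if ‖v‖ ≤ ρ ^ (qs / q) then α + ‖v‖ ^ q / q
      else α - ρ ^ qs / qs + ρ * ‖v‖) :
    ∀ σ : ℝ, ∀ x : H,
      (0 < σ → σ * ρ ^ (qs / q) < ‖x‖ →
        perspR φ (σ, x) = (((α - ρ ^ qs / qs) * σ + ρ * ‖x‖ : ℝ) : EReal)) ∧
      (0 < σ → ‖x‖ ≤ σ * ρ ^ (qs / q) →
        perspR φ (σ, x) = ((α * σ + ‖x‖ ^ q / (q * σ ^ (q - 1)) : ℝ) : EReal)) ∧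
      (σ = 0 → perspR φ (σ, x) = ((ρ * ‖x‖ : ℝ) : EReal)) ∧
      (σ < 0 → perspR φ (σ, x) = (⊤ : EReal)) := by
  have hq0 : (0 : ℝ) < q := lt_trans zero_lt_one hq
  have hq1 : (0 : ℝ) < q - 1 := sub_pos.2 hq
  have hqs0 : (0 : ℝ) < qs := by rw [hqs]; positivity
  have hqne : q ≠ 0 := hq0.ne'
  have hqsne : qs ≠ 0 := hqs0.ne'
  have hconj : q.HolderConjugate qs := (Real.holderConjugate_iff_eq_conjExponent hq).2 hqs
  set r := ρ ^ (qs / q) with hr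
  have hr0 : 0 < r := Real.rpow_pos_of_pos hρ _
  have hrq1 : r ^ (q - 1) = ρ := by
    rw [hr, ← Real.rpow_mul hρ.le]
    have h1 : qs / q * (q - 1) = 1 := by rw [hqs]; field_simp
    rw [h1, Real.rpow_one]
  have hrq : r ^ q = ρ ^ qs := by
    rw [hr, ← Real.rpow_mul hρ.le]
    congr 1
    field_simp
  have hρr : ρ * r = ρ ^ qs := by
    have h1 : r ^ (q - 1) * r ^ (1 : ℝ) = r ^ q := by
      rw [← Real.rpow_add hr0]; congr 1; ring
    rw [Real.rpow_one] at h1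
    calc ρ * r = r ^ (q - 1) * r := by rw [hrq1]
      _ = r ^ q := h1
      _ = ρ ^ qs := hrq
  have hsum : ρ ^ qs / q + ρ ^ qs / qs = ρ ^ qs := by
    have h := hconj.inv_add_inv_eq_one
    have h2 : ρ ^ qs * q⁻¹ + ρ ^ qs * qs⁻¹ = ρ ^ qs * (q⁻¹ + qs⁻¹) := by ring
    rw [div_eq_mul_inv, div_eq_mul_inv, h2, h, mul_one]
  set G : ℝ → ℝ := fun t => if t ≤ r then α + t ^ q / q else α - ρ ^ qs / qs + ρ * t with hG
  have hφG : ∀ v : H, φ v = G ‖v‖ := fun v => hφ v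
  have young : ∀ t : ℝ, 0 ≤ t → ρ * t ≤ t ^ q / q + ρ ^ qs / qs := by
    intro t ht
    have := Real.young_inequality_of_nonneg ht hρ.le hconj
    linarith
  have lip : ∀ a b : ℝ, 0 ≤ a → a ≤ b → G b - G a ≤ ρ * (b - a) := by
    intro a b ha hab
    have hb : 0 ≤ b := ha.trans hab
    by_cases hbr : b ≤ r
    · have har : a ≤ r := hab.trans hbr
      simp only [hG, if_pos hbr, if_pos har]
      have h1 : b ^ q - a ^ q ≤ q * b ^ (q - 1) * (b - a) := bern_aux hq ha hab
      have h2 : b ^ (q - 1) ≤ r ^ (q - 1) := Real.rpow_le_rpow hb hbr hq1.le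
      rw [hrq1] at h2
      have hba : 0 ≤ b - a := sub_nonneg.2 hab
      have h3 : q * b ^ (q - 1) * (b - a) ≤ q * ρ * (b - a) := by
        have h6 := mul_le_mul_of_nonneg_right h2 hba
        nlinarith
      have h4 : b ^ q - a ^ q ≤ q * ρ * (b - a) := h1.trans h3
      have h5 : (α + b ^ q / q) - (α + a ^ q / q) = (b ^ q - a ^ q) / q := by ring
      rw [h5, div_le_iff₀ hq0]
      nlinarith
    · by_cases har : a ≤ r
      · simp only [hG, if_neg hbr, if_pos har]
        have := young a ha
        linarith
      · simp only [hG, if_neg hbr, if_neg har]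
        nlinarith
  have mono : ∀ a b : ℝ, 0 ≤ a → a ≤ b → G a ≤ G b := by
    intro a b ha hab
    have hb : 0 ≤ b := ha.trans hab
    by_cases hbr : b ≤ r
    · have har : a ≤ r := hab.trans hbr
      simp only [hG, if_pos hbr, if_pos har]
      have h1 : a ^ q ≤ b ^ q := Real.rpow_le_rpow ha hab hq0.le
      have h2 : a ^ q / q ≤ b ^ q / q := by gcongr
      linarith
    · by_cases har : a ≤ r
      · simp only [hG, if_pos har, if_neg hbr]
        have h1 : a ^ q ≤ r ^ q := Real.rpow_le_rpow ha har hq0.le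
        rw [hrq] at h1
        have h2 : a ^ q / q ≤ ρ ^ qs / q := by gcongr
        have h3 : r ≤ b := le_of_not_ge hbr
        nlinarith
      · simp only [hG, if_neg hbr, if_neg har]
        nlinarith
  intro σ x
  refine ⟨?_, ?_, ?_, ?_⟩
  · -- σ > 0, affine branch
    intro hσ hx
    have hσne : σ ≠ 0 := hσ.ne'
    have hσi : ‖(σ⁻¹ : ℝ) • x‖ = ‖x‖ / σ := by
      rw [norm_smul, Real.norm_eq_abs, abs_inv, abs_of_pos hσ]
      ring
    have hcond : ¬ ‖(σ⁻¹ : ℝ) • x‖ ≤ r := by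
      rw [hσi, not_le, lt_div_iff₀ hσ]
      nlinarith
    simp only [perspR, if_pos hσ]
    rw [hφ, if_neg hcond, hσi]
    norm_cast
    field_simp
  · -- σ > 0, power branch
    intro hσ hx
    have hσne : σ ≠ 0 := hσ.ne'
    have hσi : ‖(σ⁻¹ : ℝ) • x‖ = ‖x‖ / σ := by
      rw [norm_smul, Real.norm_eq_abs, abs_inv, abs_of_pos hσ]
      ring
    have hcond : ‖(σ⁻¹ : ℝ) • x‖ ≤ r := by
      rw [hσi, div_le_iff₀ hσ]
      nlinarith
    simp only [perspR, if_pos hσ]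
    rw [hφ, if_pos hcond, hσi]
    norm_cast
    have hdr : (‖x‖ / σ) ^ q = ‖x‖ ^ q / σ ^ q := Real.div_rpow (norm_nonneg x) hσ.le q
    have hσq : σ ^ q = σ ^ (q - 1) * σ := by
      have h := Real.rpow_add hσ (q - 1) 1
      rw [Real.rpow_one] at h
      rw [← h]
      congr 1
      ring
    have hσq1 : (0:ℝ) < σ ^ (q - 1) := Real.rpow_pos_of_pos hσ _
    rw [hdr, hσq]
    field_simp
  · -- σ = 0, recession function
    intro hσ0
    subst hσ0
    simp only [perspR, if_neg (lt_irrefl (0:ℝ)), if_pos rfl]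
    apply le_antisymm
    · apply iSup_le
      intro y
      rw [EReal.coe_le_coe_iff]
      rw [hφG, hφG]
      rcases le_total ‖x + y‖ ‖y‖ with hle | hle
      · have h1 : G ‖x + y‖ ≤ G ‖y‖ := mono _ _ (norm_nonneg _) hle
        have : 0 ≤ ρ * ‖x‖ := by positivity
        linarith
      · have h1 : G ‖x + y‖ - G ‖y‖ ≤ ρ * (‖x + y‖ - ‖y‖) :=
          lip _ _ (norm_nonneg _) hle
        have h2 : ‖x + y‖ - ‖y‖ ≤ ‖x‖ := by
          have := norm_add_le x y
          linarith
        nlinarith [hρ.le]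
    · by_cases hx0 : x = 0
      · subst hx0
        refine le_iSup_of_le 0 ?_
        rw [EReal.coe_le_coe_iff]
        simp
      · have hx : 0 < ‖x‖ := norm_pos_iff.2 hx0
        obtain ⟨t, ht0, htr⟩ : ∃ t : ℝ, 0 < t ∧ r < t * ‖x‖ :=
          ⟨(r + 1) / ‖x‖, by positivity, by rw [div_mul_cancel₀ _ hx.ne']; linarith⟩
        have hny : ‖t • x‖ = t * ‖x‖ := by
          rw [norm_smul, Real.norm_eq_abs, abs_of_pos ht0]
        have hnxy : ‖x + t • x‖ = (1 + t) * ‖x‖ := by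
          rw [show x + t • x = (1 + t) • x by rw [add_smul, one_smul], norm_smul,
            Real.norm_eq_abs, abs_of_pos (by linarith : (0:ℝ) < 1 + t)]
        have hc2 : ¬ ‖t • x‖ ≤ r := by rw [hny]; push_neg; linarith
        have hc1 : ¬ ‖x + t • x‖ ≤ r := by rw [hnxy]; push_neg; nlinarith
        refine le_iSup_of_le (t • x) ?_
        rw [EReal.coe_le_coe_iff]
        rw [hφ, hφ, if_neg hc1, if_neg hc2, hnxy, hny]
        ring_nf
        nlinarith
  · -- σ < 0
    intro hσ
    simp only [perspR, if_neg (not_lt.2 hσ.le), if_neg hσ.ne]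
end
end

section
/- Let H be a real Hilbert space, let α > 0, γ > 0, ρ > 0, q > 1, set q* = q/(q−1), and let φ be the generalized Huber function φ(x) = α − ρ^{q*}/q* + ρ‖x‖ if ‖x‖ > ρ^{q*/q}, φ(x) = α + ‖x‖^q/q if ‖x‖ ≤ ρ^{q*/q}. Let σ ∈ ℝ and x ∈ H. If ‖x‖ ≤ γρ and ‖x‖^{q*} ≤ γ^{q*} q* (α − σ/γ), then prox_{γφ̃}(σ,x) = (0,0). -/
noncomputable section

set_option maxHeartbeats 1000000 in
/-- Prox of the perspective of the generalized Huber function: zero case. -/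
theorem prox_generalized_huber_zero
    {H : Type*} [NormedAddCommGroup H] [InnerProductSpace ℝ H] [CompleteSpace H]
    (α γ ρ q : ℝ) (hα : 0 < α) (hγ : 0 < γ) (hρ : 0 < ρ) (hq : 1 < q)
    (qs : ℝ) (hqs : qs = q / (q - 1))
    (φ : H → ℝ)
    (hφ : ∀ v : H, φ v =
      if ‖v‖ ≤ ρ ^ (qs / q) then α + ‖v‖ ^ q / q
      else α - ρ ^ qs / qs + ρ * ‖v‖)
    (σ : ℝ) (x : H)
    (h1 : ‖x‖ ≤ γ * ρ)
    (h2 : ‖x‖ ^ qs ≤ γ ^ qs * qs * (α - σ / γ)) :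
    ∀ p : ℝ × H,
      IsProx (fun w => (γ : EReal) * perspR φ w) (σ, x) p ↔ p = (0, 0) := by
  haveI : Nonempty H := ⟨0⟩
  have hq0 : (0 : ℝ) < q := lt_trans one_pos hq
  have hq1 : q - 1 ≠ 0 := by linarith
  have hconj : q.HolderConjugate qs := hqs ▸ Real.HolderConjugate.conjExponent hq
  have hqs1 : 1 < qs := hconj.symm.lt
  have hqs0 : (0 : ℝ) < qs := hconj.symm.pos
  have hr_eq : qs / q = qs - 1 := by
    rw [hqs]; field_simp; ring
  set r : ℝ := ρ ^ (qs / q) with hr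
  have hr_pos : 0 < r := Real.rpow_pos_of_pos hρ _
  set b : ℝ := ‖x‖ / γ with hbdef
  have hb0 : 0 ≤ b := div_nonneg (norm_nonneg x) hγ.le
  have hbρ : b ≤ ρ := by
    rw [hbdef, div_le_iff₀ hγ]; linarith [h1]
  have hγqs : (0 : ℝ) < γ ^ qs := Real.rpow_pos_of_pos hγ qs
  -- bound coming from h2
  have hbqs : γ * (b ^ qs / qs) ≤ γ * α - σ := by
    have hb' : b ^ qs = ‖x‖ ^ qs / γ ^ qs := Real.div_rpow (norm_nonneg x) hγ.le qs
    have h2' : b ^ qs / qs ≤ α - σ / γ := by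
      rw [hb', div_div, div_le_iff₀ (by positivity)]
      linarith [h2]
    have := mul_le_mul_of_nonneg_left h2' hγ.le
    calc γ * (b ^ qs / qs) ≤ γ * (α - σ / γ) := this
      _ = γ * α - σ := by field_simp
  -- pointwise Young-type inequality
  have keyB : ∀ t : ℝ, 0 ≤ t →
      b * t ≤ (if t ≤ r then t ^ q / q else ρ * t - ρ ^ qs / qs) + b ^ qs / qs := by
    intro t ht
    by_cases htr : t ≤ r
    · rw [if_pos htr]
      have := Real.young_inequality_of_nonneg ht hb0 hconj
      linarith [this]
    · rw [if_neg htr]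
      push_neg at htr
      -- Bernoulli: b^qs ≥ ρ^qs + qs * (ρ^(qs-1) * b - ρ^qs)
      have hs : (-1 : ℝ) ≤ b / ρ - 1 := by
        have : 0 ≤ b / ρ := div_nonneg hb0 hρ.le
        linarith
      have hbern := one_add_mul_self_le_rpow_one_add hs hqs1.le
      have h1b : (1 : ℝ) + (b / ρ - 1) = b / ρ := by ring
      rw [h1b] at hbern
      have hdiv : (b / ρ) ^ qs = b ^ qs / ρ ^ qs := Real.div_rpow hb0 hρ.le qs
      rw [hdiv] at hbern
      -- multiply by ρ^qs
      have hρqs : (0 : ℝ) < ρ ^ qs := Real.rpow_pos_of_pos hρ qs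
      have hbern' : ρ ^ qs + qs * (ρ ^ qs * (b / ρ) - ρ ^ qs) ≤ b ^ qs := by
        have := mul_le_mul_of_nonneg_left hbern hρqs.le
        calc ρ ^ qs + qs * (ρ ^ qs * (b / ρ) - ρ ^ qs)
            = ρ ^ qs * (1 + qs * (b / ρ - 1)) := by ring
          _ ≤ ρ ^ qs * (b ^ qs / ρ ^ qs) := this
          _ = b ^ qs := by field_simp
      have hB : ρ ^ qs * (b / ρ) = r * b := by
        rw [hr, hr_eq]
        rw [show qs - 1 = qs + (-1) by ring, Real.rpow_add hρ, Real.rpow_neg_one]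
        field_simp
      rw [hB] at hbern'
      -- (ρ - b) * t ≥ (ρ - b) * r  and conclude
      have hmul : (ρ - b) * r ≤ (ρ - b) * t :=
        mul_le_mul_of_nonneg_left htr.le (by linarith)
      have hrρ : r * ρ = ρ ^ qs := by
        rw [hr, hr_eq, show qs - 1 = qs + (-1) by ring, Real.rpow_add hρ,
          Real.rpow_neg_one]
        field_simp
      have hd : (ρ ^ qs - b ^ qs) / qs = ρ ^ qs / qs - b ^ qs / qs := sub_div _ _ _
      have hkey : (ρ ^ qs - b ^ qs) / qs ≤ (ρ - b) * t := by
        rw [div_le_iff₀ hqs0]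
        nlinarith [hbern', mul_le_mul_of_nonneg_left hmul hqs0.le, hrρ]
      linarith
  -- key inequality: σ + ‖x‖ t ≤ γ φ(t)
  have keyA : ∀ t : ℝ, 0 ≤ t →
      σ + ‖x‖ * t ≤ γ * (if t ≤ r then α + t ^ q / q else α - ρ ^ qs / qs + ρ * t) := by
    intro t ht
    have hB := keyB t ht
    have hγb : γ * b = ‖x‖ := by rw [hbdef]; field_simp
    by_cases htr : t ≤ r
    · rw [if_pos htr] at hB ⊢
      have := mul_le_mul_of_nonneg_left hB hγ.le
      nlinarith [hbqs, this, hγb]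
    · rw [if_neg htr] at hB ⊢
      have := mul_le_mul_of_nonneg_left hB hγ.le
      nlinarith [hbqs, this, hγb]
  -- value at (0,0)
  have hpersp00 : perspR φ ((0 : ℝ), (0 : H)) = 0 := by
    simp only [perspR, lt_irrefl, if_false, if_pos rfl, zero_add, sub_self,
      EReal.coe_zero, iSup_const, if_true]
  have hval00 : (γ : EReal) * perspR φ ((0 : ℝ), (0 : H)) +
      ((((σ - (0:ℝ)) ^ 2 + ‖x - (0:H)‖ ^ 2) / 2 : ℝ) : EReal)
      = (((σ ^ 2 + ‖x‖ ^ 2) / 2 : ℝ) : EReal) := by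
    rw [hpersp00, mul_zero, zero_add]
    norm_num
  -- main strict inequality
  have main : ∀ w : ℝ × H, w ≠ (0, 0) →
      (((σ ^ 2 + ‖x‖ ^ 2) / 2 : ℝ) : EReal) <
        (γ : EReal) * perspR φ w +
          ((((σ - w.1) ^ 2 + ‖x - w.2‖ ^ 2) / 2 : ℝ) : EReal) := by
    rintro ⟨τ, u⟩ hw
    rcases lt_trichotomy τ 0 with hτ | hτ | hτ
    · -- τ < 0 : value is ⊤
      have : perspR φ (τ, u) = ⊤ := by
        simp only [perspR]
        rw [if_neg (by exact not_lt.2 hτ.le), if_neg (by exact ne_of_lt hτ)]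
      rw [this, EReal.coe_mul_top_of_pos hγ, EReal.top_add_coe]
      exact EReal.coe_lt_top _
    · -- τ = 0, u ≠ 0
      subst hτ
      have hu : u ≠ 0 := by
        intro h; exact hw (by simp [h])
      have hu0 : 0 < ‖u‖ := norm_pos_iff.2 hu
      have hpersp : perspR φ ((0 : ℝ), u) = ⨆ y : H, ((φ (u + y) - φ y : ℝ) : EReal) := by
        simp only [perspR, lt_irrefl, if_false, if_pos rfl, if_true]
      -- lower bound for the sup: take y = t • u with t = r/‖u‖
      set t : ℝ := r / ‖u‖ + 1 with htdef
      have ht0 : 0 < t := by positivity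
      have hnorm1 : ‖t • u‖ = r + ‖u‖ := by
        rw [norm_smul, Real.norm_eq_abs, abs_of_pos ht0, htdef]
        field_simp
      have hnorm2 : ‖u + t • u‖ = r + 2 * ‖u‖ := by
        have h' : u + t • u = (1 + t) • u := by module
        rw [h', norm_smul, Real.norm_eq_abs, abs_of_pos (by linarith)]
        rw [htdef]
        field_simp
        ring
      have hφ1 : φ (t • u) = α - ρ ^ qs / qs + ρ * (r + ‖u‖) := by
        rw [hφ, hnorm1, if_neg (by intro hc; linarith)]
      have hφ2 : φ (u + t • u) = α - ρ ^ qs / qs + ρ * (r + 2 * ‖u‖) := by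
        rw [hφ, hnorm2, if_neg (by intro hc; linarith)]
      have hdiff : (φ (u + t • u) - φ (t • u) : ℝ) = ρ * ‖u‖ := by
        rw [hφ1, hφ2]; ring
      have hsup : ((ρ * ‖u‖ : ℝ) : EReal) ≤ ⨆ y : H, ((φ (u + y) - φ y : ℝ) : EReal) := by
        refine le_iSup_of_le (t • u) ?_
        rw [hdiff]
      have hmono : ((γ * (ρ * ‖u‖) : ℝ) : EReal) ≤ (γ : EReal) * perspR φ ((0 : ℝ), u) := by
        rw [hpersp, EReal.coe_mul]
        exact mul_le_mul_of_nonneg_left hsup (by exact_mod_cast hγ.le)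
      have hreal : (σ ^ 2 + ‖x‖ ^ 2) / 2 <
          γ * (ρ * ‖u‖) + ((σ - 0) ^ 2 + ‖x - u‖ ^ 2) / 2 := by
        have hns : ‖x - u‖ ^ 2 = ‖x‖ ^ 2 - 2 * inner ℝ x u + ‖u‖ ^ 2 :=
          norm_sub_sq_real x u
        have hin : (inner ℝ x u : ℝ) ≤ ‖x‖ * ‖u‖ := real_inner_le_norm x u
        nlinarith [mul_le_mul_of_nonneg_right h1 hu0.le, hin, hu0, mul_pos hu0 hu0]
      calc (((σ ^ 2 + ‖x‖ ^ 2) / 2 : ℝ) : EReal)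
          < ((γ * (ρ * ‖u‖) + ((σ - 0) ^ 2 + ‖x - u‖ ^ 2) / 2 : ℝ) : EReal) := by
            exact_mod_cast hreal
        _ = ((γ * (ρ * ‖u‖) : ℝ) : EReal) +
            ((((σ - 0) ^ 2 + ‖x - u‖ ^ 2) / 2 : ℝ) : EReal) := by
            rw [← EReal.coe_add]
        _ ≤ (γ : EReal) * perspR φ ((0 : ℝ), u) +
            ((((σ - 0) ^ 2 + ‖x - u‖ ^ 2) / 2 : ℝ) : EReal) :=
            add_le_add_left hmono _
    · -- τ > 0
      have hpersp : perspR φ (τ, u) = ((τ * φ (τ⁻¹ • u) : ℝ) : EReal) := by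
        simp only [perspR, if_pos hτ]
      set v : H := τ⁻¹ • u with hvdef
      have hnu : ‖u‖ = τ * ‖v‖ := by
        rw [hvdef, norm_smul, Real.norm_eq_abs, abs_of_pos (inv_pos.2 hτ)]
        field_simp
      have hA := keyA ‖v‖ (norm_nonneg v)
      rw [← hφ v] at hA
      have hA' : τ * (σ + ‖x‖ * ‖v‖) ≤ τ * (γ * φ v) :=
        mul_le_mul_of_nonneg_left hA hτ.le
      have hA'' : σ * τ + ‖x‖ * ‖u‖ ≤ γ * (τ * φ v) := by
        rw [hnu]; nlinarith [hA']
      have hreal : (σ ^ 2 + ‖x‖ ^ 2) / 2 <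
          γ * (τ * φ v) + ((σ - τ) ^ 2 + ‖x - u‖ ^ 2) / 2 := by
        have hns : ‖x - u‖ ^ 2 = ‖x‖ ^ 2 - 2 * inner ℝ x u + ‖u‖ ^ 2 :=
          norm_sub_sq_real x u
        have hin : (inner ℝ x u : ℝ) ≤ ‖x‖ * ‖u‖ := real_inner_le_norm x u
        nlinarith [hA'', hin, hns, mul_pos hτ hτ, sq_nonneg ‖u‖]
      rw [hpersp, ← EReal.coe_mul, ← EReal.coe_add, EReal.coe_lt_coe_iff]
      exact hreal
  -- conclude
  intro p
  constructor
  · intro hp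
    by_contra hne
    have h00 := hp ((0 : ℝ), (0 : H))
    simp only at h00
    rw [hval00] at h00
    exact absurd h00 (not_le.2 (main p hne))
  · rintro rfl y
    simp only
    rw [hval00]
    rcases eq_or_ne y ((0 : ℝ), (0 : H)) with rfl | hy
    · rw [hval00]
    · exact (main y hy).le
end
end

section
/- Let H be a real Hilbert space, let α > 0, γ > 0, ρ > 0, q > 1, set q* = q/(q−1), and let φ be the generalized Huber function φ(x) = α − ρ^{q*}/q* + ρ‖x‖ if ‖x‖ > ρ^{q*/q}, φ(x) = α + ‖x‖^q/q if ‖x‖ ≤ ρ^{q*/q}. Let σ ∈ ℝ and x ∈ H. If σ ≤ γ(α − ρ^{q*}/q*) and ‖x‖ > γρ, then prox_{γφ̃}(σ,x) = (0, (1 − γρ/‖x‖) x). -/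
noncomputable section

lemma qs_facts {q qs : ℝ} (hq : 1 < q) (hqs : qs = q / (q-1)) :
    1 < qs ∧ 1/q + 1/qs = 1 ∧ qs/q * (q-1) = 1 ∧ 1 + qs/q = qs := by
  subst hqs
  have h1 : (0:ℝ) < q - 1 := by linarith
  have h0 : (0:ℝ) < q := by linarith
  refine ⟨by rw [lt_div_iff₀ h1]; linarith, by field_simp; ring, by field_simp, ?_⟩
  field_simp; ring

lemma r_facts {q qs ρ : ℝ} (hq : 1 < q) (hρ : 0 < ρ) (hqs : qs = q / (q-1)) :
    (ρ ^ (qs/q)) ^ (q-1) = ρ ∧ (ρ ^ (qs/q)) ^ q = ρ ^ qs ∧ ρ * ρ ^ (qs/q) = ρ ^ qs := by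
  obtain ⟨h1, h2, h3, h4⟩ := qs_facts hq hqs
  have h0 : (0:ℝ) < q := by linarith
  refine ⟨?_, ?_, ?_⟩
  · rw [← Real.rpow_mul hρ.le, h3, Real.rpow_one]
  · rw [← Real.rpow_mul hρ.le]
    congr 1
    field_simp
  · nth_rewrite 1 [← Real.rpow_one ρ]
    rw [← Real.rpow_add hρ, h4]

section G
variable {q qs ρ α : ℝ}

/-- radial profile of the Huber function -/
noncomputable def gH (q qs ρ α : ℝ) (s : ℝ) : ℝ :=
  if s ≤ ρ ^ (qs/q) then α + s ^ q / q else (α - ρ ^ qs / qs) + ρ * s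

lemma gH_boundary (hq : 1 < q) (hρ : 0 < ρ) (hqs : qs = q / (q-1)) :
    α + (ρ ^ (qs/q)) ^ q / q = (α - ρ ^ qs / qs) + ρ * ρ ^ (qs/q) := by
  obtain ⟨h1, h2, h3, h4⟩ := qs_facts hq hqs
  obtain ⟨r1, r2, r3⟩ := r_facts (ρ := ρ) hq hρ hqs
  rw [r2, r3]
  have hqne : q ≠ 0 := by positivity
  have hqsne : qs ≠ 0 := by positivity
  field_simp at h2 ⊢
  linear_combination (ρ ^ qs) * h2

lemma gH_mono (hq : 1 < q) (hρ : 0 < ρ) (hqs : qs = q / (q-1))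
    {s₁ s₂ : ℝ} (h0 : 0 ≤ s₁) (h12 : s₁ ≤ s₂) : gH q qs ρ α s₁ ≤ gH q qs ρ α s₂ := by
  obtain ⟨r1, r2, r3⟩ := r_facts (ρ := ρ) hq hρ hqs
  have hq0 : (0:ℝ) < q := by linarith
  unfold gH
  set r := ρ ^ (qs/q) with hr
  by_cases hs2 : s₂ ≤ r
  · rw [if_pos (h12.trans hs2), if_pos hs2]
    have := Real.rpow_le_rpow h0 h12 hq0.le
    have : s₁ ^ q / q ≤ s₂ ^ q / q := by gcongr
    linarith
  · push_neg at hs2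
    rw [if_neg hs2.not_ge]
    by_cases hs1 : s₁ ≤ r
    · rw [if_pos hs1]
      have hb := gH_boundary (α := α) hq hρ hqs
      have h1 : s₁ ^ q ≤ r ^ q := Real.rpow_le_rpow h0 hs1 hq0.le
      have : s₁ ^ q / q ≤ r ^ q / q := by gcongr
      nlinarith [hs2]
    · rw [if_neg hs1]
      nlinarith
lemma powLip (q ρ r : ℝ) (hq : 1 < q) (hρ : 0 < ρ) (hr : r ^ (q-1) = ρ)
    (s₁ s₂ : ℝ) (h0 : 0 ≤ s₁) (h12 : s₁ ≤ s₂) (h2r : s₂ ≤ r) :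
    s₂ ^ q - s₁ ^ q ≤ q * ρ * (s₂ - s₁) := by
  rcases eq_or_lt_of_le (h0.trans h12) with h|h
  · have h1 : s₁ = 0 := le_antisymm (h ▸ h12) h0
    rw [h1, ← h]
    simp
  · have ht : -1 ≤ s₁ / s₂ - 1 := by
      have : 0 ≤ s₁ / s₂ := div_nonneg h0 h.le
      linarith
    have hb := one_add_mul_self_le_rpow_one_add ht hq.le
    have h1t : (1 + (s₁ / s₂ - 1)) = s₁/s₂ := by ring
    rw [h1t, Real.div_rpow h0 h.le] at hb
    have hs2q : (0:ℝ) < s₂ ^ q := Real.rpow_pos_of_pos h q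
    have hb' : (1 + q * (s₁ / s₂ - 1)) * s₂ ^ q ≤ s₁ ^ q := by
      have := mul_le_mul_of_nonneg_right hb hs2q.le
      rwa [div_mul_cancel₀ _ hs2q.ne'] at this
    have hsplit : s₂ ^ q = s₂ ^ (q-1) * s₂ := by
      rw [← Real.rpow_add_one h.ne' (q-1)]; ring_nf
    have hds : s₂ ^ (q-1) ≤ ρ := by
      rw [← hr]
      exact Real.rpow_le_rpow h.le h2r (by linarith)
    have hpow_pos : (0:ℝ) < s₂ ^ (q-1) := Real.rpow_pos_of_pos h _
    have key : s₂ ^ q - s₁ ^ q ≤ q * (s₂ - s₁) * s₂ ^ (q-1) := by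
      have : (1 + q * (s₁ / s₂ - 1)) * s₂ ^ q = s₂ ^ q - q * (s₂ - s₁) * s₂ ^ (q-1) := by
        rw [hsplit]; field_simp; ring
      linarith [hb', this ▸ hb']
    have : q * (s₂ - s₁) * s₂ ^ (q-1) ≤ q * (s₂ - s₁) * ρ := by
      apply mul_le_mul_of_nonneg_left hds
      nlinarith
    nlinarith

lemma gH_lip (hq : 1 < q) (hρ : 0 < ρ) (hqs : qs = q / (q-1))
    {s₁ s₂ : ℝ} (h0 : 0 ≤ s₁) (h12 : s₁ ≤ s₂) :
    gH q qs ρ α s₂ ≤ gH q qs ρ α s₁ + ρ * (s₂ - s₁) := by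
  obtain ⟨r1, r2, r3⟩ := r_facts (ρ := ρ) hq hρ hqs
  have hq0 : (0:ℝ) < q := by linarith
  have hr0 : (0:ℝ) < ρ ^ (qs/q) := Real.rpow_pos_of_pos hρ _
  unfold gH
  set r := ρ ^ (qs/q) with hr
  by_cases hs2 : s₂ ≤ r
  · rw [if_pos (h12.trans hs2), if_pos hs2]
    have := powLip q ρ r hq hρ r1 s₁ s₂ h0 h12 hs2
    have hd : s₂ ^ q / q - s₁ ^ q / q ≤ ρ * (s₂ - s₁) := by
      rw [div_sub_div_same, div_le_iff₀ hq0]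
      nlinarith
    linarith
  · push_neg at hs2
    rw [if_neg hs2.not_ge]
    by_cases hs1 : s₁ ≤ r
    · rw [if_pos hs1]
      have hb := gH_boundary (α := α) hq hρ hqs
      have := powLip q ρ r hq hρ r1 s₁ r h0 hs1 le_rfl
      have hd : r ^ q / q - s₁ ^ q / q ≤ ρ * (r - s₁) := by
        rw [div_sub_div_same, div_le_iff₀ hq0]
        nlinarith
      nlinarith
    · rw [if_neg hs1]
      linarith

lemma gH_young (hq : 1 < q) (hρ : 0 < ρ) (hqs : qs = q / (q-1))
    {s : ℝ} (h0 : 0 ≤ s) :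
    (α - ρ ^ qs / qs) + ρ * s ≤ gH q qs ρ α s := by
  unfold gH
  by_cases hs : s ≤ ρ ^ (qs/q)
  · rw [if_pos hs]
    have hconj : q.HolderConjugate qs :=
      (Real.holderConjugate_iff_eq_conjExponent hq).2 hqs
    have := Real.young_inequality s ρ hconj
    rw [abs_of_nonneg h0, abs_of_nonneg hρ.le] at this
    linarith
  · rw [if_neg hs]

lemma recEq {H : Type*} [NormedAddCommGroup H] [NormedSpace ℝ H]
    (hq : 1 < q) (hρ : 0 < ρ) (hqs : qs = q / (q-1))
    (φ : H → ℝ) (hφ : ∀ v : H, φ v = gH q qs ρ α ‖v‖) (u : H) :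
    (⨆ y : H, ((φ (u + y) - φ y : ℝ) : EReal)) = ((ρ * ‖u‖ : ℝ) : EReal) := by
  have hr0 : (0:ℝ) < ρ ^ (qs/q) := Real.rpow_pos_of_pos hρ _
  apply le_antisymm
  · apply iSup_le
    intro y
    rw [EReal.coe_le_coe_iff, hφ, hφ]
    by_cases hc : ‖u + y‖ ≤ ‖y‖
    · have := gH_mono (α := α) hq hρ hqs (norm_nonneg (u+y)) hc
      nlinarith [norm_nonneg u]
    · push_neg at hc
      have := gH_lip (α := α) hq hρ hqs (norm_nonneg y) hc.le
      have htri : ‖u + y‖ - ‖y‖ ≤ ‖u‖ := by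
        have := norm_add_le u y
        linarith
      nlinarith
  · by_cases hu : u = 0
    · subst hu
      refine le_iSup_of_le 0 ?_
      rw [EReal.coe_le_coe_iff]
      simp
    · have hun : (0:ℝ) < ‖u‖ := norm_pos_iff.2 hu
      set r := ρ ^ (qs/q) with hrdef
      set t : ℝ := (r + ‖u‖) / ‖u‖ with ht
      have ht0 : 0 < t := div_pos (by linarith) hun
      refine le_iSup_of_le (t • u) ?_
      rw [EReal.coe_le_coe_iff, hφ, hφ]
      have h1 : u + t • u = (1 + t) • u := by
        rw [add_smul, one_smul]
      have hn1 : ‖u + t • u‖ = (1 + t) * ‖u‖ := by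
        rw [h1, norm_smul, Real.norm_eq_abs, abs_of_pos (by linarith)]
      have hn2 : ‖t • u‖ = t * ‖u‖ := by
        rw [norm_smul, Real.norm_eq_abs, abs_of_pos ht0]
      have htu : t * ‖u‖ = r + ‖u‖ := by
        rw [ht]
        field_simp
      have hb1 : r < ‖t • u‖ := by rw [hn2, htu]; linarith
      have hb2 : r < ‖u + t • u‖ := by rw [hn1]; nlinarith
      unfold gH
      rw [if_neg hb1.not_ge, if_neg hb2.not_ge, hn1, hn2]
      ring_nf
      nlinarith [hun]

lemma shrink {H : Type*} [NormedAddCommGroup H] [InnerProductSpace ℝ H]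
    {lam : ℝ} {x : H} (hlam : 0 < lam) (hx : lam < ‖x‖) (u : H) :
    lam * ‖(1 - lam / ‖x‖) • x‖ + ‖x - (1 - lam / ‖x‖) • x‖ ^ 2 / 2 ≤
      lam * ‖u‖ + ‖x - u‖ ^ 2 / 2 ∧
    (u ≠ (1 - lam / ‖x‖) • x →
      lam * ‖(1 - lam / ‖x‖) • x‖ + ‖x - (1 - lam / ‖x‖) • x‖ ^ 2 / 2 <
        lam * ‖u‖ + ‖x - u‖ ^ 2 / 2) := by
  have hxp : (0:ℝ) < ‖x‖ := by linarith
  have hco : 0 < 1 - lam / ‖x‖ := by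
    rw [sub_pos, div_lt_one hxp]; exact hx
  have hnus : ‖(1 - lam / ‖x‖) • x‖ = ‖x‖ - lam := by
    rw [norm_smul, Real.norm_eq_abs, abs_of_pos hco]
    field_simp
  have hxus : x - (1 - lam / ‖x‖) • x = (lam / ‖x‖) • x := by
    rw [sub_smul, one_smul]
    module
  have hnxus : ‖x - (1 - lam / ‖x‖) • x‖ = lam := by
    rw [hxus, norm_smul, Real.norm_eq_abs, abs_of_pos (by positivity)]
    field_simp
  have hexp : ‖x - u‖ ^ 2 = ‖x‖ ^ 2 - 2 * inner ℝ x u + ‖u‖ ^ 2 := norm_sub_sq_real x u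
  have hcs : (inner ℝ x u : ℝ) ≤ ‖x‖ * ‖u‖ := real_inner_le_norm x u
  have hkey : lam * (‖x‖ - lam) + lam ^ 2 / 2 +
      ((‖u‖ - (‖x‖ - lam)) ^ 2 / 2 + (‖x‖ * ‖u‖ - inner ℝ x u)) =
      lam * ‖u‖ + ‖x - u‖ ^ 2 / 2 := by
    rw [hexp]; ring
  constructor
  · rw [hnus, hnxus]
    nlinarith [sq_nonneg (‖u‖ - (‖x‖ - lam))]
  · intro hne
    rw [hnus, hnxus]
    by_contra hcon
    push_neg at hcon
    have hz1 : ‖u‖ = ‖x‖ - lam := by nlinarith [sq_nonneg (‖u‖ - (‖x‖ - lam))]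
    have hz2 : (inner ℝ x u : ℝ) = ‖x‖ * ‖u‖ := by nlinarith [sq_nonneg (‖u‖ - (‖x‖ - lam))]
    have := inner_eq_norm_mul_iff_real.1 hz2
    -- ‖u‖ • x = ‖x‖ • u
    apply hne
    have hxu : u = (‖u‖ / ‖x‖) • x := by
      have h2 := congrArg (fun v => (‖x‖)⁻¹ • v) this
      simp only [smul_smul, inv_mul_cancel₀ hxp.ne', one_smul] at h2
      rw [div_eq_mul_inv, mul_comm]
      exact h2.symm
    rw [hxu, hz1]
    congr 1
    field_simp

/-- Prox of the perspective of the generalized Huber function: shrinkage with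
vanishing scale. -/
theorem prox_generalized_huber_shrink_zero_scale
    {H : Type*} [NormedAddCommGroup H] [InnerProductSpace ℝ H] [CompleteSpace H]
    (α γ ρ q : ℝ) (hα : 0 < α) (hγ : 0 < γ) (hρ : 0 < ρ) (hq : 1 < q)
    (qs : ℝ) (hqs : qs = q / (q - 1))
    (φ : H → ℝ)
    (hφ : ∀ v : H, φ v =
      if ‖v‖ ≤ ρ ^ (qs / q) then α + ‖v‖ ^ q / q
      else α - ρ ^ qs / qs + ρ * ‖v‖)
    (σ : ℝ) (x : H)
    (h1 : σ ≤ γ * (α - ρ ^ qs / qs))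
    (h2 : γ * ρ < ‖x‖) :
    ∀ p : ℝ × H,
      IsProx (fun w => (γ : EReal) * perspR φ w) (σ, x) p ↔
        p = ((0 : ℝ), (1 - γ * ρ / ‖x‖) • x) := by
  have hφ' : ∀ v : H, φ v = gH q qs ρ α ‖v‖ := fun v => hφ v
  have hlam0 : 0 < γ * ρ := mul_pos hγ hρ
  set us := (1 - γ * ρ / ‖x‖) • x with hus
  have hxp : (0:ℝ) < ‖x‖ := lt_trans hlam0 h2
  have shr : ∀ u : H, γ * ρ * ‖us‖ + ‖x - us‖ ^ 2 / 2 ≤ γ * ρ * ‖u‖ + ‖x - u‖ ^ 2 / 2 :=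
    fun u => (shrink hlam0 h2 u).1
  have shrs : ∀ u : H, u ≠ us →
      γ * ρ * ‖us‖ + ‖x - us‖ ^ 2 / 2 < γ * ρ * ‖u‖ + ‖x - u‖ ^ 2 / 2 :=
    fun u h => (shrink hlam0 h2 u).2 h
  have persp0 : ∀ u : H, perspR φ ((0:ℝ), u) = ((ρ * ‖u‖ : ℝ) : EReal) := by
    intro u
    unfold perspR
    rw [if_neg (lt_irrefl 0), if_pos rfl]
    exact recEq hq hρ hqs φ hφ' u
  have persppos : ∀ (τ : ℝ) (u : H), 0 < τ →
      perspR φ (τ, u) = ((τ * φ (τ⁻¹ • u) : ℝ) : EReal) := by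
    intro τ u h
    unfold perspR
    rw [if_pos h]
  have perspneg : ∀ (τ : ℝ) (u : H), τ < 0 → perspR φ (τ, u) = ⊤ := by
    intro τ u h
    unfold perspR
    rw [if_neg (asymm h), if_neg h.ne]
  have hγE : (0 : EReal) < (γ : ℝ) := by exact_mod_cast hγ
  -- lower bound for the perspective term when τ > 0
  have keypos : ∀ (τ : ℝ) (u : H), 0 < τ →
      γ * (τ * (α - ρ ^ qs / qs)) + γ * ρ * ‖u‖ ≤ γ * (τ * φ (τ⁻¹ • u)) := by
    intro τ u hτ
    have hφlb : α - ρ ^ qs / qs + ρ * ‖τ⁻¹ • u‖ ≤ φ (τ⁻¹ • u) := by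
      rw [hφ']
      exact gH_young hq hρ hqs (norm_nonneg _)
    have hnorm : ‖τ⁻¹ • u‖ = ‖u‖ / τ := by
      rw [norm_smul, Real.norm_eq_abs, abs_of_pos (inv_pos.2 hτ), inv_mul_eq_div]
    rw [hnorm] at hφlb
    have h5 : τ * (α - ρ ^ qs / qs) + ρ * ‖u‖ ≤ τ * φ (τ⁻¹ • u) := by
      have := mul_le_mul_of_nonneg_left hφlb hτ.le
      have heq : τ * (α - ρ ^ qs / qs + ρ * (‖u‖ / τ)) =
          τ * (α - ρ ^ qs / qs) + ρ * ‖u‖ := by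
        field_simp
      linarith [heq ▸ this]
    have := mul_le_mul_of_nonneg_left h5 hγ.le
    nlinarith
  intro p
  constructor
  · intro hp
    obtain ⟨τ, u⟩ := p
    have hp' : (γ : EReal) * perspR φ (τ, u) +
        ((((σ - τ) ^ 2 + ‖x - u‖ ^ 2) / 2 : ℝ) : EReal) ≤
        (γ : EReal) * perspR φ ((0:ℝ), us) +
        ((((σ - 0) ^ 2 + ‖x - us‖ ^ 2) / 2 : ℝ) : EReal) := hp ((0:ℝ), us)
    rw [persp0, ← EReal.coe_mul, ← EReal.coe_add] at hp'
    rcases lt_trichotomy τ 0 with hτ | hτ | hτ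
    · rw [perspneg τ u hτ, EReal.mul_top_of_pos hγE, EReal.top_add_coe] at hp'
      exact absurd hp' (EReal.coe_lt_top _).not_ge
    · subst hτ
      rw [persp0, ← EReal.coe_mul, ← EReal.coe_add, EReal.coe_le_coe_iff] at hp'
      have hu : u = us := by
        by_contra hne
        have := shrs u hne
        nlinarith
      rw [hu]
    · rw [persppos τ u hτ, ← EReal.coe_mul, ← EReal.coe_add, EReal.coe_le_coe_iff] at hp'
      exfalso
      have hk := keypos τ u hτ
      have hs := shr u
      have hpos : 0 < τ * (γ * (α - ρ ^ qs / qs) - σ) + τ ^ 2 / 2 := by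
        nlinarith [mul_nonneg hτ.le (sub_nonneg.2 h1)]
      nlinarith
  · intro hp
    subst hp
    intro y
    obtain ⟨τ, u⟩ := y
    show (γ : EReal) * perspR φ ((0:ℝ), us) +
        ((((σ - 0) ^ 2 + ‖x - us‖ ^ 2) / 2 : ℝ) : EReal) ≤
        (γ : EReal) * perspR φ (τ, u) +
        ((((σ - τ) ^ 2 + ‖x - u‖ ^ 2) / 2 : ℝ) : EReal)
    rw [persp0, ← EReal.coe_mul, ← EReal.coe_add]
    rcases lt_trichotomy τ 0 with hτ | hτ | hτ
    · rw [perspneg τ u hτ, EReal.mul_top_of_pos hγE, EReal.top_add_coe]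
      exact le_top
    · subst hτ
      rw [persp0, ← EReal.coe_mul, ← EReal.coe_add, EReal.coe_le_coe_iff]
      have := shr u
      nlinarith
    · rw [persppos τ u hτ, ← EReal.coe_mul, ← EReal.coe_add, EReal.coe_le_coe_iff]
      have hk := keypos τ u hτ
      have hs := shr u
      have hpos : 0 ≤ τ * (γ * (α - ρ ^ qs / qs) - σ) + τ ^ 2 / 2 := by
        nlinarith [mul_nonneg hτ.le (sub_nonneg.2 h1)]
      nlinarith
end G
end
end

section
/- Let H be a real Hilbert space, let α > 0, γ > 0, ρ > 0, q > 1, set q* = q/(q−1), and let φ be the generalized Huber function φ(x) = α − ρ^{q*}/q* + ρ‖x‖ if ‖x‖ > ρ^{q*/q}, φ(x) = α + ‖x‖^q/q if ‖x‖ ≤ ρ^{q*/q}. Let σ ∈ ℝ and x ∈ H. If σ > γ(α − ρ^{q*}/q*) and ‖x‖ ≥ γρ^{q*−1}(σ/γ + ρ^{2−q*} + ρ^{q*}/q* − α), then prox_{γφ̃}(σ,x) = (σ + γ(ρ^{q*}/q* − α), (1 − γρ/‖x‖) x). -/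
noncomputable section

open scoped RealInnerProductSpace

set_option maxHeartbeats 2000000 in
/-- Prox of the perspective of the generalized Huber function: linear regime. -/
theorem prox_generalized_huber_linear_regime
    {H : Type*} [NormedAddCommGroup H] [InnerProductSpace ℝ H] [CompleteSpace H]
    (α γ ρ q : ℝ) (hα : 0 < α) (hγ : 0 < γ) (hρ : 0 < ρ) (hq : 1 < q)
    (qs : ℝ) (hqs : qs = q / (q - 1))
    (φ : H → ℝ)
    (hφ : ∀ v : H, φ v =
      if ‖v‖ ≤ ρ ^ (qs / q) then α + ‖v‖ ^ q / q
      else α - ρ ^ qs / qs + ρ * ‖v‖)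
    (σ : ℝ) (x : H)
    (h1 : γ * (α - ρ ^ qs / qs) < σ)
    (h2 : γ * ρ ^ (qs - 1) * (σ / γ + ρ ^ (2 - qs) + ρ ^ qs / qs - α) ≤ ‖x‖) :
    ∀ p : ℝ × H,
      IsProx (fun w => (γ : EReal) * perspR φ w) (σ, x) p ↔
        p = (σ + γ * (ρ ^ qs / qs - α), (1 - γ * ρ / ‖x‖) • x) := by
  have hq1 : (0:ℝ) < q - 1 := by linarith
  have hqpos : (0:ℝ) < q := by linarith
  have hqs_pos : 0 < qs := by rw [hqs]; positivity
  have hqq : qs / q = qs - 1 := by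
    rw [hqs]; field_simp; ring
  have hconjE : q.HolderConjugate qs := by
    rw [hqs]; exact Real.HolderConjugate.conjExponent hq
  have hconj : 1/q + 1/qs = 1 := by rw [hqs]; field_simp; ring
  simp only [hqq] at hφ
  set R : ℝ := ρ ^ (qs - 1) with hRdef
  set s : ℝ := σ + γ * (ρ ^ qs / qs - α) with hsdef
  set u : H := (1 - γ * ρ / ‖x‖) • x with hudef
  clear_value R s u
  have hR_pos : 0 < R := by rw [hRdef]; positivity
  have hρqs_pos : 0 < ρ ^ qs := Real.rpow_pos_of_pos hρ _
  have hρ2qs : 0 < ρ ^ (2 - qs) := Real.rpow_pos_of_pos hρ _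
  have hs_pos : 0 < s := by
    have h : γ * (ρ ^ qs / qs - α) = -(γ * (α - ρ ^ qs / qs)) := by ring
    rw [hsdef, h]; linarith
  have hσs : σ - s = γ * (α - ρ ^ qs / qs) := by rw [hsdef]; ring
  have hmulρ : R * ρ ^ (2 - qs) = ρ := by
    rw [hRdef, ← Real.rpow_add hρ, show qs - 1 + (2 - qs) = 1 by ring, Real.rpow_one]
  have hdiv : α - ρ ^ qs / qs < σ / γ := by
    rw [lt_div_iff₀ hγ]; linarith
  have hxγρ : γ * ρ < ‖x‖ := by
    have hb : ρ ^ (2 - qs) < σ / γ + ρ ^ (2 - qs) + ρ ^ qs / qs - α := by linarith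
    have h5 : γ * R * ρ ^ (2 - qs) = γ * ρ := by rw [mul_assoc, hmulρ]
    have h6 : γ * R * ρ ^ (2 - qs) < γ * R * (σ / γ + ρ ^ (2 - qs) + ρ ^ qs / qs - α) :=
      mul_lt_mul_of_pos_left hb (mul_pos hγ hR_pos)
    linarith
  have hx_pos : 0 < ‖x‖ := lt_trans (by positivity) hxγρ
  have hxne : ‖x‖ ≠ 0 := ne_of_gt hx_pos
  have hcoef : 0 ≤ 1 - γ * ρ / ‖x‖ := by
    rw [sub_nonneg, div_le_one hx_pos]; exact hxγρ.le
  have hnu : ‖u‖ = ‖x‖ - γ * ρ := by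
    rw [hudef, norm_smul, Real.norm_eq_abs, abs_of_nonneg hcoef]
    field_simp
  have hσγ : γ * (σ / γ) = σ := by field_simp
  have hRs : R * s ≤ ‖u‖ := by
    have h5 : γ * R * ρ ^ (2 - qs) = γ * ρ := by rw [mul_assoc, hmulρ]
    have hexp : γ * R * (σ / γ + ρ ^ (2 - qs) + ρ ^ qs / qs - α) = R * s + γ * ρ := by
      rw [hsdef]; linear_combination R * hσγ + h5
    rw [hnu]; linarith
  -- the unit vector in the direction of x
  set b : H := ‖x‖⁻¹ • x with hbdef
  clear_value b
  have hbx : ⟪b, x⟫ = ‖x‖ := by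
    rw [hbdef, real_inner_smul_left, real_inner_self_eq_norm_sq]
    field_simp
  have hbu : ⟪b, u⟫ = ‖u‖ := by
    rw [hnu, hudef, real_inner_smul_right, hbx]
    field_simp
  have hbnorm : ‖b‖ = 1 := by
    rw [hbdef, norm_smul, Real.norm_eq_abs, abs_of_nonneg (inv_nonneg.2 hx_pos.le)]
    field_simp
  have hbw : ∀ w : H, ⟪b, w⟫ ≤ ‖w‖ := by
    intro w
    have h := real_inner_le_norm b w
    rwa [hbnorm, one_mul] at h
  have hxu : x - u = (γ * ρ) • b := by
    have h : x - (1 - γ * ρ / ‖x‖) • x = (γ * ρ / ‖x‖) • x := by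
      rw [sub_smul, one_smul, sub_sub_cancel]
    rw [hudef, h, hbdef, smul_smul, div_eq_mul_inv]
  -- facts about φ
  have hRq : R ^ q = ρ ^ qs := by
    rw [hRdef, ← Real.rpow_mul hρ.le]
    congr 1
    rw [hqs]; field_simp; ring
  have hρR : ρ * R = ρ ^ qs := by
    rw [hRdef, show ρ * ρ ^ (qs-1) = ρ ^ (1:ℝ) * ρ ^ (qs-1) by rw [Real.rpow_one],
      ← Real.rpow_add hρ]
    congr 1; ring
  have hsum : ρ ^ qs / q + ρ ^ qs / qs = ρ ^ qs := by
    have h : ρ ^ qs / q + ρ ^ qs / qs = ρ ^ qs * (1/q + 1/qs) := by ring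
    rw [h, hconj, mul_one]
  have hphi_lin : ∀ w : H, R ≤ ‖w‖ → φ w = α - ρ ^ qs / qs + ρ * ‖w‖ := by
    intro w hw
    rw [hφ w]
    split_ifs with h
    · have hwR : ‖w‖ = R := le_antisymm h hw
      rw [hwR, hRq, hρR]
      linarith
    · rfl
  have hphi_ge : ∀ w : H, α - ρ ^ qs / qs + ρ * ‖w‖ ≤ φ w := by
    intro w
    rw [hφ w]
    split_ifs with h
    · have hy := Real.young_inequality_of_nonneg (norm_nonneg w) hρ.le hconjE
      linarith
    · exact le_refl _
  -- the affine lower bound for the perspective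
  have hpersp_ge : ∀ y : ℝ × H,
      (((α - ρ ^ qs / qs) * y.1 + ρ * ‖y.2‖ : ℝ) : EReal) ≤ perspR φ y := by
    rintro ⟨t, w⟩
    simp only [perspR]
    split_ifs with h0 h0'
    · rw [EReal.coe_le_coe_iff]
      have h3 := hphi_ge (t⁻¹ • w)
      rw [norm_smul, Real.norm_eq_abs, abs_of_pos (inv_pos.2 h0)] at h3
      have h4 := mul_le_mul_of_nonneg_left h3 h0.le
      have h5 : t * (α - ρ^qs/qs + ρ * (t⁻¹ * ‖w‖)) = (α - ρ^qs/qs) * t + ρ * ‖w‖ := by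
        field_simp
      linarith
    · subst h0'
      by_cases hw : w = (0:H)
      · subst hw
        refine le_trans ?_ (le_iSup (fun y : H => ((φ ((0:H) + y) - φ y : ℝ) : EReal)) 0)
        norm_num
      · have hwn : 0 < ‖w‖ := norm_pos_iff.2 hw
        set c : ℝ := (R + ‖w‖) / ‖w‖ with hcdef
        clear_value c
        have hc : 0 < c := by rw [hcdef]; positivity
        have hcw' : c * ‖w‖ = R + ‖w‖ := by rw [hcdef]; field_simp
        have hcw : ‖c • w‖ = R + ‖w‖ := by
          rw [norm_smul, Real.norm_eq_abs, abs_of_pos hc, hcw']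
        have hw2 : w + c • w = (1 + c) • w := by rw [add_smul, one_smul]
        have hcw2 : ‖w + c • w‖ = ‖w‖ + (R + ‖w‖) := by
          rw [hw2, norm_smul, Real.norm_eq_abs, abs_of_pos (by linarith : (0:ℝ) < 1 + c),
            add_mul, one_mul, hcw']
        have hφ1 : φ (w + c • w) = α - ρ^qs/qs + ρ * (‖w‖ + (R + ‖w‖)) := by
          rw [hphi_lin _ (by rw [hcw2]; linarith), hcw2]
        have hφ2 : φ (c • w) = α - ρ^qs/qs + ρ * (R + ‖w‖) := by
          rw [hphi_lin _ (by rw [hcw]; linarith), hcw]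
        refine le_trans ?_ (le_iSup (fun y : H => ((φ (w + y) - φ y : ℝ) : EReal)) (c • w))
        rw [EReal.coe_le_coe_iff, hφ1, hφ2]
        nlinarith [hwn]
    · exact le_top
  -- equality at the candidate point
  have hsu : ‖s⁻¹ • u‖ = s⁻¹ * ‖u‖ := by
    rw [norm_smul, Real.norm_eq_abs, abs_of_pos (inv_pos.2 hs_pos)]
  have hsuR : R ≤ ‖s⁻¹ • u‖ := by
    rw [hsu]
    have h5 : s⁻¹ * (R * s) ≤ s⁻¹ * ‖u‖ :=
      mul_le_mul_of_nonneg_left hRs (inv_pos.2 hs_pos).le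
    have h6 : s⁻¹ * (R * s) = R := by field_simp
    linarith
  have hpersp_eq : perspR φ (s, u) = (((α - ρ^qs/qs) * s + ρ * ‖u‖ : ℝ) : EReal) := by
    simp only [perspR]
    rw [if_pos hs_pos, EReal.coe_eq_coe_iff]
    rw [hphi_lin _ hsuR, hsu]
    field_simp
  -- the quadratic expansion
  have hinner : ∀ w : H, ‖x - w‖^2
      = ‖x - u‖^2 + 2*((γ*ρ)*(⟪b,u⟫ - ⟪b,w⟫)) + ‖u - w‖^2 := by
    intro w
    have hd : x - w = (x - u) + (u - w) := by abel
    have hi : ⟪x - u, u - w⟫ = (γ*ρ)*(⟪b,u⟫ - ⟪b,w⟫) := by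
      rw [hxu, real_inner_smul_left, inner_sub_right]
    rw [hd, norm_add_sq_real, hi]
  have hG : ∀ t : ℝ, ∀ w : H,
      γ*((α - ρ^qs/qs)*s + ρ*⟪b,u⟫) + ((σ-s)^2 + ‖x-u‖^2)/2 + ((t-s)^2 + ‖w-u‖^2)/2
      = γ*((α - ρ^qs/qs)*t + ρ*⟪b,w⟫) + ((σ-t)^2 + ‖x-w‖^2)/2 := by
    intro t w
    have hσ : σ = s + γ * (α - ρ ^ qs / qs) := by linarith
    rw [hinner w, show ‖w - u‖ = ‖u - w‖ from norm_sub_rev w u, hσ]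
    ring
  have hγE : (0:EReal) ≤ (γ : ℝ) := by exact_mod_cast hγ.le
  -- the EReal lower bound with the inner-product linear functional
  have hmain : ∀ y : ℝ × H,
      ((γ*((α - ρ^qs/qs)*y.1 + ρ*⟪b,y.2⟫) : ℝ) : EReal) ≤ (γ : EReal) * perspR φ y := by
    intro y
    have step1 : ((γ*((α - ρ^qs/qs)*y.1 + ρ*⟪b,y.2⟫) : ℝ) : EReal)
        ≤ ((γ*((α - ρ^qs/qs)*y.1 + ρ*‖y.2‖) : ℝ) : EReal) := by
      rw [EReal.coe_le_coe_iff]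
      have h7 := mul_le_mul_of_nonneg_left (hbw y.2) hρ.le
      have h8 : (α - ρ^qs/qs)*y.1 + ρ*⟪b,y.2⟫ ≤ (α - ρ^qs/qs)*y.1 + ρ*‖y.2‖ := by linarith
      exact mul_le_mul_of_nonneg_left h8 hγ.le
    refine le_trans step1 ?_
    rw [EReal.coe_mul]
    exact mul_le_mul_of_nonneg_left (hpersp_ge y) hγE
  -- value of the objective at the candidate
  have hψp : (γ : EReal) * perspR φ (s, u)
      = ((γ*((α - ρ^qs/qs)*s + ρ*⟪b,u⟫) : ℝ) : EReal) := by
    rw [hpersp_eq, ← EReal.coe_mul, hbu]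
  intro p
  constructor
  · -- forward: any prox point equals the candidate
    intro hp
    have hkey := hp (s, u)
    simp only [] at hkey
    try dsimp only at hkey
    rw [hψp] at hkey
    have hlow : ((γ*((α - ρ^qs/qs)*s + ρ*⟪b,u⟫) + ((σ-s)^2 + ‖x-u‖^2)/2
        + ((p.1-s)^2 + ‖p.2-u‖^2)/2 : ℝ) : EReal)
        ≤ (fun w => (γ : EReal) * perspR φ w) p
          + ((((σ,x).1 - p.1)^2 + ‖(σ,x).2 - p.2‖^2)/2 : ℝ) := by
      have h9 := hG p.1 p.2
      simp only []
      calc ((γ*((α - ρ^qs/qs)*s + ρ*⟪b,u⟫) + ((σ-s)^2 + ‖x-u‖^2)/2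
            + ((p.1-s)^2 + ‖p.2-u‖^2)/2 : ℝ) : EReal)
          = ((γ*((α - ρ^qs/qs)*p.1 + ρ*⟪b,p.2⟫) : ℝ) : EReal)
            + ((((σ:ℝ) - p.1)^2 + ‖x - p.2‖^2)/2 : ℝ) := by
            rw [← EReal.coe_add]
            rw [EReal.coe_eq_coe_iff]
            linarith
        _ ≤ (γ : EReal) * perspR φ p + ((((σ:ℝ) - p.1)^2 + ‖x - p.2‖^2)/2 : ℝ) :=
            add_le_add_left (hmain p) _
    have hfin := le_trans hlow hkey
    have hcmp : ((γ*((α - ρ^qs/qs)*s + ρ*⟪b,u⟫) + ((σ-s)^2 + ‖x-u‖^2)/2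
        + ((p.1-s)^2 + ‖p.2-u‖^2)/2 : ℝ) : EReal)
        ≤ ((γ*((α - ρ^qs/qs)*s + ρ*⟪b,u⟫) + ((σ-s)^2 + ‖x-u‖^2)/2 : ℝ) : EReal) := by
      calc _ ≤ _ := hfin
        _ = _ := by rw [← EReal.coe_add]
    rw [EReal.coe_le_coe_iff] at hcmp
    have h10 : (p.1-s)^2 + ‖p.2-u‖^2 ≤ 0 := by linarith
    have h11 : (p.1-s)^2 = 0 := le_antisymm (by nlinarith [sq_nonneg ‖p.2-u‖]) (sq_nonneg _)
    have h12 : ‖p.2-u‖^2 = 0 := le_antisymm (by nlinarith [sq_nonneg (p.1-s)]) (sq_nonneg _)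
    have hp1 : p.1 = s := by
      have := pow_eq_zero_iff (n := 2) (by norm_num) |>.1 h11
      linarith [sub_eq_zero.1 this]
    have hp2 : p.2 = u := by
      have := pow_eq_zero_iff (n := 2) (by norm_num) |>.1 h12
      rw [norm_eq_zero, sub_eq_zero] at this
      exact this
    exact Prod.ext hp1 hp2
  · -- backward: the candidate is a prox point
    rintro rfl
    intro y
    simp only []
    rw [hψp]
    have hL : ((γ*((α - ρ^qs/qs)*s + ρ*⟪b,u⟫) : ℝ) : EReal)
        + ((((σ,x).1 - (s,u).1)^2 + ‖(σ,x).2 - (s,u).2‖^2)/2 : ℝ)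
        = ((γ*((α - ρ^qs/qs)*s + ρ*⟪b,u⟫) + ((σ-s)^2 + ‖x-u‖^2)/2 : ℝ) : EReal) := by
      rw [← EReal.coe_add]
    rw [hL]
    have h9 := hG y.1 y.2
    have hext : (0:ℝ) ≤ ((y.1-s)^2 + ‖y.2-u‖^2)/2 := by positivity
    calc ((γ*((α - ρ^qs/qs)*s + ρ*⟪b,u⟫) + ((σ-s)^2 + ‖x-u‖^2)/2 : ℝ) : EReal)
        ≤ ((γ*((α - ρ^qs/qs)*y.1 + ρ*⟪b,y.2⟫) + ((σ - y.1)^2 + ‖x - y.2‖^2)/2 : ℝ) : EReal) := by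
          rw [EReal.coe_le_coe_iff]; linarith
      _ = ((γ*((α - ρ^qs/qs)*y.1 + ρ*⟪b,y.2⟫) : ℝ) : EReal)
          + ((((σ:ℝ) - y.1)^2 + ‖x - y.2‖^2)/2 : ℝ) := by rw [← EReal.coe_add]
      _ ≤ (γ : EReal) * perspR φ y + ((((σ:ℝ) - y.1)^2 + ‖x - y.2‖^2)/2 : ℝ) :=
          add_le_add_left (hmain y) _
end
end

section
/- Let H be a real Hilbert space, let α > 0, ρ > 0, κ > 0, q > 1, set q* = q/(q−1) and C = {x ∈ H : ‖x‖ ≤ ρ}, and define φ : H → ℝ by φ(x) = α + κ‖x‖ + d_C(x)^q/(q ρ^{q*−1}). Then for all σ ∈ ℝ and x ∈ H the perspective satisfies: φ̃(σ,x) = ασ + κ‖x‖ + (σ/(q ρ^{q*−1}))(‖x‖/σ − ρ)^q if σ > 0 and ‖x‖ > ρσ; φ̃(σ,x) = ασ + κ‖x‖ if σ > 0 and ‖x‖ ≤ ρσ; φ̃(0,0) = 0; and φ̃(σ,x) = +∞ otherwise. -/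
noncomputable section

lemma infDist_ball_eq {H : Type*} [NormedAddCommGroup H] [NormedSpace ℝ H]
    (ρ : ℝ) (hρ : 0 < ρ) (v : H) :
    Metric.infDist v {y : H | ‖y‖ ≤ ρ} = max (‖v‖ - ρ) 0 := by
  have hne : ({y : H | ‖y‖ ≤ ρ}).Nonempty := ⟨0, by simp [hρ.le]⟩
  rcases le_or_gt ‖v‖ ρ with h | h
  · rw [Metric.infDist_zero_of_mem (show v ∈ {y : H | ‖y‖ ≤ ρ} from h)]
    simp [sub_nonpos.mpr h]
  · have hv : v ≠ 0 := by intro h0; simp [h0] at h; linarith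
    have hvn : 0 < ‖v‖ := norm_pos_iff.mpr hv
    rw [max_eq_left (by linarith)]
    apply le_antisymm
    · have hmem : (ρ / ‖v‖) • v ∈ {y : H | ‖y‖ ≤ ρ} := by
        simp only [Set.mem_setOf_eq, norm_smul, Real.norm_eq_abs,
          abs_of_pos (div_pos hρ hvn)]
        rw [div_mul_cancel₀ _ hvn.ne']
      calc Metric.infDist v {y : H | ‖y‖ ≤ ρ} ≤ dist v ((ρ / ‖v‖) • v) :=
            Metric.infDist_le_dist_of_mem hmem
        _ = ‖v‖ - ρ := by
            rw [dist_eq_norm, ← one_smul ℝ v, smul_smul, ← sub_smul, norm_smul]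
            simp only [one_smul, Real.norm_eq_abs]
            rw [abs_of_nonneg (by rw [sub_nonneg, mul_one]; exact (div_le_one hvn).mpr h.le)]
            field_simp
    · by_contra hlt
      push_neg at hlt
      obtain ⟨y, hy, hdy⟩ := (Metric.infDist_lt_iff hne).mp hlt
      simp only [Set.mem_setOf_eq] at hy
      have : ‖v‖ - ρ ≤ dist v y := by
        calc ‖v‖ - ρ ≤ ‖v‖ - ‖y‖ := by linarith
          _ ≤ ‖v - y‖ := norm_sub_norm_le v y
          _ = dist v y := (dist_eq_norm v y).symm
      linarith

/-- The perspective of the generalized Berhu function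
`φ = α + κ‖·‖ + d_C^q/(qρ^{q*−1})`, `C = {x : ‖x‖ ≤ ρ}`. -/
theorem generalized_berhu_perspective
    {H : Type*} [NormedAddCommGroup H] [InnerProductSpace ℝ H] [CompleteSpace H]
    (α ρ κ q : ℝ) (hα : 0 < α) (hρ : 0 < ρ) (hκ : 0 < κ) (hq : 1 < q)
    (qs : ℝ) (hqs : qs = q / (q - 1))
    (φ : H → ℝ)
    (hφ : ∀ v : H, φ v =
      α + κ * ‖v‖ +
        Metric.infDist v {y : H | ‖y‖ ≤ ρ} ^ q / (q * ρ ^ (qs - 1))) :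
    ∀ σ : ℝ, ∀ x : H,
      (0 < σ → ρ * σ < ‖x‖ →
        perspR φ (σ, x) =
          ((α * σ + κ * ‖x‖ + σ / (q * ρ ^ (qs - 1)) * (‖x‖ / σ - ρ) ^ q : ℝ) :
            EReal)) ∧
      (0 < σ → ‖x‖ ≤ ρ * σ →
        perspR φ (σ, x) = ((α * σ + κ * ‖x‖ : ℝ) : EReal)) ∧
      (σ = 0 → x = 0 → perspR φ (σ, x) = (0 : EReal)) ∧
      (σ < 0 ∨ (σ = 0 ∧ x ≠ 0) → perspR φ (σ, x) = (⊤ : EReal)) := by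
  intro σ x
  set c : ℝ := q * ρ ^ (qs - 1) with hc
  have hq0 : 0 < q := by linarith
  have hcpos : 0 < c := mul_pos hq0 (Real.rpow_pos_of_pos hρ _)
  have hphi : ∀ v : H, φ v = α + κ * ‖v‖ + (max (‖v‖ - ρ) 0) ^ q / c := by
    intro v; rw [hφ v, infDist_ball_eq ρ hρ v]
  refine ⟨?_, ?_, ?_, ?_⟩
  · -- σ > 0, ‖x‖ > ρσ
    intro hσ hx
    rw [perspR, if_pos (show (0:ℝ) < (σ, x).1 from hσ)]
    norm_cast
    have hnrm : ‖σ⁻¹ • x‖ = ‖x‖ / σ := by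
      rw [norm_smul, Real.norm_eq_abs, abs_of_pos (inv_pos.mpr hσ)]
      rw [inv_mul_eq_div]
    show σ * φ (σ⁻¹ • x) = _
    rw [hphi, hnrm]
    have hpos : 0 < ‖x‖ / σ - ρ := by
      rw [sub_pos, lt_div_iff₀ hσ]; linarith [hx]
    rw [max_eq_left hpos.le]
    field_simp
  · -- σ > 0, ‖x‖ ≤ ρσ
    intro hσ hx
    rw [perspR, if_pos (show (0:ℝ) < (σ, x).1 from hσ)]
    norm_cast
    have hnrm : ‖σ⁻¹ • x‖ = ‖x‖ / σ := by
      rw [norm_smul, Real.norm_eq_abs, abs_of_pos (inv_pos.mpr hσ)]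
      rw [inv_mul_eq_div]
    show σ * φ (σ⁻¹ • x) = _
    rw [hphi, hnrm]
    have hle : ‖x‖ / σ - ρ ≤ 0 := by
      rw [sub_nonpos, div_le_iff₀ hσ]; linarith [hx]
    rw [max_eq_right hle, Real.zero_rpow hq0.ne']
    field_simp
    ring
  · -- σ = 0, x = 0
    rintro rfl rfl
    rw [perspR]
    simp only [lt_self_iff_false, if_false, if_pos rfl]
    have h0 : ∀ y : H, ((φ (((0:ℝ), (0:H)).2 + y) - φ y : ℝ) : EReal) = (0 : EReal) := by
      intro y; norm_cast; simp
    simp only [h0, iSup_const]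
    simp
  · -- σ < 0, or σ = 0 ∧ x ≠ 0
    rintro (hσ | ⟨rfl, hx⟩)
    · rw [perspR, if_neg (by simp only; linarith), if_neg (by exact hσ.ne)]
    · rw [perspR, if_neg (by simp), if_pos rfl]
      rw [iSup_eq_top]
      intro b hb
      have hxn : 0 < ‖x‖ := norm_pos_iff.mpr hx
      -- key claim: values are unbounded above
      have key : ∀ M : ℝ, ∃ y : H, M < φ (((0:ℝ), x).2 + y) - φ y := by
        intro M
        set K : ℝ := c * (|M| + 1) / ‖x‖ with hK
        have hKpos : 0 < K := div_pos (mul_pos hcpos (by positivity)) hxn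
        set b0 : ℝ := max 1 (K ^ (q - 1)⁻¹) with hb0
        have hb0pos : (0:ℝ) < b0 := lt_of_lt_of_le one_pos (le_max_left _ _)
        set t : ℝ := (b0 + ρ) / ‖x‖ with ht
        have htpos : 0 < t := div_pos (by linarith) hxn
        refine ⟨t • x, ?_⟩
        show M < φ (x + t • x) - φ (t • x)
        have hyn : ‖t • x‖ = t * ‖x‖ := by
          rw [norm_smul, Real.norm_eq_abs, abs_of_pos htpos]
        have hxyn : ‖x + t • x‖ = (1 + t) * ‖x‖ := by
          rw [show x + t • x = (1 + t) • x by rw [add_smul, one_smul],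
            norm_smul, Real.norm_eq_abs, abs_of_pos (by linarith)]
        have htx : t * ‖x‖ = b0 + ρ := by rw [ht, div_mul_cancel₀ _ hxn.ne']
        set B : ℝ := t * ‖x‖ - ρ with hB
        have hBb0 : B = b0 := by rw [hB, htx]; ring
        have hBpos : 0 < B := by rw [hBb0]; exact hb0pos
        set A : ℝ := (1 + t) * ‖x‖ - ρ with hA
        have hAB : A = B + ‖x‖ := by rw [hA, hB]; ring
        have hApos : 0 < A := by rw [hAB]; linarith
        rw [hphi, hphi, hyn, hxyn]
        rw [max_eq_left (by linarith : (0:ℝ) ≤ (1 + t) * ‖x‖ - ρ),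
          max_eq_left (by linarith : (0:ℝ) ≤ t * ‖x‖ - ρ)]
        have hexp : A ^ q - B ^ q ≥ ‖x‖ * B ^ (q - 1) := by
          have hA1 : A ^ q = A * A ^ (q - 1) := by
            rw [← Real.rpow_one_add' hApos.le (by linarith)]
            ring_nf
          have hB1 : B ^ q = B * B ^ (q - 1) := by
            rw [← Real.rpow_one_add' hBpos.le (by linarith)]
            ring_nf
          have hmono : B ^ (q - 1) ≤ A ^ (q - 1) :=
            Real.rpow_le_rpow hBpos.le (by linarith) (by linarith)
          have hBq1 : (0:ℝ) ≤ B ^ (q - 1) := Real.rpow_nonneg hBpos.le _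
          rw [hA1, hB1]
          nlinarith [hAB, hApos.le]
        have hBK : K ≤ B ^ (q - 1) := by
          have h1 : K ^ (q - 1)⁻¹ ≤ B := by rw [hBb0]; exact le_max_right _ _
          calc K = (K ^ (q - 1)⁻¹) ^ (q - 1) :=
                (Real.rpow_inv_rpow hKpos.le (by linarith)).symm
            _ ≤ B ^ (q - 1) :=
                Real.rpow_le_rpow (Real.rpow_nonneg hKpos.le _) h1 (by linarith)
        have hfinal : ‖x‖ * K / c = |M| + 1 := by
          rw [hK]; field_simp
        have hnum : ‖x‖ * K ≤ A ^ q - B ^ q :=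
          le_trans (mul_le_mul_of_nonneg_left hBK hxn.le) hexp
        have h2 : ‖x‖ * K / c ≤ (A ^ q - B ^ q) / c := by gcongr
        have hκterm : 0 ≤ κ * ((1 + t) * ‖x‖) - κ * (t * ‖x‖) := by nlinarith
        have hM1 : M < |M| + 1 := by
          have := le_abs_self M; linarith
        calc M < |M| + 1 := hM1
          _ = ‖x‖ * K / c := hfinal.symm
          _ ≤ (A ^ q - B ^ q) / c := h2
          _ ≤ α + κ * ((1 + t) * ‖x‖) + A ^ q / c - (α + κ * (t * ‖x‖) + B ^ q / c) := by
              have hsplit : (A ^ q - B ^ q) / c = A ^ q / c - B ^ q / c := by ring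
              rw [hsplit]; linarith
      induction b with
      | bot => exact ⟨0, EReal.bot_lt_coe _⟩
      | coe M =>
          obtain ⟨y, hy⟩ := key M
          exact ⟨y, by exact_mod_cast hy⟩
      | top => exact absurd hb (lt_irrefl _)
end
end

section
/- Let H be a real Hilbert space, let α > 0, γ > 0, ρ > 0, κ > 0, q > 1, set q* = q/(q−1) and C = {x ∈ H : ‖x‖ ≤ ρ}, and let φ(x) = α + κ‖x‖ + d_C(x)^q/(q ρ^{q*−1}) be the generalized Berhu function. Let σ ∈ ℝ and x ∈ H. If γκ ≤ ‖x‖ ≤ γκ + ρ(σ − γα), then prox_{γφ̃}(σ,x) = (σ − γα, (1 − γκ/‖x‖) x). If σ > γα and ‖x‖ < γκ, then prox_{γφ̃}(σ,x) = (σ − γα, 0). -/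
noncomputable section

lemma ball_infDist_of_le {H : Type*} [NormedAddCommGroup H] [NormedSpace ℝ H]
    {ρ : ℝ} (hρ : 0 < ρ) {v : H} (hv : ρ ≤ ‖v‖) :
    Metric.infDist v {y : H | ‖y‖ ≤ ρ} = ‖v‖ - ρ := by
  have hvpos : 0 < ‖v‖ := lt_of_lt_of_le hρ hv
  have hne : ({y : H | ‖y‖ ≤ ρ} : Set H).Nonempty := ⟨0, by simp [hρ.le]⟩
  apply le_antisymm
  · have hmem : (ρ / ‖v‖) • v ∈ {y : H | ‖y‖ ≤ ρ} := by
      simp only [Set.mem_setOf_eq, norm_smul, Real.norm_eq_abs,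
        abs_of_nonneg (div_nonneg hρ.le hvpos.le)]
      rw [div_mul_cancel₀ _ hvpos.ne']
    refine le_trans (Metric.infDist_le_dist_of_mem hmem) ?_
    rw [dist_eq_norm]
    have : v - (ρ / ‖v‖) • v = (1 - ρ / ‖v‖) • v := by
      rw [sub_smul, one_smul]
    rw [this, norm_smul, Real.norm_eq_abs,
      abs_of_nonneg (by rw [sub_nonneg, div_le_one hvpos]; exact hv)]
    field_simp
    exact le_rfl
  · by_contra hcon
    push_neg at hcon
    obtain ⟨y, hy, hdy⟩ := (Metric.infDist_lt_iff hne).1 hcon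
    rw [dist_eq_norm] at hdy
    have := norm_sub_norm_le v y
    have hyρ : ‖y‖ ≤ ρ := hy
    linarith

lemma ball_infDist_comb {H : Type*} [NormedAddCommGroup H] [NormedSpace ℝ H]
    {ρ : ℝ} (hρ : 0 < ρ) (a : H) {b : H} (hb : ‖b‖ ≤ ρ) {l m : ℝ}
    (hl : 0 ≤ l) (hm : 0 ≤ m) (hlm : l + m = 1) :
    Metric.infDist (l • a + m • b) {y : H | ‖y‖ ≤ ρ}
      ≤ l * Metric.infDist a {y : H | ‖y‖ ≤ ρ} := by
  have hne : ({y : H | ‖y‖ ≤ ρ} : Set H).Nonempty := ⟨0, by simp [hρ.le]⟩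
  rcases eq_or_lt_of_le hl with h0 | hlpos
  · have hm1 : m = 1 := by linarith
    have : l • a + m • b = b := by rw [← h0, hm1]; simp
    rw [this, Metric.infDist_zero_of_mem (show b ∈ {y : H | ‖y‖ ≤ ρ} from hb), ← h0, zero_mul]
  · refine le_of_forall_pos_le_add fun ε hε => ?_
    have hεl : 0 < ε / l := div_pos hε hlpos
    obtain ⟨y, hy, hdy⟩ := (Metric.infDist_lt_iff hne).1
      (lt_add_of_pos_right (Metric.infDist a {y : H | ‖y‖ ≤ ρ}) hεl)
    have hmem : l • y + m • b ∈ {y : H | ‖y‖ ≤ ρ} := by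
      have : ‖l • y + m • b‖ ≤ l * ‖y‖ + m * ‖b‖ :=
        le_trans (norm_add_le _ _) (by rw [norm_smul, norm_smul,
          Real.norm_eq_abs, Real.norm_eq_abs, abs_of_nonneg hl, abs_of_nonneg hm])
      have hyρ : ‖y‖ ≤ ρ := hy
      have : ‖l • y + m • b‖ ≤ ρ := by nlinarith
      exact this
    refine le_trans (Metric.infDist_le_dist_of_mem hmem) ?_
    rw [dist_eq_norm]
    have : l • a + m • b - (l • y + m • b) = l • (a - y) := by
      rw [smul_sub]; abel
    rw [this, norm_smul, Real.norm_eq_abs, abs_of_nonneg hl, ← dist_eq_norm]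
    calc l * dist a y ≤ l * (Metric.infDist a {y : H | ‖y‖ ≤ ρ} + ε / l) :=
          mul_le_mul_of_nonneg_left hdy.le hl
      _ = l * Metric.infDist a {y : H | ‖y‖ ≤ ρ} + ε := by
          field_simp

set_option maxHeartbeats 1000000 in
lemma prox_core {H : Type*} [NormedAddCommGroup H] [InnerProductSpace ℝ H]
    (α γ ρ κ q qs : ℝ) (hα : 0 < α) (hγ : 0 < γ) (hρ : 0 < ρ) (hκ : 0 < κ)
    (hq : 1 < q)
    (φ : H → ℝ)
    (hφ : ∀ v : H, φ v =
      α + κ * ‖v‖ +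
        Metric.infDist v {y : H | ‖y‖ ≤ ρ} ^ q / (q * ρ ^ (qs - 1)))
    (σ : ℝ) (x : H) (u : H)
    (ht : 0 ≤ σ - γ * α) (hu : ‖u‖ ≤ ρ * (σ - γ * α))
    (L : ℝ)
    (hL : L = γ * ((σ - γ * α) * α + κ * ‖u‖) + ((γ * α) ^ 2 + ‖x - u‖ ^ 2) / 2)
    (hkey : ∀ s : ℝ, ∀ v : H, 0 < s →
      L ≤ γ * s * α + γ * κ * ‖v‖ + ((σ - s) ^ 2 + ‖x - v‖ ^ 2) / 2)
    (hkey0 : L ≤ (σ ^ 2 + ‖x‖ ^ 2) / 2) :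
    ∀ p : ℝ × H,
      IsProx (fun w => (γ : EReal) * perspR φ w) (σ, x) p ↔ p = (σ - γ * α, u) := by
  have hq0 : (0:ℝ) < q := by linarith
  have hc : (0:ℝ) < q * ρ ^ (qs - 1) := by positivity
  set C : Set H := {y : H | ‖y‖ ≤ ρ} with hC
  set t : ℝ := σ - γ * α with htdef
  clear_value t
  have hst : σ - t = γ * α := by rw [htdef]; ring
  -- φ on the ball and lower bound
  have hφ_ball : ∀ v : H, ‖v‖ ≤ ρ → φ v = α + κ * ‖v‖ := by
    intro v hv
    rw [hφ v, Metric.infDist_zero_of_mem (show v ∈ C from hv),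
      Real.zero_rpow (ne_of_gt hq0), zero_div, add_zero]
  have hφ_lb : ∀ v : H, α + κ * ‖v‖ ≤ φ v := by
    intro v
    rw [hφ v]
    have : (0:ℝ) ≤ Metric.infDist v C ^ q / (q * ρ ^ (qs - 1)) :=
      div_nonneg (Real.rpow_nonneg Metric.infDist_nonneg q) hc.le
    linarith
  -- evaluation of ψ
  have hψpos : ∀ w : ℝ × H, 0 < w.1 →
      (γ : EReal) * perspR φ w = ((γ * (w.1 * φ (w.1⁻¹ • w.2)) : ℝ) : EReal) := by
    intro w hw
    rw [perspR, if_pos hw, ← EReal.coe_mul]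
  have hψneg : ∀ w : ℝ × H, w.1 < 0 → (γ : EReal) * perspR φ w = ⊤ := by
    intro w hw
    rw [perspR, if_neg (not_lt.2 hw.le), if_neg (ne_of_lt hw)]
    exact EReal.coe_mul_top_of_pos hγ
  have hψ00 : ∀ w : ℝ × H, w.1 = 0 → w.2 = 0 →
      (γ : EReal) * perspR φ w = ((0 : ℝ) : EReal) := by
    intro w hw1 hw2
    rw [perspR, if_neg (by rw [hw1]; exact lt_irrefl 0), if_pos hw1]
    have : (⨆ y : H, ((φ (w.2 + y) - φ y : ℝ) : EReal)) = ((0:ℝ) : EReal) := by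
      have h1 : ∀ y : H, ((φ (w.2 + y) - φ y : ℝ) : EReal) = ((0:ℝ) : EReal) := by
        intro y; rw [hw2, zero_add, sub_self]
      rw [iSup_congr h1, ciSup_const]
    rw [this]
    norm_num
  have hψ0top : ∀ w : ℝ × H, w.1 = 0 → w.2 ≠ 0 →
      (γ : EReal) * perspR φ w = ⊤ := by
    intro w hw1 hw2
    rw [perspR, if_neg (by rw [hw1]; exact lt_irrefl 0), if_pos hw1]
    have hcore : ∀ M : ℝ, ∃ z : H, M < φ (w.2 + z) - φ z := by
      intro M
      have hnu : (0:ℝ) < ‖w.2‖ := norm_pos_iff.2 hw2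
      have htend1 : Filter.Tendsto (fun s : ℝ => s * ‖w.2‖ - ρ)
          Filter.atTop Filter.atTop := by
        apply Filter.tendsto_atTop_add_const_right
        exact Filter.Tendsto.atTop_mul_const hnu Filter.tendsto_id
      have htend : Filter.Tendsto
          (fun s : ℝ => (s * ‖w.2‖ - ρ) ^ (q - 1) * (‖w.2‖ / (q * ρ ^ (qs - 1))))
          Filter.atTop Filter.atTop :=
        Filter.Tendsto.atTop_mul_const (div_pos hnu hc)
          ((tendsto_rpow_atTop (by linarith : (0:ℝ) < q - 1)).comp htend1)
      obtain ⟨s, hs1, hs2⟩ :=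
        ((htend.eventually_ge_atTop (M + 1)).and
          (Filter.eventually_ge_atTop ((ρ + 1) / ‖w.2‖))).exists
      have hb1 : ρ + 1 ≤ s * ‖w.2‖ := by
        rw [div_le_iff₀ hnu] at hs2; linarith
      have hspos : 0 < s := by nlinarith
      set b : ℝ := s * ‖w.2‖ - ρ with hbdef
      have hb : (1:ℝ) ≤ b := by rw [hbdef]; linarith
      set a : ℝ := b + ‖w.2‖ with hadef
      have hab : b ≤ a := by rw [hadef]; linarith
      have hapos : (0:ℝ) < a := by linarith
      refine ⟨s • w.2, ?_⟩
      have hnz : ‖s • w.2‖ = s * ‖w.2‖ := by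
        rw [norm_smul, Real.norm_eq_abs, abs_of_pos hspos]
      have hnwz : ‖w.2 + s • w.2‖ = a + ρ := by
        have : w.2 + s • w.2 = (1 + s) • w.2 := by
          rw [add_smul, one_smul]
        rw [this, norm_smul, Real.norm_eq_abs, abs_of_pos (by linarith : (0:ℝ) < 1 + s)]
        simp [hadef, hbdef]; ring
      have hdz : Metric.infDist (s • w.2) C = b := by
        rw [hC, ball_infDist_of_le hρ (by rw [hnz]; linarith), hnz]
      have hdwz : Metric.infDist (w.2 + s • w.2) C = a := by
        rw [hC, ball_infDist_of_le hρ (by rw [hnwz]; linarith), hnwz]; ring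
      -- lower bound on the difference of q-powers
      have hpow : b ^ (q - 1) * ‖w.2‖ ≤ a ^ q - b ^ q := by
        have ha_eq : a ^ q = a ^ (q - 1) * a := by
          rw [← Real.rpow_add_one (ne_of_gt hapos)]; ring_nf
        have hb_eq : b ^ q = b ^ (q - 1) * b := by
          rw [← Real.rpow_add_one (by positivity : b ≠ 0)]; ring_nf
        have hmono : b ^ (q - 1) ≤ a ^ (q - 1) :=
          Real.rpow_le_rpow (by linarith) hab (by linarith)
        have hbq1 : (0:ℝ) ≤ b ^ (q - 1) := Real.rpow_nonneg (by linarith) _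
        have : b ^ (q - 1) * a ≤ a ^ (q - 1) * a :=
          mul_le_mul_of_nonneg_right hmono hapos.le
        rw [ha_eq, hb_eq]
        nlinarith [hnu]
      rw [hφ (w.2 + s • w.2), hφ (s • w.2), hdz, hdwz, hnz, hnwz]
      have hdiv : b ^ (q - 1) * (‖w.2‖ / (q * ρ ^ (qs - 1)))
          ≤ (a ^ q - b ^ q) / (q * ρ ^ (qs - 1)) := by
        rw [mul_div_assoc']
        gcongr
      have h5 : κ * (a + ρ) - κ * (s * ‖w.2‖) = κ * ‖w.2‖ := by
        rw [hadef, hbdef]; ring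
      have h6 : (0:ℝ) ≤ κ * ‖w.2‖ := by positivity
      have h7 : a ^ q / (q * ρ ^ (qs - 1)) - b ^ q / (q * ρ ^ (qs - 1))
          = (a ^ q - b ^ q) / (q * ρ ^ (qs - 1)) := by rw [div_sub_div_same]
      have h8 : M + 1 ≤ (a ^ q - b ^ q) / (q * ρ ^ (qs - 1)) := le_trans hs1 hdiv
      clear_value a b
      linarith [h5, h6, h7, h8]
    have hsup : (⨆ y : H, ((φ (w.2 + y) - φ y : ℝ) : EReal)) = ⊤ := by
      refine eq_top_iff.2 ?_
      rw [le_iSup_iff]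
      intro e he
      induction e using EReal.rec with
      | bot => exact (EReal.coe_ne_bot _ (le_bot_iff.1 (he 0))).elim
      | coe r =>
        obtain ⟨z, hz⟩ := hcore r
        exact absurd (he z) (by exact_mod_cast not_le.2 hz)
      | top => exact le_refl _
    rw [hsup]
    exact EReal.coe_mul_top_of_pos hγ
  -- facts about the candidate point
  have hu0 : t = 0 → u = 0 := by
    intro h
    have : ‖u‖ ≤ 0 := by rw [h, mul_zero] at hu; exact hu
    exact norm_le_zero_iff.1 this
  have hgb : 0 < t → φ (t⁻¹ • u) = α + κ * (‖u‖ / t) := by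
    intro htpos
    have hnorm : ‖t⁻¹ • u‖ = ‖u‖ / t := by
      rw [norm_smul, Real.norm_eq_abs, abs_of_pos (inv_pos.2 htpos)]
      ring
    have hball : ‖t⁻¹ • u‖ ≤ ρ := by
      rw [hnorm, div_le_iff₀ htpos]
      linarith [hu]
    rw [hφ_ball _ hball, hnorm]
  -- value of ψ at the candidate point, as a real number
  have hgp : (γ : EReal) * perspR φ (t, u) = ((γ * (t * α + κ * ‖u‖) : ℝ) : EReal) := by
    rcases ht.lt_or_eq with htpos | ht0
    · rw [hψpos (t, u) htpos]
      congr 1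
      have heq := hgb htpos
      have ht' : t ≠ 0 := htpos.ne'
      dsimp only
      rw [heq]
      have hinner : t * (α + κ * (‖u‖ / t)) = t * α + κ * ‖u‖ := by
        field_simp
      rw [hinner]
    · have ht0' : t = 0 := ht0.symm
      rw [hψ00 (t, u) ht0' (hu0 ht0')]
      congr 1
      rw [ht0', hu0 ht0']
      simp
  have hLeq : (γ : EReal) * perspR φ (t, u) +
      (((σ - t) ^ 2 + ‖x - u‖ ^ 2) / 2 : ℝ) = ((L : ℝ) : EReal) := by
    rw [hgp, ← EReal.coe_add]
    congr 1
    rw [hL, htdef]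
    ring
  -- the candidate point is a prox point
  have hprox : IsProx (fun w => (γ : EReal) * perspR φ w) (σ, x) (t, u) := by
    intro y
    dsimp only
    rw [hLeq]
    rcases lt_trichotomy y.1 0 with hy | hy | hy
    · rw [hψneg y hy, EReal.top_add_coe]
      exact le_top
    · by_cases hy2 : y.2 = 0
      · rw [hψ00 y hy hy2, ← EReal.coe_add, EReal.coe_le_coe_iff, hy, hy2]
        simp only [sub_zero]
        linarith [hkey0]
      · rw [hψ0top y hy hy2, EReal.top_add_coe]
        exact le_top
    · rw [hψpos y hy, ← EReal.coe_add, EReal.coe_le_coe_iff]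
      have hnorm : ‖y.1⁻¹ • y.2‖ = ‖y.2‖ / y.1 := by
        rw [norm_smul, Real.norm_eq_abs, abs_of_pos (inv_pos.2 hy)]
        ring
      have hlb := hφ_lb (y.1⁻¹ • y.2)
      rw [hnorm] at hlb
      have hmul : γ * y.1 * α + γ * κ * ‖y.2‖ ≤ γ * (y.1 * φ (y.1⁻¹ • y.2)) := by
        have h1 : y.1 * (α + κ * (‖y.2‖ / y.1)) ≤ y.1 * φ (y.1⁻¹ • y.2) :=
          mul_le_mul_of_nonneg_left hlb hy.le
        have h2 : y.1 * (α + κ * (‖y.2‖ / y.1)) = y.1 * α + κ * ‖y.2‖ := by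
          field_simp
        rw [h2] at h1
        nlinarith [h1]
      linarith [hkey y.1 y.2 hy, hmul]
  -- convex-combination inequality for φ (second point in the ball)
  have hcomb : ∀ (a b : H), ‖b‖ ≤ ρ → ∀ l mm : ℝ, 0 ≤ l → 0 ≤ mm → l + mm = 1 →
      φ (l • a + mm • b) ≤ l * φ a + mm * φ b := by
    intro a b hb l mm hl hmm hlmm
    rw [hφ (l • a + mm • b), hφ a, hφ b]
    have hnorm : ‖l • a + mm • b‖ ≤ l * ‖a‖ + mm * ‖b‖ :=
      le_trans (norm_add_le _ _) (by rw [norm_smul, norm_smul, Real.norm_eq_abs,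
        Real.norm_eq_abs, abs_of_nonneg hl, abs_of_nonneg hmm])
    have hdb : Metric.infDist b C = 0 :=
      Metric.infDist_zero_of_mem (show b ∈ C from hb)
    have hdc : Metric.infDist (l • a + mm • b) C ≤ l * Metric.infDist a C :=
      ball_infDist_comb hρ a hb hl hmm hlmm
    have hdq : Metric.infDist (l • a + mm • b) C ^ q ≤ l * Metric.infDist a C ^ q := by
      calc Metric.infDist (l • a + mm • b) C ^ q
          ≤ (l * Metric.infDist a C) ^ q :=
            Real.rpow_le_rpow Metric.infDist_nonneg hdc hq0.le
        _ = l ^ q * Metric.infDist a C ^ q :=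
            Real.mul_rpow hl Metric.infDist_nonneg
        _ ≤ l * Metric.infDist a C ^ q := by
            have hda : (0:ℝ) ≤ Metric.infDist a C ^ q :=
              Real.rpow_nonneg Metric.infDist_nonneg q
            rcases eq_or_lt_of_le hl with h0 | hlpos
            · rw [← h0, Real.zero_rpow (ne_of_gt hq0)]
            · have hl1 : l ≤ 1 := by linarith
              have : l ^ q ≤ l ^ (1:ℝ) :=
                Real.rpow_le_rpow_of_exponent_ge hlpos hl1 hq.le
              rw [Real.rpow_one] at this
              exact mul_le_mul_of_nonneg_right this hda
    have hdq' : Metric.infDist (l • a + mm • b) C ^ q / (q * ρ ^ (qs - 1))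
        ≤ l * (Metric.infDist a C ^ q / (q * ρ ^ (qs - 1))) := by
      rw [mul_div_assoc']
      gcongr
    have hzero : mm * (Metric.infDist b C ^ q / (q * ρ ^ (qs - 1))) = 0 := by
      rw [hdb, Real.zero_rpow (ne_of_gt hq0), zero_div, mul_zero]
    have hκn : κ * ‖l • a + mm • b‖ ≤ κ * (l * ‖a‖ + mm * ‖b‖) :=
      mul_le_mul_of_nonneg_left hnorm hκ.le
    nlinarith [hκn, hdq', hzero, hlmm]
  -- main equivalence
  intro p
  obtain ⟨p1, p2⟩ := p
  constructor
  · intro hP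
    have h1 := hP (t, u)
    have h2 := hprox (p1, p2)
    dsimp only at h1 h2
    rw [hLeq] at h1 h2
    -- the shared final step via the midpoint
    have final : ∀ g gm : ℝ,
        (γ : EReal) * perspR φ (p1, p2) = ((g : ℝ) : EReal) →
        (γ : EReal) * perspR φ (((p1 + t) / 2 : ℝ), ((2:ℝ)⁻¹ • (p2 + u))) = ((gm : ℝ) : EReal) →
        gm ≤ (g + γ * (t * α + κ * ‖u‖)) / 2 →
        ((p1 : ℝ), p2) = ((t : ℝ), u) := by
      intro g gm hg hgm hmidle
      rw [hg, ← EReal.coe_add, EReal.coe_le_coe_iff] at h1 h2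
      have h3 := hprox (((p1 + t) / 2 : ℝ), ((2:ℝ)⁻¹ • (p2 + u)))
      dsimp only at h3
      rw [hLeq, hgm, ← EReal.coe_add, EReal.coe_le_coe_iff] at h3
      have hv : x - (2:ℝ)⁻¹ • (p2 + u) = (2:ℝ)⁻¹ • ((x - p2) + (x - u)) := by
        module
      have hB : ‖x - (2:ℝ)⁻¹ • (p2 + u)‖ ^ 2 = ‖(x - p2) + (x - u)‖ ^ 2 / 4 := by
        rw [hv, norm_smul, Real.norm_eq_abs]
        rw [abs_of_pos (by norm_num : (0:ℝ) < (2:ℝ)⁻¹)]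
        ring
      have hpar := parallelogram_law_with_norm ℝ (x - p2) (x - u)
      have hdiff : (x - p2) - (x - u) = u - p2 := by abel
      rw [hdiff, norm_sub_rev u p2] at hpar
      have hLS : L = γ * (t * α + κ * ‖u‖) + ((σ - t) ^ 2 + ‖x - u‖ ^ 2) / 2 := by
        rw [hL, hst]
      have hSm : (σ - (p1 + t) / 2) ^ 2 + ‖x - (2:ℝ)⁻¹ • (p2 + u)‖ ^ 2
          = (((σ - p1) ^ 2 + ‖x - p2‖ ^ 2) + ((σ - t) ^ 2 + ‖x - u‖ ^ 2)) / 2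
            - ((p1 - t) ^ 2 + ‖p2 - u‖ ^ 2) / 4 := by
        rw [hB]
        linear_combination hpar / 4
      have hD : (p1 - t) ^ 2 + ‖p2 - u‖ ^ 2 ≤ 0 := by
        linarith only [h1, h2, h3, hmidle, hLS, hSm]
      have hn1 : (0:ℝ) ≤ (p1 - t) ^ 2 := sq_nonneg _
      have hn2 : (0:ℝ) ≤ ‖p2 - u‖ ^ 2 := by positivity
      have hp1t : p1 = t := sub_eq_zero.1 (sq_eq_zero_iff.1 (by linarith))
      have hp2u : p2 = u :=
        sub_eq_zero.1 (norm_eq_zero.1 (sq_eq_zero_iff.1 (by linarith)))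
      rw [Prod.mk.injEq]
      exact ⟨hp1t, hp2u⟩
    rcases lt_trichotomy p1 0 with hp1 | hp1 | hp1
    · exfalso
      rw [hψneg (p1, p2) hp1, EReal.top_add_coe] at h1
      exact (EReal.coe_lt_top L).not_ge h1
    · by_cases hp2 : p2 = 0
      · subst hp2
        subst hp1
        rcases ht.lt_or_eq with htpos | ht0
        · -- t > 0, p = (0,0)
          have hm1 : (0:ℝ) < ((0:ℝ) + t) / 2 := by linarith
          have hgm := hψpos ((((0:ℝ) + t) / 2 : ℝ), ((2:ℝ)⁻¹ • ((0:H) + u))) hm1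
          dsimp only at hgm
          have harg : (((0:ℝ) + t) / 2)⁻¹ • ((2:ℝ)⁻¹ • ((0:H) + u)) = t⁻¹ • u := by
            rw [zero_add, zero_add, smul_smul]
            congr 1
            field_simp
          rw [harg] at hgm
          refine final 0 (γ * (((0:ℝ) + t) / 2 * φ (t⁻¹ • u))) (hψ00 ((0:ℝ), (0:H)) rfl rfl) hgm ?_
          rw [hgb htpos]
          have ht' : t ≠ 0 := htpos.ne'
          rw [show ((0:ℝ) + t) / 2 * (α + κ * (‖u‖ / t)) = (t * α + κ * ‖u‖) / 2 by field_simp; ring]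
          ring_nf
          linarith
        · -- t = 0 : p = (t, u) directly
          have htz : t = 0 := ht0.symm
          rw [Prod.mk.injEq]
          exact ⟨htz.symm, (hu0 htz).symm⟩
      · exfalso
        rw [hψ0top (p1, p2) hp1 hp2, EReal.top_add_coe] at h1
        exact (EReal.coe_lt_top L).not_ge h1
    · -- p1 > 0
      have hg := hψpos (p1, p2) hp1
      dsimp only at hg
      have hm1 : (0:ℝ) < (p1 + t) / 2 := by linarith
      have hgm := hψpos (((p1 + t) / 2 : ℝ), ((2:ℝ)⁻¹ • (p2 + u))) hm1
      dsimp only at hgm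
      have hS : (0:ℝ) < p1 + t := by linarith
      rcases ht.lt_or_eq with htpos | ht0
      · -- both positive : use convexity
        have hb : ‖t⁻¹ • u‖ ≤ ρ := by
          rw [norm_smul, Real.norm_eq_abs, abs_of_pos (inv_pos.2 htpos)]
          rw [show t⁻¹ * ‖u‖ = ‖u‖ / t by ring, div_le_iff₀ htpos]
          linarith [hu]
        have harg : (((p1 + t) / 2)⁻¹ • ((2:ℝ)⁻¹ • (p2 + u)) : H) = (p1 + t)⁻¹ • (p2 + u) := by
          rw [smul_smul]
          congr 1
          field_simp
        rw [harg] at hgm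
        have hsplit : ((p1 + t)⁻¹ • (p2 + u) : H)
            = (p1 / (p1 + t)) • (p1⁻¹ • p2) + (t / (p1 + t)) • (t⁻¹ • u) := by
          rw [smul_smul, smul_smul, smul_add]
          congr 1 <;> congr 1
          · field_simp
          · field_simp
        have hφm : φ ((p1 + t)⁻¹ • (p2 + u))
            ≤ (p1 / (p1 + t)) * φ (p1⁻¹ • p2) + (t / (p1 + t)) * φ (t⁻¹ • u) := by
          rw [hsplit]
          exact hcomb _ _ hb _ _ (by positivity) (by positivity) (by field_simp)
        have h9 : γ * (t * φ (t⁻¹ • u)) = γ * (t * α + κ * ‖u‖) := by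
          rw [hgb htpos]
          have ht' : t ≠ 0 := htpos.ne'
          congr 1
          field_simp
        have hmul := mul_le_mul_of_nonneg_left hφm
          (by positivity : (0:ℝ) ≤ γ * ((p1 + t) / 2))
        have hre : γ * ((p1 + t) / 2) *
            ((p1 / (p1 + t)) * φ (p1⁻¹ • p2) + (t / (p1 + t)) * φ (t⁻¹ • u))
            = (γ * (p1 * φ (p1⁻¹ • p2)) + γ * (t * φ (t⁻¹ • u))) / 2 := by
          field_simp
        refine final (γ * (p1 * φ (p1⁻¹ • p2)))
          (γ * ((p1 + t) / 2 * φ ((p1 + t)⁻¹ • (p2 + u)))) hg hgm ?_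
        nlinarith [hmul, hre, h9]
      · -- t = 0, u = 0
        have htz : t = 0 := ht0.symm
        have huz : u = 0 := hu0 htz
        have harg : (((p1 + t) / 2)⁻¹ • ((2:ℝ)⁻¹ • (p2 + u)) : H) = p1⁻¹ • p2 := by
          rw [htz, huz, add_zero, add_zero, smul_smul]
          congr 1
          have hp1' : p1 ≠ 0 := hp1.ne'
          field_simp
        rw [harg] at hgm
        refine final (γ * (p1 * φ (p1⁻¹ • p2)))
          (γ * ((p1 + t) / 2 * φ (p1⁻¹ • p2))) hg hgm ?_
        rw [htz, huz]
        simp only [norm_zero, mul_zero, add_zero, zero_mul]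
        ring_nf
        linarith
  · intro h
    rw [h]
    exact hprox

set_option maxHeartbeats 1000000 in
/-- Prox of the perspective of the generalized Berhu function: soft-thresholding
and interior regimes. -/
theorem prox_generalized_berhu_middle
    {H : Type*} [NormedAddCommGroup H] [InnerProductSpace ℝ H] [CompleteSpace H]
    (α γ ρ κ q : ℝ) (hα : 0 < α) (hγ : 0 < γ) (hρ : 0 < ρ) (hκ : 0 < κ)
    (hq : 1 < q) (qs : ℝ) (hqs : qs = q / (q - 1))
    (φ : H → ℝ)
    (hφ : ∀ v : H, φ v =
      α + κ * ‖v‖ +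
        Metric.infDist v {y : H | ‖y‖ ≤ ρ} ^ q / (q * ρ ^ (qs - 1)))
    (σ : ℝ) (x : H) :
    (γ * κ ≤ ‖x‖ → ‖x‖ ≤ γ * κ + ρ * (σ - γ * α) →
      ∀ p : ℝ × H,
        IsProx (fun w => (γ : EReal) * perspR φ w) (σ, x) p ↔
          p = (σ - γ * α, (1 - γ * κ / ‖x‖) • x)) ∧
    (γ * α < σ → ‖x‖ < γ * κ →
      ∀ p : ℝ × H,
        IsProx (fun w => (γ : EReal) * perspR φ w) (σ, x) p ↔
          p = (σ - γ * α, (0 : H))) := by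
  constructor
  · -- soft-thresholding regime
    intro h1 h2 p
    have hx0 : 0 < ‖x‖ := lt_of_lt_of_le (mul_pos hγ hκ) h1
    have ht : 0 ≤ σ - γ * α := by nlinarith
    have hcoef : 0 ≤ 1 - γ * κ / ‖x‖ := by
      rw [sub_nonneg, div_le_one hx0]; exact h1
    have hnu : ‖(1 - γ * κ / ‖x‖) • x‖ = ‖x‖ - γ * κ := by
      rw [norm_smul, Real.norm_eq_abs, abs_of_nonneg hcoef]
      field_simp
    have hu : ‖(1 - γ * κ / ‖x‖) • x‖ ≤ ρ * (σ - γ * α) := by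
      rw [hnu]; linarith
    have hxu : ‖x - (1 - γ * κ / ‖x‖) • x‖ = γ * κ := by
      have hvv : x - (1 - γ * κ / ‖x‖) • x = (γ * κ / ‖x‖) • x := by module
      rw [hvv, norm_smul, Real.norm_eq_abs,
        abs_of_nonneg (by positivity : (0:ℝ) ≤ γ * κ / ‖x‖),
        div_mul_cancel₀ _ hx0.ne']
    refine prox_core α γ ρ κ q qs hα hγ hρ hκ hq φ hφ σ x
      ((1 - γ * κ / ‖x‖) • x) ht hu _ rfl ?_ ?_ p
    · intro s v hs
      rw [hnu, hxu]
      nlinarith [sq_nonneg (σ - γ * α - s), sq_nonneg (‖x - v‖ - γ * κ),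
        mul_le_mul_of_nonneg_left (norm_sub_norm_le x v) (mul_pos hγ hκ).le]
    · rw [hnu, hxu]
      nlinarith [sq_nonneg (σ - γ * α), sq_nonneg (‖x‖ - γ * κ)]
  · -- interior regime
    intro hσ hx p
    have ht : 0 ≤ σ - γ * α := by linarith
    have hu : ‖(0 : H)‖ ≤ ρ * (σ - γ * α) := by
      rw [norm_zero]; positivity
    refine prox_core α γ ρ κ q qs hα hγ hρ hκ hq φ hφ σ x
      (0 : H) ht hu _ rfl ?_ ?_ p
    · intro s v hs
      simp only [norm_zero, sub_zero, mul_zero, add_zero]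
      have hn1 : ‖x‖ - ‖v‖ ≤ ‖x - v‖ := norm_sub_norm_le x v
      have hn2 : ‖v‖ - ‖x‖ ≤ ‖x - v‖ := by
        rw [norm_sub_rev]; exact norm_sub_norm_le v x
      nlinarith [sq_nonneg (σ - γ * α - s),
        mul_nonneg (sub_nonneg.2 hn1) (sub_nonneg.2 hn2),
        mul_nonneg (norm_nonneg v)
          (by linarith [norm_nonneg v] : (0:ℝ) ≤ 2 * (γ * κ) - 2 * ‖x‖ + ‖v‖)]
    · simp only [norm_zero, sub_zero, mul_zero, add_zero]
      nlinarith [sq_nonneg (σ - γ * α)]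
end
end
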